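/- arXiv:2007.05668 — 6 statements merged into one kernel-verified Lean document; each statement's English description precedes it below -/
import Mathlib

section
/- Equivalence of the nondegenerate and degenerate difference functionals (Lemma 4.2): Fix d ≥ 1, κ > 0, σ = 1/κ. Let a, b : {(μ,ν) ∈ ℝ² : 0 ≤ |ν| < μ} → [0,∞) be smooth, homogeneous of degree 0 and 1 respectively, even in ν, satisfying μ·a(μ,ν) = 2 b(μ,ν), supported in {|ν| ≤ μ/2}, with a = 1 on {|ν| ≤ μ/4}. For states (r_i,v_i), i=1,2, with r_i : ℝ^d → ℝ Lipschitz with constant ≤ L, Ω_i := {r_i > 0}, c·dist(x,∂Ω_i) ≤ r_i(x) ≤ C·dist(x,∂Ω_i) on Ω_i, define the degenerate functional D̃_H := ∫_{Ω₁∩Ω₂} (r₁+r₂)^{σ−1} [ a(r₁+r₂, r₁−r₂)(r₁−r₂)² + κ b(r₁+r₂, r₁−r₂)|v₁−v₂|² ] dx. Then there exist ε₀ > 0 and a constant K (depending only on d, κ, a, b, c, C, L) such that if, for some unit vector N, A := Σ_{i=1,2} ( ‖∇r_i − N‖_{L^∞(Ω_i)} + ‖v_i‖_{Ċ^{1/2}(Ω_i)}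 ) ≤ ε₀, then K^{−1} D̃_H ≤ D_H((r₁,v₁),(r₂,v₂)) ≤ K D̃_H. -/
open MeasureTheory Set Metric
open scoped NNReal ENNReal

/-- An indicator of a function continuous on an open set is measurable. -/
lemma measurable_indicator_of_continuousOn {E : Type*} [TopologicalSpace E] [MeasurableSpace E]
    [OpensMeasurableSpace E] {U : Set E} (hU : IsOpen U) {F : E → ℝ} (hF : ContinuousOn F U) :
    Measurable (U.indicator F) := by
  apply measurable_of_isOpen
  intro s hs
  by_cases h0 : (0:ℝ) ∈ s
  · have h : U.indicator F ⁻¹' s = (U ∩ F ⁻¹' s) ∪ Uᶜ := by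
      ext x; by_cases hx : x ∈ U <;>
        simp [Set.indicator_of_mem, Set.indicator_of_notMem, hx, h0]
    rw [h]
    exact ((hF.isOpen_inter_preimage hU hs).measurableSet).union hU.measurableSet.compl
  · have h : U.indicator F ⁻¹' s = (U ∩ F ⁻¹' s) := by
      ext x; by_cases hx : x ∈ U <;>
        simp [Set.indicator_of_mem, Set.indicator_of_notMem, hx, h0]
    rw [h]; exact (hF.isOpen_inter_preimage hU hs).measurableSet

/-- Hölder-1/2 continuity on a set implies continuity on the set. -/
lemma continuousOn_of_holder {E F' : Type*} [NormedAddCommGroup E] [NormedAddCommGroup F']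
    {S : Set E} {f : E → F'} {c : ℝ} (hc : 0 ≤ c)
    (h : ∀ x ∈ S, ∀ y ∈ S, ‖f x - f y‖ ≤ c * Real.sqrt ‖x - y‖) : ContinuousOn f S := by
  intro x hx
  rw [Metric.continuousWithinAt_iff]
  intro eps heps
  refine ⟨(eps / (c+1))^2, by positivity, fun y hy hdy => ?_⟩
  have h1 : dist (f y) (f x) ≤ c * Real.sqrt (dist y x) := by
    rw [dist_eq_norm, dist_eq_norm]
    exact h y hy x hx
  have h2 : Real.sqrt (dist y x) < eps/(c+1) := by
    have := Real.sqrt_lt_sqrt dist_nonneg hdy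
    rwa [Real.sqrt_sq (by positivity)] at this
  have hr : 0 < eps/(c+1) := by positivity
  have heq : (c+1) * (eps/(c+1)) = eps := by field_simp
  linarith [mul_le_mul_of_nonneg_left h2.le hc, h1, hr, heq]

/-- 1-d ray lemma: a continuous function positive at `0` whose derivative is within `ε` of `1`
wherever it is positive stays positive forward in time and grows at unit rate. -/
lemma ray_lemma {φ : ℝ → ℝ} {ε : ℝ} (hε1 : ε < 1) (hcont : Continuous φ)
    (hder : ∀ s, 0 < φ s → ∃ dd, dd ∈ Icc (1-ε) (1+ε) ∧ HasDerivAt φ dd s)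
    (h0 : 0 < φ 0) :
    ∀ t, 0 ≤ t → 0 < φ t ∧ (1-ε)*t ≤ φ t - φ 0 ∧ φ t - φ 0 ≤ (1+ε)*t := by
  have pos : ∀ t, 0 ≤ t → 0 < φ t := by
    intro t₀ ht₀
    by_contra hneg
    push_neg at hneg
    set S : Set ℝ := Icc 0 t₀ ∩ φ ⁻¹' (Iic 0) with hS
    have hSclosed : IsClosed S := isClosed_Icc.inter (isClosed_Iic.preimage hcont)
    have hSne : S.Nonempty := ⟨t₀, ⟨ht₀, le_rfl⟩, hneg⟩
    have hSbdd : BddBelow S := (bddBelow_Icc : BddBelow (Icc (0:ℝ) t₀)).mono inter_subset_left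
    set T := sInf S with hT
    have hTS : T ∈ S := hSclosed.csInf_mem hSne hSbdd
    have hT0 : 0 ≤ T := hTS.1.1
    have hTt₀ : T ≤ t₀ := hTS.1.2
    have hφT : φ T ≤ 0 := hTS.2
    have hTne : T ≠ 0 := by intro h; rw [h] at hφT; linarith
    have hTpos : 0 < T := lt_of_le_of_ne hT0 (Ne.symm hTne)
    have key : ∀ s ∈ Ico (0:ℝ) T, 0 < φ s := by
      intro s hs
      by_contra hsneg
      push_neg at hsneg
      have : s ∈ S := ⟨⟨hs.1, hs.2.le.trans hTt₀⟩, hsneg⟩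
      exact absurd (csInf_le hSbdd this) (not_le.2 hs.2)
    have mono : StrictMonoOn φ (Icc 0 T) := by
      apply strictMonoOn_of_deriv_pos (convex_Icc 0 T) hcont.continuousOn
      intro s hs
      rw [interior_Icc] at hs
      obtain ⟨dd, hdd, hD⟩ := hder s (key s ⟨hs.1.le, hs.2⟩)
      rw [hD.deriv]; linarith [hdd.1]
    have := mono ⟨le_rfl, hT0⟩ ⟨hT0, le_rfl⟩ hTpos
    linarith
  intro t ht
  refine ⟨pos t ht, ?_, ?_⟩
  · rcases eq_or_lt_of_le ht with h | h
    · simp [← h]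
    · have mono : MonotoneOn (fun s => φ s - (1-ε)*s) (Icc 0 t) := by
        apply monotoneOn_of_deriv_nonneg (convex_Icc 0 t)
        · exact (hcont.sub (continuous_const.mul continuous_id)).continuousOn
        · intro s hs
          rw [interior_Icc] at hs
          obtain ⟨dd, hdd, hD⟩ := hder s (pos s hs.1.le)
          exact ((hD.sub ((hasDerivAt_id s).const_mul (1-ε))).differentiableAt).differentiableWithinAt
        · intro s hs
          rw [interior_Icc] at hs
          obtain ⟨dd, hdd, hD⟩ := hder s (pos s hs.1.le)
          have hD2 : HasDerivAt (fun s => φ s - (1-ε)*s) (dd - (1-ε)*1) s :=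
            hD.sub ((hasDerivAt_id s).const_mul (1-ε))
          rw [hD2.deriv]; linarith [hdd.1]
      have := mono ⟨le_rfl, ht⟩ ⟨ht, le_rfl⟩ ht
      simp only [mul_zero, sub_zero] at this
      linarith
  · rcases eq_or_lt_of_le ht with h | h
    · simp [← h]
    · have mono : MonotoneOn (fun s => (1+ε)*s - φ s) (Icc 0 t) := by
        apply monotoneOn_of_deriv_nonneg (convex_Icc 0 t)
        · exact ((continuous_const.mul continuous_id).sub hcont).continuousOn
        · intro s hs
          rw [interior_Icc] at hs
          obtain ⟨dd, hdd, hD⟩ := hder s (pos s hs.1.le)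
          exact ((((hasDerivAt_id s).const_mul (1+ε)).sub hD).differentiableAt).differentiableWithinAt
        · intro s hs
          rw [interior_Icc] at hs
          obtain ⟨dd, hdd, hD⟩ := hder s (pos s hs.1.le)
          have hD2 : HasDerivAt (fun s => (1+ε)*s - φ s) ((1+ε)*1 - dd) s :=
            ((hasDerivAt_id s).const_mul (1+ε)).sub hD
          rw [hD2.deriv]; linarith [hdd.2]
      have := mono ⟨le_rfl, ht⟩ ⟨ht, le_rfl⟩ ht
      simp only [mul_zero, sub_zero] at this
      linarith

private lemma sq_est1 {p ny : ℝ} (hp : 0 < p) (h : (19/100)*p ≤ |ny|) : p^2 ≤ 28*ny^2 := by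
  nlinarith [sq_abs ny, abs_nonneg ny]

private lemma sq_est2 {p nx ny : ℝ} (h1 : |nx| ≤ p) (h2 : p^2 ≤ 28*ny^2) :
    nx^2 ≤ 28*ny^2 := by
  nlinarith [sq_abs nx, abs_nonneg nx]

private lemma sq_est3 {p t wx wy s : ℝ} (hw0 : 0 ≤ wx) (hw0' : 0 ≤ wy) (hs0 : 0 ≤ s)
    (hst : s^2 = t) (htp : t ≤ 3*p) (hwb : wx ≤ wy + 2*(1/100)*s) :
    wx^2 ≤ 2*wy^2 + (24/10000)*p := by
  nlinarith [sq_nonneg (wy - 2*(1/100)*s)]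

private lemma inner_est {κ p q nx ny wx wy : ℝ} (hκ : 0 < κ) (hp : 0 < p) (hq0 : 0 < q)
    (hpq : p ≤ q) (hnx2 : nx^2 ≤ 28*ny^2) (hny2 : p^2 ≤ 28*ny^2)
    (hwx2 : wx^2 ≤ 2*wy^2 + (24/10000)*p) :
    nx^2 + κ*p*wx^2 ≤ (32+κ)*(ny^2 + κ*(q/2)*wy^2) := by
  have e1 : κ*p*wx^2 ≤ κ*p*(2*wy^2 + (24/10000)*p) :=
    mul_le_mul_of_nonneg_left hwx2 (mul_nonneg hκ.le hp.le)
  have e2 : κ*wy^2*p ≤ κ*wy^2*q :=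
    mul_le_mul_of_nonneg_left hpq (mul_nonneg hκ.le (sq_nonneg _))
  have e3 : κ*p^2 ≤ κ*(28*ny^2) := mul_le_mul_of_nonneg_left hny2 hκ.le
  have e4 : (0:ℝ) ≤ κ*q*wy^2 := by positivity
  have e5 : (0:ℝ) ≤ κ*(κ*q*wy^2) := by positivity
  have e6 : (0:ℝ) ≤ ny^2 := sq_nonneg _
  have e7 : (0:ℝ) ≤ κ*ny^2 := by positivity
  nlinarith [e1, e2, e3, e4, e5, e6, e7, hnx2]

/-- The nonlinear distance functional
`D_H((r₁,v₁),(r₂,v₂)) = ∫_{Ω₁∩Ω₂} (r₁+r₂)^{σ-1}((r₁-r₂)² + κ(r₁+r₂)|v₁-v₂|²) dx`,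
with `σ = 1/κ`. -/
noncomputable def DH {d : ℕ} (κ : ℝ)
    (r₁ r₂ : EuclideanSpace ℝ (Fin d) → ℝ)
    (v₁ v₂ : EuclideanSpace ℝ (Fin d) → EuclideanSpace ℝ (Fin d)) : ℝ :=
  ∫ x in {x | 0 < r₁ x} ∩ {x | 0 < r₂ x},
    (r₁ x + r₂ x) ^ (1 / κ - 1) *
      ((r₁ x - r₂ x) ^ 2 + κ * (r₁ x + r₂ x) * ‖v₁ x - v₂ x‖ ^ 2)

/-- The degenerate distance functional `D̃_H`, built from the weights `a`, `b`. -/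
noncomputable def DHdeg {d : ℕ} (κ : ℝ) (a b : ℝ → ℝ → ℝ)
    (r₁ r₂ : EuclideanSpace ℝ (Fin d) → ℝ)
    (v₁ v₂ : EuclideanSpace ℝ (Fin d) → EuclideanSpace ℝ (Fin d)) : ℝ :=
  ∫ x in {x | 0 < r₁ x} ∩ {x | 0 < r₂ x},
    (r₁ x + r₂ x) ^ (1 / κ - 1) *
      (a (r₁ x + r₂ x) (r₁ x - r₂ x) * (r₁ x - r₂ x) ^ 2 +
        κ * b (r₁ x + r₂ x) (r₁ x - r₂ x) * ‖v₁ x - v₂ x‖ ^ 2)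

set_option maxHeartbeats 3000000 in
/-- **Equivalence of the nondegenerate and degenerate difference functionals**
(Lemma 4.2 of Ifrim–Tataru): given admissible weights `a`, `b` — smooth, homogeneous of
degree `0` resp. `1`, even in `ν`, nonnegative, with `μ a = 2b`, supported in
`{|ν| ≤ μ/2}` and `a = 1` on `{|ν| ≤ μ/4}` — if the control norms `A` of two uniformly
Lipschitz, nondegenerate states are sufficiently small, then `D̃_H ≈ D_H`. -/
theorem equivalence_of_difference_functionals
    {d : ℕ} (hd : 1 ≤ d) {κ : ℝ} (hκ : 0 < κ)
    (a b : ℝ → ℝ → ℝ)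
    (ha_smooth : ContDiffOn ℝ (⊤ : ℕ∞) (fun p : ℝ × ℝ => a p.1 p.2) {p | |p.2| < p.1})
    (hb_smooth : ContDiffOn ℝ (⊤ : ℕ∞) (fun p : ℝ × ℝ => b p.1 p.2) {p | |p.2| < p.1})
    (ha_hom : ∀ lam > (0:ℝ), ∀ μ ν : ℝ, |ν| < μ → a (lam * μ) (lam * ν) = a μ ν)
    (hb_hom : ∀ lam > (0:ℝ), ∀ μ ν : ℝ, |ν| < μ → b (lam * μ) (lam * ν) = lam * b μ ν)
    (ha_even : ∀ μ ν : ℝ, |ν| < μ → a μ (-ν) = a μ ν)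
    (hb_even : ∀ μ ν : ℝ, |ν| < μ → b μ (-ν) = b μ ν)
    (ha_nonneg : ∀ μ ν : ℝ, |ν| < μ → 0 ≤ a μ ν)
    (hb_nonneg : ∀ μ ν : ℝ, |ν| < μ → 0 ≤ b μ ν)
    (hab : ∀ μ ν : ℝ, |ν| < μ → μ * a μ ν = 2 * b μ ν)
    (ha_supp : ∀ μ ν : ℝ, |ν| < μ → μ / 2 < |ν| → a μ ν = 0)
    (hb_supp : ∀ μ ν : ℝ, |ν| < μ → μ / 2 < |ν| → b μ ν = 0)
    (ha_one : ∀ μ ν : ℝ, 0 < μ → |ν| ≤ μ / 4 → a μ ν = 1)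
    (c C : ℝ) (hc : 0 < c) (hcC : c ≤ C) (L : ℝ≥0) :
    ∃ ε₀ > (0:ℝ), ∃ K > (0:ℝ),
      ∀ (r : Fin 2 → EuclideanSpace ℝ (Fin d) → ℝ)
        (v : Fin 2 → EuclideanSpace ℝ (Fin d) → EuclideanSpace ℝ (Fin d))
        (N : EuclideanSpace ℝ (Fin d)),
      ‖N‖ = 1 →
      (∀ i, LipschitzWith L (r i)) →
      (∀ i, ∀ x, 0 < r i x →
          c * infDist x {y | ¬ 0 < r i y} ≤ r i x ∧
          r i x ≤ C * infDist x {y | ¬ 0 < r i y}) →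
      -- smallness of the control norm `A = Σᵢ (‖∇rᵢ - N‖_{L^∞} + ‖vᵢ‖_{Ċ^{1/2}})`
      (∀ i, ∀ x, 0 < r i x → ‖gradient (r i) x - N‖ ≤ ε₀) →
      (∀ i, ∀ x, 0 < r i x → ∀ y, 0 < r i y →
          ‖v i x - v i y‖ ≤ ε₀ * Real.sqrt ‖x - y‖) →
      K⁻¹ * DHdeg κ a b (r 0) (r 1) (v 0) (v 1) ≤ DH κ (r 0) (r 1) (v 0) (v 1) ∧
      DH κ (r 0) (r 1) (v 0) (v 1) ≤ K * DHdeg κ a b (r 0) (r 1) (v 0) (v 1) := by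
  classical
  -- bounds for the weights on the unit slice
  obtain ⟨Ca, hCa⟩ : ∃ Ca, ∀ t ∈ Icc (-(3/4):ℝ) (3/4), |a 1 t| ≤ Ca := by
    have hcont : ContinuousOn (fun t : ℝ => a 1 t) (Icc (-(3/4)) (3/4)) := by
      refine ha_smooth.continuousOn.comp
        ((continuous_const.prodMk continuous_id).continuousOn) ?_
      intro t ht
      rcases ht with ⟨h3, h4⟩
      simp only [mem_setOf_eq, id_eq]
      rw [abs_lt]; constructor <;> linarith
    obtain ⟨Ca, hCa⟩ := isCompact_Icc.exists_bound_of_continuousOn hcont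
    exact ⟨Ca, fun t ht => by simpa [Real.norm_eq_abs] using hCa t ht⟩
  obtain ⟨Cb, hCb⟩ : ∃ Cb, ∀ t ∈ Icc (-(3/4):ℝ) (3/4), |b 1 t| ≤ Cb := by
    have hcont : ContinuousOn (fun t : ℝ => b 1 t) (Icc (-(3/4)) (3/4)) := by
      refine hb_smooth.continuousOn.comp
        ((continuous_const.prodMk continuous_id).continuousOn) ?_
      intro t ht
      rcases ht with ⟨h3, h4⟩
      simp only [mem_setOf_eq, id_eq]
      rw [abs_lt]; constructor <;> linarith
    obtain ⟨Cb, hCb⟩ := isCompact_Icc.exists_bound_of_continuousOn hcont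
    exact ⟨Cb, fun t ht => by simpa [Real.norm_eq_abs] using hCb t ht⟩
  set Ma := max Ca 1 with hMa_def
  set Mb := max Cb 1 with hMb_def
  have hMa1 : (1:ℝ) ≤ Ma := le_max_right _ _
  have hMb1 : (1:ℝ) ≤ Mb := le_max_right _ _
  have hdivlt : ∀ μ ν : ℝ, 0 < μ → |ν| < μ → |ν/μ| < 1 := by
    intro μ ν hμ hν
    rw [abs_div, abs_of_pos hμ, div_lt_one hμ]; exact hν
  have haMa : ∀ μ ν : ℝ, 0 < μ → |ν| < μ → a μ ν ≤ Ma := by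
    intro μ ν hμ hν
    have h2 := hdivlt μ ν hμ hν
    have h3 := ha_hom μ hμ 1 (ν/μ) h2
    rw [mul_one] at h3
    have h4 : μ * (ν/μ) = ν := by field_simp
    rw [h4] at h3
    rw [h3]
    rcases le_or_gt |ν/μ| (3/4) with h | h
    · calc a 1 (ν/μ) ≤ |a 1 (ν/μ)| := le_abs_self _
        _ ≤ Ca := hCa (ν/μ) (abs_le.1 h)
        _ ≤ Ma := le_max_left _ _
    · rw [ha_supp 1 (ν/μ) h2 (by linarith)]
      linarith
  have hbMb : ∀ μ ν : ℝ, 0 < μ → |ν| < μ → b μ ν ≤ Mb * μ := by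
    intro μ ν hμ hν
    have h2 := hdivlt μ ν hμ hν
    have h3 := hb_hom μ hμ 1 (ν/μ) h2
    rw [mul_one] at h3
    have h4 : μ * (ν/μ) = ν := by field_simp
    rw [h4] at h3
    rw [h3]
    have hb1 : b 1 (ν/μ) ≤ Mb := by
      rcases le_or_gt |ν/μ| (3/4) with h | h
      · calc b 1 (ν/μ) ≤ |b 1 (ν/μ)| := le_abs_self _
          _ ≤ Cb := hCb (ν/μ) (abs_le.1 h)
          _ ≤ Mb := le_max_left _ _
      · rw [hb_supp 1 (ν/μ) h2 (by linarith)]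
        linarith
    calc μ * b 1 (ν/μ) ≤ μ * Mb := by
          exact mul_le_mul_of_nonneg_left hb1 hμ.le
      _ = Mb * μ := by ring
  -- the constants
  set Cσ : ℝ := (8:ℝ) ^ |1 - 1/κ| with hCσ_def
  have hCσ1 : (1:ℝ) ≤ Cσ := by
    have h := Real.rpow_le_rpow_of_exponent_le (by norm_num : (1:ℝ) ≤ 8)
      (abs_nonneg (1 - 1/κ))
    rw [hCσ_def]
    simpa using h
  set K₁ : ℝ := Cσ * (32 + κ) with hK₁_def
  have hK₁pos : 0 < K₁ := by nlinarith
  set K : ℝ := K₁ + Ma + Mb + 3 with hK_def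
  have hK : 0 < K := by nlinarith
  have hK2 : 2 + K₁ ≤ K := by rw [hK_def]; linarith
  have hKMM : Ma + Mb ≤ K := by rw [hK_def]; linarith
  clear_value Ma Mb K₁ K
  refine ⟨1/100, by norm_num, K, hK, ?_⟩
  intro r v N hN hLip hnd hgrad hv
  -- basic objects
  set U : Set (EuclideanSpace ℝ (Fin d)) := {x | 0 < r 0 x} ∩ {x | 0 < r 1 x} with hU_def
  set mu : EuclideanSpace ℝ (Fin d) → ℝ := fun x => r 0 x + r 1 x with hmu_def
  set nu : EuclideanSpace ℝ (Fin d) → ℝ := fun x => r 0 x - r 1 x with hnu_def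
  set w : EuclideanSpace ℝ (Fin d) → ℝ := fun x => ‖v 0 x - v 1 x‖ with hw_def
  have hUmem : ∀ x, x ∈ U ↔ 0 < r 0 x ∧ 0 < r 1 x := by
    intro x; rw [hU_def]; exact Iff.rfl
  have hrc : ∀ i, Continuous (r i) := fun i => (hLip i).continuous
  have hUopen : IsOpen U := by
    rw [hU_def]
    exact (isOpen_lt continuous_const (hrc 0)).inter (isOpen_lt continuous_const (hrc 1))
  have hUmeas : MeasurableSet U := hUopen.measurableSet
  have hmuc : Continuous mu := by rw [hmu_def]; exact (hrc 0).add (hrc 1)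
  have hnuc : Continuous nu := by rw [hnu_def]; exact (hrc 0).sub (hrc 1)
  have hmupos : ∀ x ∈ U, 0 < mu x := by
    intro x hx
    obtain ⟨h1, h2⟩ := (hUmem x).1 hx
    simp only [hmu_def]; linarith
  have hnulil : ∀ x ∈ U, |nu x| < mu x := by
    intro x hx
    obtain ⟨h1, h2⟩ := (hUmem x).1 hx
    simp only [hmu_def, hnu_def]
    rw [abs_lt]; constructor <;> linarith
  -- the ray lemma, instantiated
  have hray : ∀ (i : Fin 2) x, 0 < r i x → ∀ t, 0 ≤ t →
      0 < r i (x + t • N) ∧ (1-1/100)*t ≤ r i (x + t • N) - r i x ∧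
        r i (x + t • N) - r i x ≤ (1+1/100)*t := by
    intro i x hx t ht
    have key := ray_lemma (φ := fun s => r i (x + s • N)) (ε := 1/100) (by norm_num)
      ((hrc i).comp (continuous_const.add (continuous_id.smul continuous_const))) ?_ (by simpa using hx) t ht
    · simpa using key
    · intro s hs
      have hy : 0 < r i (x + s • N) := hs
      have hdiff : DifferentiableAt ℝ (r i) (x + s • N) := by
        by_contra hnd'
        have hg0 : gradient (r i) (x + s • N) = 0 := by
          unfold gradient
          rw [fderiv_zero_of_not_differentiableAt hnd']
          simp
        have h2 := hgrad i (x + s • N) hy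
        rw [hg0, zero_sub, norm_neg, hN] at h2
        norm_num at h2
      have hline : HasDerivAt (fun s' : ℝ => x + s' • N) N s := by
        simpa using ((hasDerivAt_id s).smul_const N).const_add x
      have hcomp : HasDerivAt (fun s' : ℝ => r i (x + s' • N))
          (fderiv ℝ (r i) (x + s • N) N) s :=
        hdiff.hasFDerivAt.comp_hasDerivAt s hline
      refine ⟨fderiv ℝ (r i) (x + s • N) N, ⟨?_, ?_⟩, hcomp⟩ <;>
      · have hval : fderiv ℝ (r i) (x + s • N) N
            = (inner ℝ (gradient (r i) (x + s • N)) N : ℝ) := by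
          unfold gradient
          rw [← InnerProductSpace.toDual_apply_apply, LinearIsometryEquiv.apply_symm_apply]
        have hNN : (inner ℝ N N : ℝ) = 1 := by
          rw [real_inner_self_eq_norm_sq, hN]; norm_num
        have hsub : (inner ℝ (gradient (r i) (x + s • N) - N) N : ℝ)
            = fderiv ℝ (r i) (x + s • N) N - 1 := by
          rw [inner_sub_left, hNN, hval]
        have habs : |(inner ℝ (gradient (r i) (x + s • N) - N) N : ℝ)| ≤ 1/100 := by
          calc |(inner ℝ (gradient (r i) (x + s • N) - N) N : ℝ)|
              ≤ ‖gradient (r i) (x + s • N) - N‖ * ‖N‖ := abs_real_inner_le_norm _ _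
            _ = ‖gradient (r i) (x + s • N) - N‖ := by rw [hN, mul_one]
            _ ≤ 1/100 := hgrad i _ hy
        rw [hsub, abs_le] at habs
        obtain ⟨hl, hr⟩ := habs
        linarith
  -- corollary of the ray lemma for mu, nu
  have hUray : ∀ x ∈ U, ∀ t, 0 ≤ t → (x + t • N) ∈ U ∧
      mu x + (2 - 2*(1/100))*t ≤ mu (x + t • N) ∧
      mu (x + t • N) ≤ mu x + (2 + 2*(1/100))*t ∧
      |nu (x + t • N) - nu x| ≤ 2*(1/100)*t := by
    intro x hx t ht
    obtain ⟨hx0, hx1⟩ := (hUmem x).1 hx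
    obtain ⟨h0p, h0l, h0u⟩ := hray 0 x hx0 t ht
    obtain ⟨h1p, h1l, h1u⟩ := hray 1 x hx1 t ht
    refine ⟨(hUmem _).2 ⟨h0p, h1p⟩, ?_, ?_, ?_⟩
    · simp only [hmu_def]; linarith
    · simp only [hmu_def]; linarith
    · simp only [hnu_def]; rw [abs_le]; constructor <;> linarith
  -- norm of a displacement along N
  have hnormt : ∀ (x' : EuclideanSpace ℝ (Fin d)) t, 0 ≤ t → ‖x' - (x' + t • N)‖ = t := by
    intro x' t ht
    have h1 : x' - (x' + t • N) = -(t • N) := by abel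
    rw [h1, norm_neg, norm_smul, Real.norm_eq_abs, abs_of_nonneg ht, hN, mul_one]
  -- Hölder corollary for w
  have hwray : ∀ x ∈ U, ∀ t, 0 ≤ t →
      w x ≤ w (x + t • N) + 2*(1/100)*Real.sqrt t := by
    intro x hx t ht
    have hyU : (x + t • N) ∈ U := (hUray x hx t ht).1
    obtain ⟨hx0, hx1⟩ := (hUmem x).1 hx
    obtain ⟨hy0, hy1⟩ := (hUmem _).1 hyU
    have h0 := hv 0 x hx0 (x + t • N) hy0
    have h1 := hv 1 (x + t • N) hy1 x hx1
    rw [hnormt x t ht] at h0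
    have he : ‖(x + t • N) - x‖ = t := by rw [norm_sub_rev, hnormt x t ht]
    rw [he] at h1
    have hdec : v 0 x - v 1 x = (v 0 (x + t • N) - v 1 (x + t • N))
        + ((v 0 x - v 0 (x + t • N)) + (v 1 (x + t • N) - v 1 x)) := by abel
    simp only [hw_def]
    rw [hdec]
    refine le_trans (norm_add_le _ _) ?_
    have h2 := norm_add_le (v 0 x - v 0 (x + t • N)) (v 1 (x + t • N) - v 1 x)
    linarith
  -- the integrands
  set Fdh : EuclideanSpace ℝ (Fin d) → ℝ :=
    fun x => mu x ^ (1/κ - 1) * (nu x ^ 2 + κ * mu x * w x ^ 2) with hFdh_def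
  set Fdt : EuclideanSpace ℝ (Fin d) → ℝ :=
    fun x => mu x ^ (1/κ - 1) *
      (a (mu x) (nu x) * nu x ^ 2 + κ * b (mu x) (nu x) * w x ^ 2) with hFdt_def
  have hDH_eq : DH κ (r 0) (r 1) (v 0) (v 1) = ∫ x in U, Fdh x := rfl
  have hDHdeg_eq : DHdeg κ a b (r 0) (r 1) (v 0) (v 1) = ∫ x in U, Fdt x := rfl
  clear_value U mu nu w Fdh Fdt
  -- continuity of integrands on U
  have hvcont : ∀ i : Fin 2, ContinuousOn (v i) U := by
    intro i
    apply continuousOn_of_holder (c := 1/100) (by norm_num)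
    intro x hx y hy
    obtain ⟨hx0, hx1⟩ := (hUmem x).1 hx
    obtain ⟨hy0, hy1⟩ := (hUmem y).1 hy
    fin_cases i
    · exact hv 0 x hx0 y hy0
    · exact hv 1 x hx1 y hy1
  have hwcont : ContinuousOn w U := by
    rw [hw_def]; exact ((hvcont 0).sub (hvcont 1)).norm
  have hrpowc : ContinuousOn (fun x => mu x ^ (1/κ - 1)) U := by
    apply ContinuousOn.rpow_const hmuc.continuousOn
    intro x hx; exact Or.inl (hmupos x hx).ne'
  have habc : ContinuousOn (fun x => a (mu x) (nu x)) U := by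
    refine ha_smooth.continuousOn.comp ((hmuc.prodMk hnuc).continuousOn) ?_
    intro x hx
    exact hnulil x hx
  have hbbc : ContinuousOn (fun x => b (mu x) (nu x)) U := by
    refine hb_smooth.continuousOn.comp ((hmuc.prodMk hnuc).continuousOn) ?_
    intro x hx
    exact hnulil x hx
  have hFdh_cont : ContinuousOn Fdh U := by
    rw [hFdh_def]
    exact hrpowc.mul ((hnuc.continuousOn.pow 2).add
      (((continuousOn_const.mul hmuc.continuousOn)).mul (hwcont.pow 2)))
  have hFdt_cont : ContinuousOn Fdt U := by
    rw [hFdt_def]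
    exact hrpowc.mul ((habc.mul (hnuc.continuousOn.pow 2)).add
      ((continuousOn_const.mul hbbc).mul (hwcont.pow 2)))
  -- nonnegativity
  have hFdh_nonneg : ∀ x ∈ U, 0 ≤ Fdh x := by
    intro x hx
    have h1 := hmupos x hx
    simp only [hFdh_def]
    have hpow : (0:ℝ) ≤ mu x ^ (1/κ - 1) := Real.rpow_nonneg h1.le _
    have h2 : (0:ℝ) ≤ κ * mu x * w x ^ 2 :=
      mul_nonneg (mul_nonneg hκ.le h1.le) (sq_nonneg _)
    exact mul_nonneg hpow (add_nonneg (sq_nonneg _) h2)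
  have hFdt_nonneg : ∀ x ∈ U, 0 ≤ Fdt x := by
    intro x hx
    have h1 := hmupos x hx
    have h2 := hnulil x hx
    simp only [hFdt_def]
    have hpow : (0:ℝ) ≤ mu x ^ (1/κ - 1) := Real.rpow_nonneg h1.le _
    have h3 := ha_nonneg (mu x) (nu x) h2
    have h4 := hb_nonneg (mu x) (nu x) h2
    have h5 : (0:ℝ) ≤ a (mu x) (nu x) * nu x ^ 2 := mul_nonneg h3 (sq_nonneg _)
    have h6 : (0:ℝ) ≤ κ * b (mu x) (nu x) * w x ^ 2 :=
      mul_nonneg (mul_nonneg hκ.le h4) (sq_nonneg _)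
    exact mul_nonneg hpow (by linarith)
  -- ENNReal-valued integrands with built-in indicators
  set fE : EuclideanSpace ℝ (Fin d) → ℝ≥0∞ :=
    U.indicator (fun x => ENNReal.ofReal (Fdh x)) with hfE_def
  set gE : EuclideanSpace ℝ (Fin d) → ℝ≥0∞ :=
    U.indicator (fun x => ENNReal.ofReal (Fdt x)) with hgE_def
  have hfE_meas : Measurable fE := by
    have h1 : fE = fun x => ENNReal.ofReal (U.indicator Fdh x) := by
      rw [hfE_def]
      funext x
      by_cases hx : x ∈ U <;>
        simp [Set.indicator_of_mem, Set.indicator_of_notMem, hx]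
    rw [h1]
    exact ENNReal.measurable_ofReal.comp (measurable_indicator_of_continuousOn hUopen hFdh_cont)
  have hgE_meas : Measurable gE := by
    have h1 : gE = fun x => ENNReal.ofReal (U.indicator Fdt x) := by
      rw [hgE_def]
      funext x
      by_cases hx : x ∈ U <;>
        simp [Set.indicator_of_mem, Set.indicator_of_notMem, hx]
    rw [h1]
    exact ENNReal.measurable_ofReal.comp (measurable_indicator_of_continuousOn hUopen hFdt_cont)
  set Lf := ∫⁻ x, fE x with hLf_def
  set Lg := ∫⁻ x, gE x with hLg_def
  have hLf_eq : Lf = ∫⁻ x in U, ENNReal.ofReal (Fdh x) := by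
    rw [hLf_def, hfE_def, lintegral_indicator hUmeas]
  have hLg_eq : Lg = ∫⁻ x in U, ENNReal.ofReal (Fdt x) := by
    rw [hLg_def, hgE_def, lintegral_indicator hUmeas]
  have hDH_toReal : DH κ (r 0) (r 1) (v 0) (v 1) = Lf.toReal := by
    rw [hDH_eq, hLf_eq]
    apply integral_eq_lintegral_of_nonneg_ae
    · exact (ae_restrict_iff' hUmeas).2 (ae_of_all _ fun x hx => hFdh_nonneg x hx)
    · exact ((measurable_indicator_of_continuousOn hUopen hFdh_cont).aestronglyMeasurable).congr
        (indicator_ae_eq_restrict hUmeas)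
  have hDHdeg_toReal : DHdeg κ a b (r 0) (r 1) (v 0) (v 1) = Lg.toReal := by
    rw [hDHdeg_eq, hLg_eq]
    apply integral_eq_lintegral_of_nonneg_ae
    · exact (ae_restrict_iff' hUmeas).2 (ae_of_all _ fun x hx => hFdt_nonneg x hx)
    · exact ((measurable_indicator_of_continuousOn hUopen hFdt_cont).aestronglyMeasurable).congr
        (indicator_ae_eq_restrict hUmeas)
  clear_value fE gE Lf Lg
  -- easy direction : Fdt ≤ (Ma+Mb) * Fdh pointwise on U
  have hMdir : Lg ≤ ENNReal.ofReal (Ma + Mb) * Lf := by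
    have hpt : ∀ x, gE x ≤ ENNReal.ofReal (Ma + Mb) * fE x := by
      intro x
      by_cases hx : x ∈ U
      · simp only [hgE_def, hfE_def, Set.indicator_of_mem hx]
        rw [← ENNReal.ofReal_mul (by linarith)]
        apply ENNReal.ofReal_le_ofReal
        have h1 := hmupos x hx
        have h2 := hnulil x hx
        have ha' := haMa (mu x) (nu x) h1 h2
        have hb' := hbMb (mu x) (nu x) h1 h2
        have ha0 := ha_nonneg (mu x) (nu x) h2
        have hb0 := hb_nonneg (mu x) (nu x) h2
        simp only [hFdt_def, hFdh_def]
        have hpow : (0:ℝ) ≤ mu x ^ (1/κ - 1) := Real.rpow_nonneg h1.le _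
        have hin : a (mu x) (nu x) * nu x ^ 2 + κ * b (mu x) (nu x) * w x ^ 2
            ≤ (Ma + Mb) * (nu x ^ 2 + κ * mu x * w x ^ 2) := by
          have e1 : a (mu x) (nu x) * nu x ^ 2 ≤ Ma * nu x ^ 2 :=
            mul_le_mul_of_nonneg_right ha' (sq_nonneg _)
          have e2 : κ * b (mu x) (nu x) * w x ^ 2 ≤ κ * (Mb * mu x) * w x ^ 2 :=
            mul_le_mul_of_nonneg_right
              (mul_le_mul_of_nonneg_left hb' hκ.le) (sq_nonneg _)
          have e3 : (0:ℝ) ≤ Mb * nu x ^ 2 :=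
            mul_nonneg (by linarith) (sq_nonneg _)
          have e4 : (0:ℝ) ≤ Ma * (κ * mu x * w x ^ 2) :=
            mul_nonneg (by linarith) (mul_nonneg (mul_nonneg hκ.le h1.le) (sq_nonneg _))
          nlinarith [e1, e2, e3, e4]
        calc mu x ^ (1/κ - 1) *
              (a (mu x) (nu x) * nu x ^ 2 + κ * b (mu x) (nu x) * w x ^ 2)
            ≤ mu x ^ (1/κ - 1) * ((Ma + Mb) * (nu x ^ 2 + κ * mu x * w x ^ 2)) :=
              mul_le_mul_of_nonneg_left hin hpow
          _ = (Ma + Mb) * (mu x ^ (1/κ - 1) * (nu x ^ 2 + κ * mu x * w x ^ 2)) := by ring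
      · simp only [hgE_def, Set.indicator_of_notMem hx]
        exact zero_le
    calc Lg = ∫⁻ x, gE x := hLg_def
      _ ≤ ∫⁻ x, ENNReal.ofReal (Ma + Mb) * fE x := lintegral_mono hpt
      _ = ENNReal.ofReal (Ma + Mb) * Lf := by
          rw [lintegral_const_mul' _ _ ENNReal.ofReal_ne_top, hLf_def]
  -- value of Fdt in the good region
  have hgood_val : ∀ y ∈ U, 4*|nu y| ≤ mu y →
      Fdt y = mu y ^ (1/κ - 1) * (nu y ^ 2 + κ * (mu y / 2) * w y ^ 2) := by
    intro y hy h4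
    have h1 := hmupos y hy
    have ha1 : a (mu y) (nu y) = 1 := ha_one _ _ h1 (by linarith)
    have hb1 : b (mu y) (nu y) = mu y / 2 := by
      have h5 := hab (mu y) (nu y) (hnulil y hy)
      rw [ha1, mul_one] at h5; linarith
    simp only [hFdt_def]
    rw [ha1, hb1]; ring
  -- good and bad regions
  set G : Set (EuclideanSpace ℝ (Fin d)) := U ∩ {x | 4*|nu x| ≤ mu x} with hG_def
  set B : Set (EuclideanSpace ℝ (Fin d)) := U ∩ {x | mu x < 4*|nu x|} with hB_def
  have hGmem : ∀ x, x ∈ G ↔ x ∈ U ∧ 4*|nu x| ≤ mu x := by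
    intro x; rw [hG_def]; exact Iff.rfl
  have hBmem : ∀ x, x ∈ B ↔ x ∈ U ∧ mu x < 4*|nu x| := by
    intro x; rw [hB_def]; exact Iff.rfl
  clear_value G B
  have hGmeas : MeasurableSet G := by
    rw [hG_def]
    exact hUmeas.inter
      (measurableSet_le ((continuous_const.mul hnuc.abs).measurable) hmuc.measurable)
  have hBmeas : MeasurableSet B := by
    rw [hB_def]
    exact hUmeas.inter
      (measurableSet_lt hmuc.measurable ((continuous_const.mul hnuc.abs).measurable))
  -- good-region estimate
  have hGpart : ∫⁻ x, G.indicator fE x ≤ (2:ℝ≥0∞) * Lg := by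
    have hpt : ∀ x, G.indicator fE x ≤ 2 * gE x := by
      intro x
      by_cases hx : x ∈ G
      · rw [Set.indicator_of_mem hx]
        have hxU : x ∈ U := ((hGmem x).1 hx).1
        have h4 : 4*|nu x| ≤ mu x := ((hGmem x).1 hx).2
        simp only [hfE_def, hgE_def, Set.indicator_of_mem hxU]
        rw [hgood_val x hxU h4]
        have h2 : (2:ℝ≥0∞) = ENNReal.ofReal 2 := by
          rw [ENNReal.ofReal_ofNat]
        rw [h2, ← ENNReal.ofReal_mul (by norm_num)]
        apply ENNReal.ofReal_le_ofReal
        simp only [hFdh_def]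
        have hpow : (0:ℝ) ≤ mu x ^ (1/κ - 1) := Real.rpow_nonneg (hmupos x hxU).le _
        nlinarith [mul_nonneg hpow (sq_nonneg (nu x))]
      · rw [Set.indicator_of_notMem hx]
        exact zero_le
    calc ∫⁻ x, G.indicator fE x ≤ ∫⁻ x, 2 * gE x := lintegral_mono hpt
      _ = 2 * Lg := by
          rw [lintegral_const_mul' _ _ (by norm_num : (2:ℝ≥0∞) ≠ ⊤), hLg_def]
  -- pointwise estimate on the bad region
  have hP : ∀ x ∈ B, ∀ t ∈ Icc (2*mu x) (3*mu x),
      (x + t • N) ∈ U ∧ Fdh x ≤ K₁ * Fdt (x + t • N) := by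
    intro x hx t ht
    obtain ⟨hxU, hbad⟩ := (hBmem x).1 hx
    have hp : 0 < mu x := hmupos x hxU
    obtain ⟨ht1, ht2⟩ := ht
    have ht0 : 0 ≤ t := by linarith only [ht1, hp]
    obtain ⟨hyU, hmul, hmuu, hnud⟩ := hUray x hxU t ht0
    refine ⟨hyU, ?_⟩
    have hq0 : 0 < mu (x + t • N) := hmupos _ hyU
    -- quantitative bounds
    have hql : (496/100)*mu x ≤ mu (x + t • N) := by linarith only [ht1, hmul]
    have hqu : mu (x + t • N) ≤ (706/100)*mu x := by linarith only [ht2, hmuu]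
    have hnux : |nu x| ≤ mu x := (hnulil x hxU).le
    have hnux4 : mu x / 4 < |nu x| := by linarith only [hbad]
    have hnud' : |nu (x + t • N) - nu x| ≤ (6/100)*mu x := by
      have h1 : 2*(1/100)*t ≤ (6/100)*mu x := by linarith only [ht2]
      linarith only [hnud, h1]
    have habs1 : |nu x| - |nu (x + t • N)| ≤ |nu (x + t • N) - nu x| := by
      have := abs_sub_abs_le_abs_sub (nu x) (nu (x + t • N))
      rw [abs_sub_comm] at this
      linarith only [this]
    have habs2 : |nu (x + t • N)| - |nu x| ≤ |nu (x + t • N) - nu x| :=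
      abs_sub_abs_le_abs_sub _ _
    have hnuyl : (19/100)*mu x ≤ |nu (x + t • N)| := by linarith only [hnux4, hnud', habs1]
    have hnuyu : |nu (x + t • N)| ≤ (106/100)*mu x := by linarith only [hnux, hnud', habs2]
    have hgoody : 4*|nu (x + t • N)| ≤ mu (x + t • N) := by linarith only [hnuyu, hql, hp]
    -- velocity bound
    have hwb : w x ≤ w (x + t • N) + 2*(1/100)*Real.sqrt t := hwray x hxU t ht0
    have hw0 : 0 ≤ w x := by simp only [hw_def]; exact norm_nonneg _
    have hw0' : 0 ≤ w (x + t • N) := by simp only [hw_def]; exact norm_nonneg _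
    have hst : Real.sqrt t ^ 2 = t := Real.sq_sqrt ht0
    have hs0 : 0 ≤ Real.sqrt t := Real.sqrt_nonneg t
    -- squares
    have hnuy2 : mu x ^ 2 ≤ 28 * nu (x + t • N) ^ 2 := sq_est1 hp hnuyl
    have hnux2 : nu x ^ 2 ≤ 28 * nu (x + t • N) ^ 2 := sq_est2 hnux hnuy2
    have hwx2 : w x ^ 2 ≤ 2 * w (x + t • N) ^ 2 + (24/10000) * mu x :=
      sq_est3 hw0 hw0' hs0 hst ht2 hwb
    -- rpow comparison
    have hpowq : (0:ℝ) ≤ mu (x + t • N) ^ (1/κ - 1) := Real.rpow_nonneg hq0.le _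
    have hrpow : mu x ^ (1/κ - 1) ≤ Cσ * mu (x + t • N) ^ (1/κ - 1) := by
      rcases le_total 1 (1/κ) with hσ | hσ
      · have h1 : mu x ^ (1/κ - 1) ≤ mu (x + t • N) ^ (1/κ - 1) :=
          Real.rpow_le_rpow hp.le (by linarith) (by linarith)
        have h2 : mu (x + t • N) ^ (1/κ - 1) ≤ Cσ * mu (x + t • N) ^ (1/κ - 1) :=
          le_mul_of_one_le_left hpowq hCσ1
        linarith only [h1, h2]
      · have hq8 : mu (x + t • N) ≤ 8 * mu x := by linarith only [hqu, hp]
        have h2 : (8 * mu x) ^ (1/κ - 1) = (8:ℝ) ^ (1/κ - 1) * mu x ^ (1/κ - 1) :=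
          Real.mul_rpow (by norm_num) hp.le
        have h3 : Cσ = (8:ℝ) ^ (1 - 1/κ) := by
          rw [hCσ_def]; congr 1; rw [abs_of_nonneg (by linarith only [hσ])]
        have h4 : (8:ℝ) ^ (1 - 1/κ) * (8:ℝ) ^ (1/κ - 1) = 1 := by
          rw [← Real.rpow_add (by norm_num)]; norm_num
        calc mu x ^ (1/κ - 1)
            = (8:ℝ) ^ (1 - 1/κ) * ((8:ℝ) ^ (1/κ - 1) * mu x ^ (1/κ - 1)) := by
              rw [← mul_assoc, h4, one_mul]
          _ = (8:ℝ) ^ (1 - 1/κ) * (8 * mu x) ^ (1/κ - 1) := by rw [h2]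
          _ ≤ (8:ℝ) ^ (1 - 1/κ) * mu (x + t • N) ^ (1/κ - 1) := by
              exact mul_le_mul_of_nonneg_left
                (Real.rpow_le_rpow_of_nonpos hq0 hq8 (by linarith only [hσ]))
                (Real.rpow_nonneg (by norm_num) _)
          _ = Cσ * mu (x + t • N) ^ (1/κ - 1) := by rw [h3]
    -- inner comparison
    have hinner : nu x ^ 2 + κ * mu x * w x ^ 2
        ≤ (32 + κ) * (nu (x + t • N) ^ 2 + κ * (mu (x + t • N) / 2) * w (x + t • N) ^ 2) :=
      inner_est hκ hp hq0 (by linarith only [hql, hp]) hnux2 hnuy2 hwx2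
    -- combine
    have hLHS0 : (0:ℝ) ≤ nu x ^ 2 + κ * mu x * w x ^ 2 :=
      add_nonneg (sq_nonneg _) (mul_nonneg (mul_nonneg hκ.le hp.le) (sq_nonneg _))
    have hCq0 : (0:ℝ) ≤ Cσ * mu (x + t • N) ^ (1/κ - 1) :=
      mul_nonneg (by linarith) hpowq
    calc Fdh x = mu x ^ (1/κ - 1) * (nu x ^ 2 + κ * mu x * w x ^ 2) := by
          simp only [hFdh_def]
      _ ≤ (Cσ * mu (x + t • N) ^ (1/κ - 1)) *
            ((32 + κ) * (nu (x + t • N) ^ 2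
              + κ * (mu (x + t • N) / 2) * w (x + t • N) ^ 2)) :=
          mul_le_mul hrpow hinner hLHS0 hCq0
      _ = K₁ * (mu (x + t • N) ^ (1/κ - 1) * (nu (x + t • N) ^ 2
              + κ * (mu (x + t • N) / 2) * w (x + t • N) ^ 2)) := by
          rw [hK₁_def]; ring
      _ = K₁ * Fdt (x + t • N) := by rw [hgood_val _ hyU hgoody]
  -- Tonelli/translation machinery for the bad region
  set m : EuclideanSpace ℝ (Fin d) → ℝ≥0∞ := fun x => ENNReal.ofReal (mu x) with hm_def
  set S : Set ((EuclideanSpace ℝ (Fin d)) × ℝ) :=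
    {z | z.1 ∈ B ∧ z.2 ∈ Icc (2*mu z.1) (3*mu z.1)} with hS_def
  have hSmem : ∀ z : (EuclideanSpace ℝ (Fin d)) × ℝ,
      z ∈ S ↔ z.1 ∈ B ∧ z.2 ∈ Icc (2*mu z.1) (3*mu z.1) := by
    intro z; rw [hS_def]; exact Iff.rfl
  set Hf : (EuclideanSpace ℝ (Fin d)) × ℝ → ℝ≥0∞ :=
    S.indicator (fun z => gE (z.1 + z.2 • N) * (m z.1)⁻¹) with hHf_def
  clear_value m S Hf
  have hSmeas : MeasurableSet S := by
    have h1 : S = (Prod.fst ⁻¹' B) ∩ ({z : (EuclideanSpace ℝ (Fin d)) × ℝ |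
        2*mu z.1 ≤ z.2} ∩ {z | z.2 ≤ 3*mu z.1}) := by
      ext z
      rw [hSmem z]
      simp only [mem_inter_iff, mem_preimage, mem_setOf_eq, mem_Icc]
      try tauto
    rw [h1]
    refine (hBmeas.preimage measurable_fst).inter (MeasurableSet.inter ?_ ?_)
    · exact measurableSet_le ((hmuc.comp continuous_fst).measurable.const_mul 2)
        measurable_snd
    · exact measurableSet_le measurable_snd
        ((hmuc.comp continuous_fst).measurable.const_mul 3)
  have hm_meas : Measurable m := by
    rw [hm_def]; exact ENNReal.measurable_ofReal.comp hmuc.measurable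
  have hHf_meas : Measurable Hf := by
    rw [hHf_def]
    apply Measurable.indicator _ hSmeas
    exact (hgE_meas.comp
        (continuous_fst.add (continuous_snd.smul continuous_const)).measurable).mul
      ((hm_meas.comp measurable_fst).inv)
  -- pointwise bound : fE ≤ K₁ * inner integral on B
  have hBpt : ∀ x, B.indicator fE x ≤ ENNReal.ofReal K₁ * ∫⁻ t, Hf (x, t) := by
    intro x
    by_cases hx : x ∈ B
    · rw [Set.indicator_of_mem hx]
      have hxU : x ∈ U := ((hBmem x).1 hx).1
      have hp : 0 < mu x := hmupos x hxU
      have hfix : ∀ t : ℝ, Hf (x, t) = (Icc (2*mu x) (3*mu x)).indicator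
          (fun t => gE (x + t • N) * (ENNReal.ofReal (mu x))⁻¹) t := by
        intro t
        by_cases ht : t ∈ Icc (2*mu x) (3*mu x)
        · rw [Set.indicator_of_mem ht, hHf_def,
            Set.indicator_of_mem ((hSmem (x, t)).2 ⟨hx, ht⟩), hm_def]
        · rw [Set.indicator_of_notMem ht, hHf_def, Set.indicator_of_notMem]
          intro hc
          exact ht ((hSmem (x, t)).1 hc).2
      have hne0 : ENNReal.ofReal (mu x) ≠ 0 := (ENNReal.ofReal_pos.2 hp).ne'
      have hneT : ENNReal.ofReal (mu x) ≠ ⊤ := ENNReal.ofReal_ne_top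
      have hIeq : ∫⁻ t, Hf (x, t)
          = (∫⁻ t in Icc (2*mu x) (3*mu x), gE (x + t • N)) * (ENNReal.ofReal (mu x))⁻¹ := by
        rw [lintegral_congr hfix, lintegral_indicator measurableSet_Icc]
        exact lintegral_mul_const' _ _ (by simp [hne0])
      have hlow : fE x * ENNReal.ofReal (mu x)
          ≤ ENNReal.ofReal K₁ * ∫⁻ t in Icc (2*mu x) (3*mu x), gE (x + t • N) := by
        have h1 : fE x * ENNReal.ofReal (mu x) = ∫⁻ _ in Icc (2*mu x) (3*mu x), fE x := by
          rw [setLIntegral_const, Real.volume_Icc]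
          congr 1
          ring_nf
        rw [h1, ← lintegral_const_mul' _ _ (ENNReal.ofReal_ne_top (r := K₁))]
        apply setLIntegral_mono
        · exact (hgE_meas.comp
            (continuous_const.add (continuous_id.smul continuous_const)).measurable).const_mul _
        · intro t ht
          obtain ⟨hyU, hle⟩ := hP x hx t ht
          simp only [hfE_def, hgE_def, Set.indicator_of_mem hxU, Set.indicator_of_mem hyU]
          rw [← ENNReal.ofReal_mul hK₁pos.le]
          exact ENNReal.ofReal_le_ofReal hle
      calc fE x ≤ (ENNReal.ofReal K₁ * ∫⁻ t in Icc (2*mu x) (3*mu x), gE (x + t • N))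
            / ENNReal.ofReal (mu x) :=
            (ENNReal.le_div_iff_mul_le (Or.inl hne0) (Or.inl hneT)).2 hlow
        _ = ENNReal.ofReal K₁ * ∫⁻ t, Hf (x, t) := by
            rw [hIeq, div_eq_mul_inv, mul_assoc]
    · rw [Set.indicator_of_notMem hx]
      exact zero_le
  -- the two Tonelli swaps and the translation
  have hswap1 : ∫⁻ x, ∫⁻ t, Hf (x, t) = ∫⁻ t, ∫⁻ x, Hf (x, t) :=
    lintegral_lintegral_swap hHf_meas.aemeasurable
  have htrans : ∀ t : ℝ, ∫⁻ x, Hf (x, t) = ∫⁻ y, Hf (y - t • N, t) := by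
    intro t
    rw [← lintegral_add_right_eq_self (fun y => Hf (y - t • N, t)) (t • N)]
    apply lintegral_congr
    intro x
    simp [add_sub_cancel_right]
  have hswap2 : ∫⁻ t, ∫⁻ y, Hf (y - t • N, t) = ∫⁻ y, ∫⁻ t, Hf (y - t • N, t) := by
    have hmeas2 : Measurable (Function.uncurry
        fun (t : ℝ) (y : EuclideanSpace ℝ (Fin d)) => Hf (y - t • N, t)) := by
      apply hHf_meas.comp
      exact ((continuous_snd.sub (continuous_fst.smul continuous_const)).prodMk
        continuous_fst).measurable
    exact lintegral_lintegral_swap hmeas2.aemeasurable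
  -- the inner integral in t is at most gE y
  have hTy : ∀ y, ∫⁻ t, Hf (y - t • N, t) ≤ gE y := by
    intro y
    set Ty : Set ℝ := {t | (y - t • N, t) ∈ S} with hTy_def
    have hTymem : ∀ t, t ∈ Ty ↔ (y - t • N, t) ∈ S := by
      intro t; rw [hTy_def]; exact Iff.rfl
    clear_value Ty
    have hTymeas : MeasurableSet Ty := by
      have h1 : Ty = (fun t : ℝ => (y - t • N, t)) ⁻¹' S := by
        ext t; rw [hTymem t]; exact Iff.rfl
      rw [h1]
      exact hSmeas.preimage
        ((continuous_const.sub (continuous_id.smul continuous_const)).prodMk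
          continuous_id).measurable
    have hfix : ∀ t, Hf (y - t • N, t)
        = Ty.indicator (fun t => gE y * (m (y - t • N))⁻¹) t := by
      intro t
      by_cases ht : t ∈ Ty
      · rw [Set.indicator_of_mem ht, hHf_def, Set.indicator_of_mem ((hTymem t).1 ht)]
        have h1 : (y - t • N) + t • N = y := by abel
        rw [h1]
      · rw [Set.indicator_of_notMem ht, hHf_def, Set.indicator_of_notMem]
        intro hc
        exact ht ((hTymem t).2 hc)
    rw [lintegral_congr hfix, lintegral_indicator hTymeas]
    rcases Set.eq_empty_or_nonempty Ty with hemp | ⟨t₀, ht₀⟩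
    · rw [hemp]
      simp
    · have hfact : ∀ t ∈ Ty, 0 < t ∧ (y - t • N) ∈ U
          ∧ t/3 ≤ mu (y - t • N) ∧ mu (y - t • N) ≤ t/2 := by
        intro t ht
        obtain ⟨htB, hticc⟩ := (hSmem _).1 ((hTymem t).1 ht)
        have hU' : (y - t • N) ∈ U := ((hBmem _).1 htB).1
        have hp' := hmupos _ hU'
        obtain ⟨hta, htb⟩ := hticc
        exact ⟨by linarith only [hta, hp'], hU', by linarith only [htb], by linarith only [hta]⟩
      have hpair : ∀ t ∈ Ty, ∀ t' ∈ Ty, t ≤ t' → (10/11)*t' ≤ t := by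
        intro t ht t' ht' htt
        obtain ⟨htpos, htU, ht3, ht2⟩ := hfact t ht
        obtain ⟨ht'pos, ht'U, ht'3, ht'2⟩ := hfact t' ht'
        have hxx : y - t • N = (y - t' • N) + (t' - t) • N := by
          rw [sub_smul]; abel
        obtain ⟨_, hml, _, _⟩ := hUray (y - t' • N) ht'U (t' - t) (by linarith)
        rw [← hxx] at hml
        linarith only [hml, ht2, ht'3, htt]
      have hbound : ∀ t ∈ Ty, (10/11)*t₀ ≤ t ∧ t ≤ (11/10)*t₀ := by
        intro t ht
        have htpos := (hfact t ht).1
        have ht₀pos := (hfact t₀ ht₀).1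
        rcases le_total t t₀ with h | h
        · exact ⟨hpair t ht t₀ ht₀ h, by linarith only [h, ht₀pos]⟩
        · have h5 := hpair t₀ ht₀ t ht h
          exact ⟨by linarith only [h, ht₀pos], by linarith only [h5]⟩
      have ht₀pos : 0 < t₀ := (hfact t₀ ht₀).1
      have hsub : Ty ⊆ Icc ((10/11)*t₀) ((11/10)*t₀) := fun t ht =>
        ⟨(hbound t ht).1, (hbound t ht).2⟩
      have hwle : ∀ t ∈ Ty, gE y * (m (y - t • N))⁻¹
          ≤ gE y * (ENNReal.ofReal ((10/33)*t₀))⁻¹ := by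
        intro t ht
        apply mul_le_mul_right
        rw [ENNReal.inv_le_inv, hm_def]
        apply ENNReal.ofReal_le_ofReal
        have h1 := (hfact t ht).2.2.1
        have h2 := (hbound t ht).1
        linarith only [h1, h2]
      calc ∫⁻ t in Ty, gE y * (m (y - t • N))⁻¹
          ≤ ∫⁻ _ in Ty, gE y * (ENNReal.ofReal ((10/33)*t₀))⁻¹ :=
            setLIntegral_mono measurable_const hwle
        _ ≤ ∫⁻ _ in Icc ((10/11)*t₀) ((11/10)*t₀),
              gE y * (ENNReal.ofReal ((10/33)*t₀))⁻¹ := lintegral_mono_set hsub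
        _ = gE y * (ENNReal.ofReal ((10/33)*t₀))⁻¹
              * volume (Icc ((10/11)*t₀) ((11/10)*t₀)) := setLIntegral_const _ _
        _ ≤ gE y := by
            rw [Real.volume_Icc, mul_assoc]
            have h2 : ENNReal.ofReal ((11/10)*t₀ - (10/11)*t₀)
                ≤ ENNReal.ofReal ((10/33)*t₀) :=
              ENNReal.ofReal_le_ofReal (by linarith only [ht₀pos])
            have h3 : (ENNReal.ofReal ((10/33)*t₀))⁻¹ * ENNReal.ofReal ((11/10)*t₀ - (10/11)*t₀)
                ≤ 1 := by
              calc (ENNReal.ofReal ((10/33)*t₀))⁻¹ * ENNReal.ofReal ((11/10)*t₀ - (10/11)*t₀)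
                  ≤ (ENNReal.ofReal ((10/33)*t₀))⁻¹ * ENNReal.ofReal ((10/33)*t₀) :=
                    mul_le_mul_right h2 _
                _ = 1 := ENNReal.inv_mul_cancel
                    (ENNReal.ofReal_pos.2 (by linarith only [ht₀pos])).ne' ENNReal.ofReal_ne_top
            calc gE y * ((ENNReal.ofReal ((10/33)*t₀))⁻¹
                  * ENNReal.ofReal ((11/10)*t₀ - (10/11)*t₀))
                ≤ gE y * 1 := mul_le_mul_right h3 _
              _ = gE y := mul_one _
  -- assemble the bad part
  have hBpart : ∫⁻ x, B.indicator fE x ≤ ENNReal.ofReal K₁ * Lg := by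
    calc ∫⁻ x, B.indicator fE x
        ≤ ∫⁻ x, ENNReal.ofReal K₁ * ∫⁻ t, Hf (x, t) := lintegral_mono hBpt
      _ = ENNReal.ofReal K₁ * ∫⁻ x, ∫⁻ t, Hf (x, t) :=
          lintegral_const_mul' _ _ ENNReal.ofReal_ne_top
      _ = ENNReal.ofReal K₁ * ∫⁻ t, ∫⁻ x, Hf (x, t) := by rw [hswap1]
      _ = ENNReal.ofReal K₁ * ∫⁻ t, ∫⁻ y, Hf (y - t • N, t) := by
          rw [lintegral_congr htrans]
      _ = ENNReal.ofReal K₁ * ∫⁻ y, ∫⁻ t, Hf (y - t • N, t) := by rw [hswap2]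
      _ ≤ ENNReal.ofReal K₁ * ∫⁻ y, gE y := mul_le_mul_right (lintegral_mono hTy) _
      _ = ENNReal.ofReal K₁ * Lg := by rw [hLg_def]
  -- combine the two parts
  have hLf_le : Lf ≤ ENNReal.ofReal K * Lg := by
    have hsplit : ∀ x, fE x ≤ G.indicator fE x + B.indicator fE x := by
      intro x
      by_cases hx : x ∈ U
      · rcases le_or_gt (4*|nu x|) (mu x) with h | h
        · rw [Set.indicator_of_mem ((hGmem x).2 ⟨hx, h⟩)]
          exact le_self_add
        · rw [Set.indicator_of_mem ((hBmem x).2 ⟨hx, h⟩)]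
          exact le_add_self
      · simp only [hfE_def, Set.indicator_of_notMem hx]
        exact zero_le
    calc Lf ≤ ∫⁻ x, (G.indicator fE x + B.indicator fE x) := by
          rw [hLf_def]; exact lintegral_mono hsplit
      _ = (∫⁻ x, G.indicator fE x) + ∫⁻ x, B.indicator fE x :=
          lintegral_add_left (hfE_meas.indicator hGmeas) _
      _ ≤ 2 * Lg + ENNReal.ofReal K₁ * Lg := add_le_add hGpart hBpart
      _ = ((2:ℝ≥0∞) + ENNReal.ofReal K₁) * Lg := by rw [add_mul]
      _ ≤ ENNReal.ofReal K * Lg := by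
          apply mul_le_mul_left
          have h2 : (2:ℝ≥0∞) = ENNReal.ofReal 2 := by rw [ENNReal.ofReal_ofNat]
          rw [h2, ← ENNReal.ofReal_add (by norm_num) hK₁pos.le]
          exact ENNReal.ofReal_le_ofReal hK2
  have hLg_le : Lg ≤ ENNReal.ofReal K * Lf :=
    le_trans hMdir (mul_le_mul_left (ENNReal.ofReal_le_ofReal hKMM) _)
  -- wrap up
  rw [hDH_toReal, hDHdeg_toReal]
  by_cases hLfT : Lf = ⊤
  · have hLgT : Lg = ⊤ := by
      by_contra hc
      have h1 : ENNReal.ofReal K * Lg ≠ ⊤ := ENNReal.mul_ne_top ENNReal.ofReal_ne_top hc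
      have h2 := hLf_le
      rw [hLfT] at h2
      exact h1 (top_le_iff.1 h2)
    rw [hLfT, hLgT]
    simp
  · have hLgT : Lg ≠ ⊤ :=
      ne_top_of_le_ne_top (ENNReal.mul_ne_top ENNReal.ofReal_ne_top hLfT) hLg_le
    have hr1 : Lf.toReal ≤ K * Lg.toReal := by
      have h1 := ENNReal.toReal_mono (ENNReal.mul_ne_top ENNReal.ofReal_ne_top hLgT) hLf_le
      rwa [ENNReal.toReal_mul, ENNReal.toReal_ofReal hK.le] at h1
    have hr2 : Lg.toReal ≤ K * Lf.toReal := by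
      have h1 := ENNReal.toReal_mono (ENNReal.mul_ne_top ENNReal.ofReal_ne_top hLfT) hLg_le
      rwa [ENNReal.toReal_mul, ENNReal.toReal_ofReal hK.le] at h1
    constructor
    · calc K⁻¹ * Lg.toReal ≤ K⁻¹ * (K * Lf.toReal) :=
          mul_le_mul_of_nonneg_left hr2 (inv_nonneg.2 hK.le)
        _ = Lf.toReal := by
          rw [← mul_assoc, inv_mul_cancel₀ hK.ne', one_mul]
    · exact hr1
end

section
/- Weighted L³ interpolation bound (Lemma 4.5, with the explicit constant from its proof): Let σ > 0 and r₀ ≥ 0. For every w ∈ C¹([r₀,∞)) with compact support, ∫_{r₀}^∞ x^{σ−1} |w(x)|³ dx ≤ (3/σ) · (sup_{x ≥ r₀} |w′(x)|) · ∫_{r₀}^∞ x^{σ} w(x)² dx. -/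
open MeasureTheory Set Filter Topology

private lemma habs3 (y : ℝ) : HasDerivAt (fun t : ℝ => |t| ^ 3) (3 * |y| * y) y := by
  have h := hasDerivAt_abs_rpow y (p := 3) (by norm_num)
  have h1 : (fun t : ℝ => |t| ^ (3 : ℝ)) = fun t : ℝ => |t| ^ (3 : ℕ) := by
    funext t
    rw [← Real.rpow_natCast |t| 3]
    norm_num
  rw [h1] at h
  convert h using 1
  rw [show (3 : ℝ) - 2 = 1 by norm_num, Real.rpow_one]

private lemma aux_int (σ r₀ R : ℝ) (hσ : 0 < σ) (hr₀ : 0 ≤ r₀) (hR : r₀ ≤ R)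
    (g : ℝ → ℝ) (hg : Continuous g) (hzero : ∀ x ∈ Ioi R, g x = 0) :
    IntegrableOn (fun x => x ^ (σ - 1) * g x) (Ioi r₀) := by
  rw [← Ioc_union_Ioi_eq_Ioi hR]
  apply IntegrableOn.union
  · -- on Ioc r₀ R
    obtain ⟨C, hC⟩ := (isCompact_Icc : IsCompact (Icc r₀ R)).exists_bound_of_continuousOn
      hg.continuousOn
    have hmeas : AEStronglyMeasurable (fun x => x ^ (σ - 1) * g x)
        (volume.restrict (Ioc r₀ R)) := by
      apply ContinuousOn.aestronglyMeasurable _ measurableSet_Ioc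
      intro x hx
      have hx0 : (0 : ℝ) < x := lt_of_le_of_lt hr₀ hx.1
      exact ((Real.continuousAt_rpow_const x (σ - 1) (Or.inl hx0.ne')).continuousWithinAt.mul
        hg.continuousAt.continuousWithinAt)
    have hmaj : IntegrableOn (fun x => C * x ^ (σ - 1)) (Ioc r₀ R) :=
      ((intervalIntegral.intervalIntegrable_rpow'
        (by linarith : (-1 : ℝ) < σ - 1) (a := r₀) (b := R)).1).const_mul C
    apply Integrable.mono' hmaj hmeas
    rw [ae_restrict_iff' measurableSet_Ioc]
    apply ae_of_all
    intro x hx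
    have hx0 : (0 : ℝ) < x := lt_of_le_of_lt hr₀ hx.1
    have hp : (0 : ℝ) ≤ x ^ (σ - 1) := Real.rpow_nonneg hx0.le _
    have hgC : |g x| ≤ C := hC x ⟨hx.1.le, hx.2⟩
    calc ‖x ^ (σ - 1) * g x‖ = x ^ (σ - 1) * |g x| := by
          rw [norm_mul, Real.norm_eq_abs, Real.norm_eq_abs, abs_of_nonneg hp]
      _ ≤ x ^ (σ - 1) * C := mul_le_mul_of_nonneg_left hgC hp
      _ = C * x ^ (σ - 1) := mul_comm _ _
  · -- on Ioi R
    have hEq : EqOn (fun x => x ^ (σ - 1) * g x) (fun _ => (0 : ℝ)) (Ioi R) := by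
      intro x hx
      simp [hzero x hx]
    rw [integrableOn_congr_fun hEq measurableSet_Ioi]
    exact integrableOn_zero

/-- **Weighted L³ interpolation bound** (Lemma 4.5 of Ifrim–Tataru, with the explicit
constant from its proof): for `σ > 0`, `r₀ ≥ 0` and `w ∈ C¹` with compact support,
`∫_{r₀}^∞ x^{σ-1} |w|³ dx ≤ (3/σ) · (sup_{x ≥ r₀} |w'(x)|) · ∫_{r₀}^∞ x^σ w² dx`,
where the supremum is expressed through an arbitrary bound `M`. -/
theorem weighted_L3_interpolation
    (σ r₀ : ℝ) (hσ : 0 < σ) (hr₀ : 0 ≤ r₀)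
    (w : ℝ → ℝ) (hw : ContDiff ℝ 1 w) (hsupp : HasCompactSupport w)
    (M : ℝ) (hM : ∀ x ∈ Set.Ici r₀, |deriv w x| ≤ M) :
    ∫ x in Set.Ioi r₀, x ^ (σ - 1) * |w x| ^ 3
      ≤ (3 / σ) * M * ∫ x in Set.Ioi r₀, x ^ σ * (w x) ^ 2 := by
  have hwc : Continuous w := hw.continuous
  have hw' : Continuous (deriv w) := hw.continuous_deriv le_rfl
  obtain ⟨R₀, hR₀pos, hR₀⟩ := hsupp.exists_pos_le_norm
  set R : ℝ := max R₀ r₀ with hRdef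
  have hr₀R : r₀ ≤ R := le_max_right _ _
  have hwR : ∀ x ∈ Ioi R, w x = 0 := by
    intro x hx
    have h1 : R₀ ≤ x := le_trans (le_max_left _ _) (le_of_lt hx)
    apply hR₀
    rwa [Real.norm_eq_abs, abs_of_pos (lt_of_lt_of_le hR₀pos h1)]
  -- the function to integrate by parts and its derivative
  set F : ℝ → ℝ := fun x => x ^ σ * |w x| ^ 3 with hFdef
  set F' : ℝ → ℝ := fun x =>
    σ * (x ^ (σ - 1) * |w x| ^ 3) + x ^ σ * (3 * |w x| * w x * deriv w x) with hF'def
  set B : ℝ → ℝ := fun x => x ^ σ * (3 * |w x| * w x * deriv w x) with hBdef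
  -- derivative
  have hderiv : ∀ x ∈ Ioi r₀, HasDerivAt F (F' x) x := by
    intro x hx
    have hx0 : (0 : ℝ) < x := lt_of_le_of_lt hr₀ hx
    have h1 : HasDerivAt (fun y : ℝ => y ^ σ) (σ * x ^ (σ - 1)) x :=
      Real.hasDerivAt_rpow_const (Or.inl hx0.ne')
    have h2 : HasDerivAt (fun y : ℝ => |w y| ^ 3) (3 * |w x| * w x * deriv w x) x := by
      have h3 := (habs3 (w x)).comp x ((hw.differentiable one_ne_zero) x).hasDerivAt
      simpa [Function.comp_def, mul_assoc] using h3
    have : HasDerivAt (fun y : ℝ => y ^ σ * |w y| ^ 3)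
        (σ * x ^ (σ - 1) * |w x| ^ 3 + x ^ σ * (3 * |w x| * w x * deriv w x)) x := h1.mul h2
    convert this using 1
    ring
  -- continuity within
  have hcont : ContinuousWithinAt F (Ici r₀) r₀ := by
    apply ContinuousWithinAt.mul
    · exact (Real.continuousAt_rpow_const r₀ σ (Or.inr hσ.le)).continuousWithinAt
    · exact ((hwc.abs.pow 3).continuousAt).continuousWithinAt
  -- limit at infinity
  have htend : Tendsto F atTop (𝓝 0) := by
    have hF0 : F =ᶠ[atTop] fun _ => (0 : ℝ) := by
      filter_upwards [Filter.eventually_gt_atTop R] with x hx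
      simp [hFdef, hwR x hx]
    exact Tendsto.congr' hF0.symm tendsto_const_nhds
  -- integrabilities
  have hint1 : IntegrableOn (fun x => x ^ (σ - 1) * |w x| ^ 3) (Ioi r₀) := by
    apply aux_int σ r₀ R hσ hr₀ hr₀R _ ((hwc.abs.pow 3))
    intro x hx; simp [hwR x hx]
  have hint2 : IntegrableOn (fun x => x ^ σ * (w x) ^ 2) (Ioi r₀) := by
    have h := aux_int σ r₀ R hσ hr₀ hr₀R (fun x => x * (w x) ^ 2)
      (continuous_id.mul (hwc.pow 2)) (by intro x hx; simp [hwR x hx])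
    apply h.congr_fun _ measurableSet_Ioi
    intro x hx
    have hx0 : (0 : ℝ) < x := lt_of_le_of_lt hr₀ hx
    have hpow : x ^ (σ - 1) * x = x ^ σ := by
      rw [← Real.rpow_add_one hx0.ne' (σ - 1)]; ring_nf
    show x ^ (σ - 1) * (x * (w x) ^ 2) = x ^ σ * (w x) ^ 2
    rw [← hpow]; ring
  have hintB : IntegrableOn B (Ioi r₀) := by
    have h := aux_int σ r₀ R hσ hr₀ hr₀R (fun x => x * (3 * |w x| * w x * deriv w x))
      (continuous_id.mul (((continuous_const.mul hwc.abs).mul hwc).mul hw'))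
      (by intro x hx; simp [hwR x hx])
    apply h.congr_fun _ measurableSet_Ioi
    intro x hx
    have hx0 : (0 : ℝ) < x := lt_of_le_of_lt hr₀ hx
    have hpow : x ^ (σ - 1) * x = x ^ σ := by
      rw [← Real.rpow_add_one hx0.ne' (σ - 1)]; ring_nf
    show x ^ (σ - 1) * (x * (3 * |w x| * w x * deriv w x)) = B x
    simp only [hBdef]
    rw [← hpow]; ring
  have hintA : IntegrableOn (fun x => σ * (x ^ (σ - 1) * |w x| ^ 3)) (Ioi r₀) :=
    hint1.const_mul σ
  have hintF' : IntegrableOn F' (Ioi r₀) := hintA.add hintB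
  -- integration by parts identity
  have key : ∫ x in Ioi r₀, F' x = 0 - F r₀ :=
    integral_Ioi_of_hasDerivAt_of_tendsto hcont hderiv hintF' htend
  have hsplit : ∫ x in Ioi r₀, F' x
      = σ * (∫ x in Ioi r₀, x ^ (σ - 1) * |w x| ^ 3) + ∫ x in Ioi r₀, B x := by
    rw [show F' = fun x => (fun y => σ * (y ^ (σ - 1) * |w y| ^ 3)) x + B x from rfl]
    rw [integral_add hintA hintB, integral_const_mul]
  have hFr₀ : 0 ≤ F r₀ := by
    apply mul_nonneg (Real.rpow_nonneg hr₀ σ)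
    positivity
  -- bound on -B
  have hmono : ∫ x in Ioi r₀, -B x ≤ ∫ x in Ioi r₀, 3 * M * (x ^ σ * (w x) ^ 2) := by
    apply setIntegral_mono_on hintB.neg (hint2.const_mul (3 * M)) measurableSet_Ioi
    intro x hx
    have hx0 : (0 : ℝ) < x := lt_of_le_of_lt hr₀ hx
    have hxσ : (0 : ℝ) ≤ x ^ σ := Real.rpow_nonneg hx0.le σ
    have hd : |deriv w x| ≤ M := hM x (Set.mem_Ici.mpr (le_of_lt (Set.mem_Ioi.mp hx)))
    obtain ⟨hd1, hd2⟩ := abs_le.mp hd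
    have h5 : -(w x * deriv w x) ≤ |w x| * M := by
      calc -(w x * deriv w x) ≤ |w x * deriv w x| := neg_le_abs _
        _ = |w x| * |deriv w x| := abs_mul _ _
        _ ≤ |w x| * M := mul_le_mul_of_nonneg_left hd (abs_nonneg _)
    have hkey : -(3 * |w x| * w x * deriv w x) ≤ 3 * M * (w x) ^ 2 := by
      nlinarith [h5, abs_nonneg (w x), abs_mul_abs_self (w x)]
    calc -B x = x ^ σ * -(3 * |w x| * w x * deriv w x) := by
          simp only [hBdef]; ring
      _ ≤ x ^ σ * (3 * M * (w x) ^ 2) := mul_le_mul_of_nonneg_left hkey hxσ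
      _ = 3 * M * (x ^ σ * (w x) ^ 2) := by ring
  have hintNegB : ∫ x in Ioi r₀, -B x = -∫ x in Ioi r₀, B x := integral_neg B
  have hRHS : ∫ x in Ioi r₀, 3 * M * (x ^ σ * (w x) ^ 2)
      = 3 * M * ∫ x in Ioi r₀, x ^ σ * (w x) ^ 2 := integral_const_mul _ _
  have hmain : σ * (∫ x in Ioi r₀, x ^ (σ - 1) * |w x| ^ 3)
      ≤ 3 * M * ∫ x in Ioi r₀, x ^ σ * (w x) ^ 2 := by
    have h1 : σ * (∫ x in Ioi r₀, x ^ (σ - 1) * |w x| ^ 3) + ∫ x in Ioi r₀, B x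
        = 0 - F r₀ := by rw [← hsplit]; exact key
    linarith [hmono, hintNegB, hRHS, hFr₀]
  have h2 : (∫ x in Ioi r₀, x ^ (σ - 1) * |w x| ^ 3)
      ≤ (3 * M * ∫ x in Ioi r₀, x ^ σ * (w x) ^ 2) / σ := by
    rw [le_div_iff₀ hσ]
    linarith
  calc (∫ x in Ioi r₀, x ^ (σ - 1) * |w x| ^ 3)
      ≤ (3 * M * ∫ x in Ioi r₀, x ^ σ * (w x) ^ 2) / σ := h2
    _ = (3 / σ) * M * ∫ x in Ioi r₀, x ^ σ * (w x) ^ 2 := by ring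
end

section
/- Iterated Hardy embedding (one-dimensional core of Lemma 2.3, H^{j,σ} ⊂ H^{j−σ}): For every integer m ≥ 1 and every g ∈ C^m([0,∞)) with compact support, ‖g‖_{L²(0,∞)} ≤ ( ∏_{i=1}^{m} 2/(2i−1) ) · ‖x^m g^{(m)}‖_{L²(0,∞)}, where g^{(m)} is the m-th derivative of g. -/
open MeasureTheory Set Filter

lemma hardy_step (k : ℕ) (f : ℝ → ℝ) (hd : Differentiable ℝ f)
    (hc : Continuous (deriv f)) (hs : HasCompactSupport f) :
    Real.sqrt (∫ x in Set.Ioi (0:ℝ), (x ^ k * f x) ^ 2)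
      ≤ (2 / (2 * (k:ℝ) + 1)) *
        Real.sqrt (∫ x in Set.Ioi (0:ℝ), (x ^ (k+1) * deriv f x) ^ 2) := by
  set c : ℝ := 2 * (k:ℝ) + 1 with hc_def
  have hcpos : (0:ℝ) < c := by positivity
  set u : ℝ → ℝ := fun x => x ^ k * f x with hu_def
  set v : ℝ → ℝ := fun x => x ^ (k+1) * deriv f x with hv_def
  set F : ℝ → ℝ := fun x => x ^ (2*k+1) * (f x) ^ 2 / c with hF_def
  have hu_cont : Continuous u := (continuous_pow k).mul hd.continuous
  have hv_cont : Continuous v := (continuous_pow (k+1)).mul hc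
  have hu_cs : HasCompactSupport u := hs.mul_left
  have hv_cs : HasCompactSupport v := hs.deriv.mul_left
  -- derivative of F
  have hF : ∀ x : ℝ, HasDerivAt F (u x ^ 2 + (2/c) * (u x * v x)) x := by
    intro x
    have h1 : HasDerivAt (fun x => x ^ (2*k+1) * f x ^ 2 / c)
        ((((2*k+1 : ℕ) : ℝ) * x ^ (2*k+1-1) * f x ^ 2 + x ^ (2*k+1) * (((2:ℕ):ℝ) * f x ^ (2-1) * deriv f x)) / c) x :=
      ((hasDerivAt_pow (2*k+1) x).mul ((hd x).hasDerivAt.pow 2)).div_const c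
    convert h1 using 1
    simp only [hu_def, hv_def, Nat.add_sub_cancel, pow_one, Nat.cast_add,
      Nat.cast_mul, Nat.cast_ofNat, Nat.cast_one]
    field_simp
    ring
  -- integrability
  have hu2_int : IntegrableOn (fun x => u x ^ 2) (Set.Ioi (0:ℝ)) := by
    refine (Continuous.integrable_of_hasCompactSupport (by fun_prop) ?_).integrableOn
    have : HasCompactSupport (fun x => u x * u x) := hu_cs.mul_left
    simpa [pow_two] using this
  have hv2_int : IntegrableOn (fun x => v x ^ 2) (Set.Ioi (0:ℝ)) := by
    refine (Continuous.integrable_of_hasCompactSupport (by fun_prop) ?_).integrableOn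
    have : HasCompactSupport (fun x => v x * v x) := hv_cs.mul_left
    simpa [pow_two] using this
  have huv_int : IntegrableOn (fun x => u x * v x) (Set.Ioi (0:ℝ)) :=
    (Continuous.integrable_of_hasCompactSupport (hu_cont.mul hv_cont)
      hv_cs.mul_left).integrableOn
  -- integral of F' over Ioi 0 is zero
  have hF_cs : HasCompactSupport F := by
    apply HasCompactSupport.intro hs
    intro x hx
    simp [hF_def, image_eq_zero_of_notMem_tsupport hx]
  have hTend : Tendsto F atTop (nhds 0) := by
    have := hF_cs.is_zero_at_infty
    refine this.mono_left ?_
    rw [cocompact_eq_atBot_atTop]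
    exact le_sup_right
  have hF'int : IntegrableOn (fun x => u x ^ 2 + (2/c) * (u x * v x)) (Set.Ioi (0:ℝ)) :=
    hu2_int.add (huv_int.const_mul _)
  have hzero : ∫ x in Set.Ioi (0:ℝ), (u x ^ 2 + (2/c) * (u x * v x)) = 0 := by
    have hcontF : ContinuousWithinAt F (Set.Ici 0) 0 := by
      apply Continuous.continuousWithinAt
      exact ((continuous_pow _).mul (hd.continuous.pow 2)).div_const c
    have := integral_Ioi_of_hasDerivAt_of_tendsto hcontF (fun x _ => hF x) hF'int hTend
    rw [this]
    simp [hF_def]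
  have hsplit : (∫ x in Set.Ioi (0:ℝ), u x ^ 2)
      = -((2/c) * ∫ x in Set.Ioi (0:ℝ), u x * v x) := by
    rw [integral_add hu2_int (huv_int.const_mul _), MeasureTheory.integral_const_mul] at hzero
    linarith
  -- Cauchy-Schwarz
  have hmem : ∀ (w : ℝ → ℝ), Continuous w → HasCompactSupport w →
      MemLp (fun x => |w x|) (ENNReal.ofReal 2) (volume.restrict (Set.Ioi (0:ℝ))) := by
    intro w hwc hws
    exact (hwc.abs).memLp_of_hasCompactSupport hws.abs
  have hCS : (∫ x in Set.Ioi (0:ℝ), |u x| * |v x|)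
      ≤ (∫ x in Set.Ioi (0:ℝ), |u x| ^ (2:ℝ)) ^ ((1:ℝ)/2)
        * (∫ x in Set.Ioi (0:ℝ), |v x| ^ (2:ℝ)) ^ ((1:ℝ)/2) := by
    refine integral_mul_le_Lp_mul_Lq_of_nonneg ⟨by norm_num, by norm_num, by norm_num⟩ ?_ ?_
      (hmem u hu_cont hu_cs) (hmem v hv_cont hv_cs)
    · exact Eventually.of_forall fun x => abs_nonneg _
    · exact Eventually.of_forall fun x => abs_nonneg _
  have habs2 : ∀ (w : ℝ → ℝ), (∫ x in Set.Ioi (0:ℝ), |w x| ^ (2:ℝ))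
      = ∫ x in Set.Ioi (0:ℝ), w x ^ 2 := by
    intro w
    congr 1 with x
    rw [show (2:ℝ) = ((2:ℕ):ℝ) by norm_num, Real.rpow_natCast, sq_abs]
  rw [habs2 u, habs2 v, ← Real.sqrt_eq_rpow, ← Real.sqrt_eq_rpow] at hCS
  set A := Real.sqrt (∫ x in Set.Ioi (0:ℝ), u x ^ 2) with hA_def
  set B := Real.sqrt (∫ x in Set.Ioi (0:ℝ), v x ^ 2) with hB_def
  have hInonneg : 0 ≤ ∫ x in Set.Ioi (0:ℝ), u x ^ 2 :=
    integral_nonneg fun x => sq_nonneg _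
  have hA2 : A ^ 2 = ∫ x in Set.Ioi (0:ℝ), u x ^ 2 := Real.sq_sqrt hInonneg
  -- -∫ uv ≤ ∫ |u||v|
  have hneg : -(∫ x in Set.Ioi (0:ℝ), u x * v x) ≤ ∫ x in Set.Ioi (0:ℝ), |u x| * |v x| := by
    calc -(∫ x in Set.Ioi (0:ℝ), u x * v x) ≤ |∫ x in Set.Ioi (0:ℝ), u x * v x| :=
          neg_le_abs _
      _ ≤ ∫ x in Set.Ioi (0:ℝ), |u x| * |v x| := by
          simpa [Real.norm_eq_abs, abs_mul] using
            norm_integral_le_integral_norm (μ := volume.restrict (Set.Ioi (0:ℝ)))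
              (f := fun x => u x * v x)
  have hkey : A ^ 2 ≤ (2/c) * (A * B) := by
    rw [hA2, hsplit]
    calc -((2/c) * ∫ x in Set.Ioi (0:ℝ), u x * v x)
        = (2/c) * (-(∫ x in Set.Ioi (0:ℝ), u x * v x)) := by ring
      _ ≤ (2/c) * (∫ x in Set.Ioi (0:ℝ), |u x| * |v x|) := by
          apply mul_le_mul_of_nonneg_left hneg (by positivity)
      _ ≤ (2/c) * (A * B) := by
          apply mul_le_mul_of_nonneg_left hCS (by positivity)
  have hAnn : 0 ≤ A := Real.sqrt_nonneg _
  have hBnn : 0 ≤ B := Real.sqrt_nonneg _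
  rcases eq_or_lt_of_le hAnn with h | h
  · rw [← h]; positivity
  · nlinarith [hkey, h]

lemma iteratedDeriv_hasCompactSupport {g : ℝ → ℝ} (hs : HasCompactSupport g) (n : ℕ) :
    HasCompactSupport (iteratedDeriv n g) := by
  induction n with
  | zero => simpa using hs
  | succ n ih => rw [iteratedDeriv_succ]; exact ih.deriv

lemma hardy_aux (m : ℕ) (g : ℝ → ℝ) (hg : ContDiff ℝ m g) (hsupp : HasCompactSupport g) :
    Real.sqrt (∫ x in Set.Ioi (0:ℝ), (g x) ^ 2)
      ≤ (∏ i ∈ Finset.Icc 1 m, (2:ℝ) / (2 * (i:ℝ) - 1)) *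
        Real.sqrt (∫ x in Set.Ioi (0:ℝ), (x ^ m * iteratedDeriv m g x) ^ 2) := by
  induction m with
  | zero => simp
  | succ m ih =>
    have hgm : ContDiff ℝ m g := hg.of_le (by exact_mod_cast Nat.le_succ m)
    have h1 := ih hgm
    have hd : Differentiable ℝ (iteratedDeriv m g) :=
      hg.differentiable_iteratedDeriv m (by exact_mod_cast Nat.lt_succ_self m)
    have hcont : Continuous (deriv (iteratedDeriv m g)) := by
      rw [← iteratedDeriv_succ]
      exact hg.continuous_iteratedDeriv (m+1) le_rfl
    have h2 := hardy_step m (iteratedDeriv m g) hd hcont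
      (iteratedDeriv_hasCompactSupport hsupp m)
    rw [← iteratedDeriv_succ] at h2
    have hPnn : 0 ≤ ∏ i ∈ Finset.Icc 1 m, (2:ℝ) / (2 * (i:ℝ) - 1) := by
      apply Finset.prod_nonneg
      intro i hi
      have : 1 ≤ i := (Finset.mem_Icc.mp hi).1
      have h1i : (1:ℝ) ≤ i := by exact_mod_cast this
      have : (0:ℝ) < 2 * (i:ℝ) - 1 := by linarith
      positivity
    calc Real.sqrt (∫ x in Set.Ioi (0:ℝ), (g x) ^ 2)
        ≤ (∏ i ∈ Finset.Icc 1 m, (2:ℝ) / (2 * (i:ℝ) - 1)) *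
          Real.sqrt (∫ x in Set.Ioi (0:ℝ), (x ^ m * iteratedDeriv m g x) ^ 2) := h1
      _ ≤ (∏ i ∈ Finset.Icc 1 m, (2:ℝ) / (2 * (i:ℝ) - 1)) *
          ((2 / (2 * (m:ℝ) + 1)) *
            Real.sqrt (∫ x in Set.Ioi (0:ℝ), (x ^ (m+1) * iteratedDeriv (m+1) g x) ^ 2)) :=
          mul_le_mul_of_nonneg_left h2 hPnn
      _ = (∏ i ∈ Finset.Icc 1 (m+1), (2:ℝ) / (2 * (i:ℝ) - 1)) *
          Real.sqrt (∫ x in Set.Ioi (0:ℝ), (x ^ (m+1) * iteratedDeriv (m+1) g x) ^ 2) := by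
          rw [Finset.prod_Icc_succ_top (Nat.succ_le_succ (Nat.zero_le m))]
          push_cast
          ring

/-- **Iterated Hardy embedding** (one-dimensional core of Lemma 2.3, `H^{j,σ} ⊂ H^{j-σ}`):
for every integer `m ≥ 1` and every `g ∈ Cᵐ([0,∞))` with compact support,
`‖g‖_{L²(0,∞)} ≤ (∏_{i=1}^m 2/(2i-1)) ‖x^m g^{(m)}‖_{L²(0,∞)}`. -/
theorem iterated_hardy_embedding (m : ℕ) (hm : 1 ≤ m)
    (g : ℝ → ℝ) (hg : ContDiff ℝ m g) (hsupp : HasCompactSupport g) :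
    Real.sqrt (∫ x in Set.Ioi (0:ℝ), (g x) ^ 2)
      ≤ (∏ i ∈ Finset.Icc 1 m, (2:ℝ) / (2 * (i:ℝ) - 1)) *
        Real.sqrt (∫ x in Set.Ioi (0:ℝ), (x ^ m * iteratedDeriv m g x) ^ 2) :=
  hardy_aux m g hg hsupp
end

section
/- Ungar's interpolation inequality on an interval (Proposition 2.19): Let p₀, p₂ ∈ [1,∞] and p₁ ∈ [1,∞) satisfy 2/p₁ = 1/p₀ + 1/p₂. There is a constant C, depending only on the exponents, such that for every bounded interval I ⊂ ℝ of length λ > 0 and every u ∈ C²(I), ‖u′‖_{L^{p₁}(I)}^{p₁} ≤ C ( λ^{1+p₁−p₁/p₂} ‖u″‖_{L^{p₂}(I)}^{p₁} + λ^{−(1+p₁−p₁/p₂)} ‖u‖_{L^{p₀}(I)}^{p₁} ). -/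
open MeasureTheory Set
open scoped ENNReal

private lemma ungar_add_rpow_le (x y : ℝ≥0∞) {q : ℝ} (hq : 0 ≤ q) :
    (x + y) ^ q ≤ 2 ^ q * (x ^ q + y ^ q) := by
  calc (x + y) ^ q ≤ (2 * max x y) ^ q := by
        apply ENNReal.rpow_le_rpow _ hq
        rw [two_mul]
        exact add_le_add (le_max_left x y) (le_max_right x y)
    _ = 2 ^ q * max x y ^ q := ENNReal.mul_rpow_of_nonneg _ _ hq
    _ ≤ 2 ^ q * (x ^ q + y ^ q) := by
        gcongr
        rcases max_cases x y with ⟨h, _⟩ | ⟨h, _⟩ <;> rw [h]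
        · exact le_self_add
        · exact le_add_self

/-- Pointwise bound: `|u'(x)| ≤ (16/λ²)∫|u| + ∫|u''|` on an interval of length `λ`. -/
private lemma ungar_ptwise {a lam : ℝ} (hlam : 0 < lam) {u : ℝ → ℝ}
    (hu : ContDiffOn ℝ 2 u (Set.Ioo a (a + lam)))
    (hui : IntegrableOn u (Set.Ioo a (a + lam)))
    (hvi : IntegrableOn (deriv (deriv u)) (Set.Ioo a (a + lam)))
    {x : ℝ} (hx : x ∈ Set.Ioo a (a + lam)) :
    |deriv u x| ≤ 16 / lam ^ 2 * (∫ t in Set.Ioo a (a + lam), |u t|) +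
      ∫ t in Set.Ioo a (a + lam), |deriv (deriv u) t| := by
  set s : Set ℝ := Set.Ioo a (a + lam) with hs
  have hso : IsOpen s := isOpen_Ioo
  set K : ℝ := ∫ t in s, |u t| with hK
  set M : ℝ := ∫ t in s, |deriv (deriv u) t| with hM
  have hKnn : 0 ≤ K := integral_nonneg fun t => abs_nonneg _
  have hMnn : 0 ≤ M := integral_nonneg fun t => abs_nonneg _
  have huabs : IntegrableOn (fun t => |u t|) s := hui.abs
  have hvabs : IntegrableOn (fun t => |deriv (deriv u) t|) s := hvi.abs
  -- derivative facts
  have hd : ∀ t ∈ s, HasDerivAt u (deriv u t) t := fun t ht =>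
    ((hu.differentiableOn (by norm_num)).differentiableAt (hso.mem_nhds ht)).hasDerivAt
  have hu' : ContDiffOn ℝ 1 (deriv u) s := hu.deriv_of_isOpen hso (by norm_num)
  have hd' : ∀ t ∈ s, HasDerivAt (deriv u) (deriv (deriv u) t) t := fun t ht =>
    ((hu'.differentiableOn (by norm_num)).differentiableAt (hso.mem_nhds ht)).hasDerivAt
  have hcont' : ContinuousOn (deriv u) s := hu'.continuousOn
  have hcont'' : ContinuousOn (deriv (deriv u)) s :=
    hu'.continuousOn_deriv_of_isOpen hso le_rfl
  have hoc : s.OrdConnected := ordConnected_Ioo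
  -- bound on increments of `deriv u`
  have hincr : ∀ t ∈ s, |deriv u t - deriv u x| ≤ M := by
    intro t ht
    have hsub : Set.uIcc x t ⊆ s := hoc.uIcc_subset hx ht
    have hFTC : ∫ r in x..t, deriv (deriv u) r = deriv u t - deriv u x :=
      intervalIntegral.integral_eq_sub_of_hasDerivAt
        (fun r hr => hd' r (hsub hr))
        ((hcont''.mono hsub).intervalIntegrable)
    rw [← hFTC]
    calc |∫ r in x..t, deriv (deriv u) r| ≤ ∫ r in Set.uIoc x t, |deriv (deriv u) r| := by
          simpa [Real.norm_eq_abs] using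
            (intervalIntegral.norm_integral_le_integral_norm_uIoc
              (f := fun r => deriv (deriv u) r) (a := x) (b := t) (μ := volume))
      _ ≤ M := by
          apply setIntegral_mono_set hvabs
          · exact Filter.Eventually.of_forall fun r => abs_nonneg _
          · exact HasSubset.Subset.eventuallyLE (Set.uIoc_subset_uIcc.trans hsub)
  -- choose good points y and z
  have hquarter : (0:ℝ) < lam / 4 := by linarith
  obtain ⟨y, hy, hyav⟩ : ∃ y ∈ Set.Ioo a (a + lam / 4),
      |u y| ≤ 4 / lam * K := by
    obtain ⟨y, hy, hyav⟩ := exists_le_setAverage (μ := volume)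
      (s := Set.Ioo a (a + lam / 4)) (f := fun t => |u t|)
      (by simp [Real.volume_Ioo, hquarter.le]; linarith)
      (by simp [Real.volume_Ioo])
      (huabs.mono_set (Set.Ioo_subset_Ioo le_rfl (by linarith)))
    refine ⟨y, hy, hyav.trans ?_⟩
    rw [setAverage_eq, Real.volume_real_Ioo_of_le (by linarith)]
    have h1 : (a + lam / 4 - a) = lam / 4 := by ring
    rw [h1]
    have h2 : ∫ t in Set.Ioo a (a + lam / 4), |u t| ≤ K := by
      apply setIntegral_mono_set huabs
      · exact Filter.Eventually.of_forall fun r => abs_nonneg _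
      · exact HasSubset.Subset.eventuallyLE (Set.Ioo_subset_Ioo le_rfl (by linarith))
    rw [smul_eq_mul]
    calc (lam / 4)⁻¹ * ∫ t in Set.Ioo a (a + lam / 4), |u t|
        ≤ (lam / 4)⁻¹ * K := by
          apply mul_le_mul_of_nonneg_left h2 (by positivity)
      _ = 4 / lam * K := by field_simp
  obtain ⟨z, hz, hzav⟩ : ∃ z ∈ Set.Ioo (a + 3 * lam / 4) (a + lam),
      |u z| ≤ 4 / lam * K := by
    obtain ⟨z, hz, hzav⟩ := exists_le_setAverage (μ := volume)
      (s := Set.Ioo (a + 3 * lam / 4) (a + lam)) (f := fun t => |u t|)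
      (by simp [Real.volume_Ioo]; linarith)
      (by simp [Real.volume_Ioo])
      (huabs.mono_set (Set.Ioo_subset_Ioo (by linarith) le_rfl))
    refine ⟨z, hz, hzav.trans ?_⟩
    rw [setAverage_eq, Real.volume_real_Ioo_of_le (by linarith)]
    have h1 : (a + lam - (a + 3 * lam / 4)) = lam / 4 := by ring
    rw [h1]
    have h2 : ∫ t in Set.Ioo (a + 3 * lam / 4) (a + lam), |u t| ≤ K := by
      apply setIntegral_mono_set huabs
      · exact Filter.Eventually.of_forall fun r => abs_nonneg _
      · exact HasSubset.Subset.eventuallyLE (Set.Ioo_subset_Ioo (by linarith) le_rfl)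
    rw [smul_eq_mul]
    calc (lam / 4)⁻¹ * ∫ t in Set.Ioo (a + 3 * lam / 4) (a + lam), |u t|
        ≤ (lam / 4)⁻¹ * K := by
          apply mul_le_mul_of_nonneg_left h2 (by positivity)
      _ = 4 / lam * K := by field_simp
  have hys : y ∈ s := ⟨hy.1, by have h := hy.2; linarith⟩
  have hzs : z ∈ s := ⟨by have h := hz.1; linarith, hz.2⟩
  have hyz : lam / 2 < z - y := by
    have := hy.2; have := hz.1; linarith
  have hyzpos : (0:ℝ) < z - y := by linarith
  -- FTC on [y, z]
  have hsubyz : Set.uIcc y z ⊆ s := hoc.uIcc_subset hys hzs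
  have hFTC : ∫ t in y..z, deriv u t = u z - u y :=
    intervalIntegral.integral_eq_sub_of_hasDerivAt
      (fun t ht => hd t (hsubyz ht))
      ((hcont'.mono hsubyz).intervalIntegrable)
  have hconstint : ∫ t in y..z, deriv u x = (z - y) * deriv u x := by
    simp [intervalIntegral.integral_const, smul_eq_mul]
  have hkey : |(z - y) * deriv u x - (u z - u y)| ≤ M * |z - y| := by
    have hdiff : ∫ t in y..z, (deriv u x - deriv u t) =
        (z - y) * deriv u x - (u z - u y) := by
      rw [intervalIntegral.integral_sub intervalIntegrable_const
        ((hcont'.mono hsubyz).intervalIntegrable), hconstint, hFTC]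
    rw [← hdiff]
    have := intervalIntegral.norm_integral_le_of_norm_le_const
      (a := y) (b := z) (C := M) (f := fun t => deriv u x - deriv u t)
      (fun t ht => by
        rw [Real.norm_eq_abs, abs_sub_comm]
        exact hincr t (hsubyz (Set.uIoc_subset_uIcc ht)))
    simpa [Real.norm_eq_abs, abs_sub_comm z y] using this
  -- combine
  have hbd : |deriv u x| * (z - y) ≤ 8 / lam * K + M * (z - y) := by
    have h1 : |(z - y) * deriv u x| ≤ |u z - u y| + M * |z - y| := by
      have := abs_sub_abs_le_abs_sub ((z - y) * deriv u x) (u z - u y)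
      have h2 := hkey
      calc |(z - y) * deriv u x| ≤ |u z - u y| + |(z - y) * deriv u x - (u z - u y)| := by
            have := abs_sub ((z - y) * deriv u x) (u z - u y)
            nlinarith [abs_sub_abs_le_abs_sub ((z - y) * deriv u x) (u z - u y),
              abs_nonneg ((z - y) * deriv u x - (u z - u y))]
        _ ≤ |u z - u y| + M * |z - y| := by linarith
    have h3 : |u z - u y| ≤ 8 / lam * K := by
      calc |u z - u y| ≤ |u z| + |u y| := abs_sub _ _
        _ ≤ 4 / lam * K + 4 / lam * K := add_le_add hzav hyav
        _ = 8 / lam * K := by ring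
    have h4 : |z - y| = z - y := abs_of_pos hyzpos
    calc |deriv u x| * (z - y) = |(z - y) * deriv u x| := by
          rw [abs_mul, h4]; ring
      _ ≤ |u z - u y| + M * |z - y| := h1
      _ ≤ 8 / lam * K + M * (z - y) := by rw [h4]; linarith
  -- divide by (z - y) ≥ lam/2
  rcases le_or_gt (|deriv u x|) M with hdM | hdM
  · have : 0 ≤ 16 / lam ^ 2 * K := by positivity
    linarith
  · have h5 : (|deriv u x| - M) * (lam / 2) ≤ (|deriv u x| - M) * (z - y) :=
      mul_le_mul_of_nonneg_left hyz.le (by linarith)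
    have h6 : (|deriv u x| - M) * (z - y) ≤ 8 / lam * K := by nlinarith [hbd]
    have h7 : |deriv u x| - M ≤ (8 / lam * K) / (lam / 2) :=
      (le_div_iff₀ (by positivity)).2 (h5.trans h6)
    have h8 : (8 / lam * K) / (lam / 2) = 16 / lam ^ 2 * K := by
      field_simp; ring
    linarith

/-- **Ungar's interpolation inequality on an interval** (Proposition 2.19):
for exponents with `2/p₁ = 1/p₀ + 1/p₂` (`p₁` finite), there is a constant `C` such that
for every bounded interval `I` of length `λ > 0` and every `u ∈ C²(I)`,
`‖u'‖_{L^{p₁}(I)}^{p₁} ≤ C (λ^{1+p₁-p₁/p₂} ‖u''‖_{L^{p₂}(I)}^{p₁}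
  + λ^{-(1+p₁-p₁/p₂)} ‖u‖_{L^{p₀}(I)}^{p₁})`. -/
theorem ungar_interpolation
    (p₀ p₂ p₁ : ℝ≥0∞) (hp₀ : 1 ≤ p₀) (hp₂ : 1 ≤ p₂)
    (hp₁ : 1 ≤ p₁) (hp₁top : p₁ ≠ ⊤)
    (hrel : 2 / p₁ = 1 / p₀ + 1 / p₂) :
    ∃ C : ℝ≥0∞, C ≠ ⊤ ∧ ∀ (a lam : ℝ), 0 < lam → ∀ u : ℝ → ℝ,
      ContDiffOn ℝ 2 u (Set.Ioo a (a + lam)) →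
      eLpNorm (deriv u) p₁ (volume.restrict (Set.Ioo a (a + lam))) ^ p₁.toReal
        ≤ C * (ENNReal.ofReal (lam ^ (1 + p₁.toReal - p₁.toReal / p₂.toReal)) *
                eLpNorm (deriv (deriv u)) p₂ (volume.restrict (Set.Ioo a (a + lam))) ^ p₁.toReal
              + ENNReal.ofReal (lam ^ (-(1 + p₁.toReal - p₁.toReal / p₂.toReal))) *
                eLpNorm u p₀ (volume.restrict (Set.Ioo a (a + lam))) ^ p₁.toReal) := by
  set q : ℝ := p₁.toReal with hqdef
  have hp₁0 : p₁ ≠ 0 := (lt_of_lt_of_le zero_lt_one hp₁).ne'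
  have hq : 0 < q := ENNReal.toReal_pos hp₁0 hp₁top
  refine ⟨(32 : ℝ≥0∞) ^ q, ?_, ?_⟩
  · exact (ENNReal.rpow_lt_top_of_nonneg hq.le (by norm_num)).ne
  intro a lam hlam u hu
  set s : Set ℝ := Set.Ioo a (a + lam) with hsdef
  set ν : Measure ℝ := volume.restrict s with hνdef
  have hνuniv : ν univ = ENNReal.ofReal lam := by
    rw [hνdef, Measure.restrict_apply_univ, hsdef, Real.volume_Ioo]
    congr 1; ring
  set lamE : ℝ≥0∞ := ENNReal.ofReal lam with hlamEdef
  have hlamE0 : lamE ≠ 0 := by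
    simp [hlamEdef, ENNReal.ofReal_eq_zero]; linarith
  have hlamEtop : lamE ≠ ⊤ := ENNReal.ofReal_ne_top
  set A : ℝ≥0∞ := eLpNorm u p₀ ν with hAdef
  set B : ℝ≥0∞ := eLpNorm (deriv (deriv u)) p₂ ν with hBdef
  set α : ℝ := 1 + q - q / p₂.toReal with hαdef
  have hα1 : (1 - 1 / p₂.toReal) * q + 1 = α := by
    rw [hαdef]; ring
  -- exponent relation
  have hσ : q / p₀.toReal + q / p₂.toReal = 2 := by
    have h1 : (1 : ℝ≥0∞) / p₀ ≠ ⊤ := by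
      simp [ENNReal.div_eq_top]
      intro h; exact absurd h (by rintro rfl; simp at hp₀)
    have h2 : (1 : ℝ≥0∞) / p₂ ≠ ⊤ := by
      simp [ENNReal.div_eq_top]
      intro h; exact absurd h (by rintro rfl; simp at hp₂)
    have h := congrArg ENNReal.toReal hrel
    rw [ENNReal.toReal_add h1 h2, ENNReal.toReal_div, ENNReal.toReal_div,
      ENNReal.toReal_div] at h
    simp only [ENNReal.toReal_one, ENNReal.toReal_ofNat] at h
    have h3 : q * (2 / q) = q * (1 / p₀.toReal + 1 / p₂.toReal) := by rw [h]
    rw [mul_div_cancel₀ _ hq.ne'] at h3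
    rw [mul_add, mul_one_div, mul_one_div] at h3
    linarith
  have hα2 : (-2 + (1 - 1 / p₀.toReal)) * q + 1 = -α := by
    have : q * (1 / p₀.toReal) + q * (1 / p₂.toReal) = 2 := by
      rw [mul_one_div, mul_one_div]; exact hσ
    rw [hαdef]
    have h4 : q / p₂.toReal = q * (1 / p₂.toReal) := by rw [mul_one_div]
    rw [h4]; nlinarith [this]
  by_cases hAB : A = ⊤ ∨ B = ⊤
  · -- right-hand side is infinite
    have hRHS : ENNReal.ofReal (lam ^ α) * B ^ q
        + ENNReal.ofReal (lam ^ (-α)) * A ^ q = ⊤ := by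
      rcases hAB with hA | hB
      · rw [hA, ENNReal.top_rpow_of_pos hq, ENNReal.mul_top]
        · exact ENNReal.add_eq_top.2 (Or.inr rfl)
        · simp [ENNReal.ofReal_eq_zero, not_le]
          exact Real.rpow_pos_of_pos hlam _
      · rw [hB, ENNReal.top_rpow_of_pos hq, ENNReal.mul_top]
        · exact ENNReal.add_eq_top.2 (Or.inl rfl)
        · simp [ENNReal.ofReal_eq_zero, not_le]
          exact Real.rpow_pos_of_pos hlam _
    have hC0 : (32 : ℝ≥0∞) ^ q ≠ 0 := by
      simp [ENNReal.rpow_eq_zero_iff]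
    rw [hRHS, ENNReal.mul_top hC0]
    exact le_top
  push_neg at hAB
  obtain ⟨hA, hB⟩ := hAB
  -- measurability and integrability
  haveI : IsFiniteMeasure ν := ⟨by rw [hνuniv]; exact ENNReal.ofReal_lt_top⟩
  have hmes : MeasurableSet s := measurableSet_Ioo
  have hso : IsOpen s := isOpen_Ioo
  have hu' : ContDiffOn ℝ 1 (deriv u) s := hu.deriv_of_isOpen hso (by norm_num)
  have hcont'' : ContinuousOn (deriv (deriv u)) s :=
    hu'.continuousOn_deriv_of_isOpen hso le_rfl
  have hmu : AEStronglyMeasurable u ν := hu.continuousOn.aestronglyMeasurable hmes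
  have hmv : AEStronglyMeasurable (deriv (deriv u)) ν := hcont''.aestronglyMeasurable hmes
  have hui : IntegrableOn u s := by
    rw [IntegrableOn, ← memLp_one_iff_integrable]
    exact MemLp.mono_exponent ⟨hmu, hA.lt_top⟩ hp₀
  have hvi : IntegrableOn (deriv (deriv u)) s := by
    rw [IntegrableOn, ← memLp_one_iff_integrable]
    exact MemLp.mono_exponent ⟨hmv, hB.lt_top⟩ hp₂
  set K : ℝ := ∫ t in s, |u t| with hKdef
  set M : ℝ := ∫ t in s, |deriv (deriv u) t| with hMdef
  have hKnn : 0 ≤ K := integral_nonneg fun t => abs_nonneg _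
  have hMnn : 0 ≤ M := integral_nonneg fun t => abs_nonneg _
  -- Hölder bounds
  have hKbd : ENNReal.ofReal K ≤ lamE ^ (1 - 1 / p₀.toReal) * A := by
    have h1 : ENNReal.ofReal K = eLpNorm u 1 ν := by
      rw [eLpNorm_one_eq_lintegral_enorm, hKdef]
      have := ofReal_integral_norm_eq_lintegral_enorm (μ := ν) hui
      simpa [Real.norm_eq_abs] using this
    rw [h1]
    have h2 := eLpNorm_le_eLpNorm_mul_rpow_measure_univ (μ := ν) hp₀ hmu
    rw [hνuniv] at h2
    simp only [ENNReal.toReal_one, one_div_one] at h2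
    exact h2.trans_eq (mul_comm _ _)
  have hMbd : ENNReal.ofReal M ≤ lamE ^ (1 - 1 / p₂.toReal) * B := by
    have h1 : ENNReal.ofReal M = eLpNorm (deriv (deriv u)) 1 ν := by
      rw [eLpNorm_one_eq_lintegral_enorm, hMdef]
      have := ofReal_integral_norm_eq_lintegral_enorm (μ := ν) hvi
      simpa [Real.norm_eq_abs] using this
    rw [h1]
    have h2 := eLpNorm_le_eLpNorm_mul_rpow_measure_univ (μ := ν) hp₂ hmv
    rw [hνuniv] at h2
    simp only [ENNReal.toReal_one, one_div_one] at h2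
    exact h2.trans_eq (mul_comm _ _)
  -- pointwise bound → eLpNorm bound
  have h3 : eLpNorm (deriv u) p₁ ν ≤ lamE ^ q⁻¹ * ENNReal.ofReal (16 / lam ^ 2 * K + M) := by
    have hae : ∀ᵐ t ∂ν, ‖deriv u t‖ ≤ 16 / lam ^ 2 * K + M := by
      rw [hνdef, ae_restrict_iff' hmes]
      exact Filter.Eventually.of_forall fun t ht => by
        rw [Real.norm_eq_abs]
        exact ungar_ptwise hlam hu hui hvi ht
    have := eLpNorm_le_of_ae_bound (p := p₁) hae
    rwa [hνuniv] at this
  -- main computation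
  have hcoef : ENNReal.ofReal (16 / lam ^ 2 * K + M) ≤
      16 * lamE ^ (-2 : ℝ) * ENNReal.ofReal K + ENNReal.ofReal M := by
    rw [ENNReal.ofReal_add (by positivity) hMnn]
    apply add_le_add_left
    have e1 : ENNReal.ofReal (16 / lam ^ 2 * K)
        = ENNReal.ofReal (16 / lam ^ 2) * ENNReal.ofReal K :=
      ENNReal.ofReal_mul (by positivity)
    have e2 : ENNReal.ofReal (16 / lam ^ 2) = 16 * lamE ^ (-2 : ℝ) := by
      have h2 : lamE ^ (-2 : ℝ) = ENNReal.ofReal (lam ^ (-2 : ℝ)) :=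
        ENNReal.ofReal_rpow_of_pos hlam
      rw [h2, ← ENNReal.ofReal_ofNat, ← ENNReal.ofReal_mul (by norm_num)]
      congr 1
      rw [Real.rpow_neg hlam.le, show ((2:ℝ)) = ((2:ℕ):ℝ) by norm_num,
        Real.rpow_natCast]
      ring
    rw [e1, e2]
  calc eLpNorm (deriv u) p₁ ν ^ q
      ≤ (lamE ^ q⁻¹ * ENNReal.ofReal (16 / lam ^ 2 * K + M)) ^ q :=
        ENNReal.rpow_le_rpow h3 hq.le
    _ = lamE * ENNReal.ofReal (16 / lam ^ 2 * K + M) ^ q := by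
        rw [ENNReal.mul_rpow_of_nonneg _ _ hq.le, ← ENNReal.rpow_mul,
          inv_mul_cancel₀ hq.ne', ENNReal.rpow_one]
    _ ≤ lamE * (16 * lamE ^ (-2:ℝ) * (lamE ^ (1 - 1 / p₀.toReal) * A)
          + lamE ^ (1 - 1 / p₂.toReal) * B) ^ q := by
        gcongr
        exact hcoef.trans (add_le_add (mul_le_mul_of_nonneg_left hKbd (by positivity)) hMbd)
    _ = lamE * (16 * lamE ^ (-2 + (1 - 1 / p₀.toReal)) * A
          + lamE ^ (1 - 1 / p₂.toReal) * B) ^ q := by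
        rw [ENNReal.rpow_add _ _ hlamE0 hlamEtop]; ring_nf
    _ ≤ lamE * (2 ^ q * ((16 * lamE ^ (-2 + (1 - 1 / p₀.toReal)) * A) ^ q
          + (lamE ^ (1 - 1 / p₂.toReal) * B) ^ q)) := by
        gcongr
        exact ungar_add_rpow_le _ _ hq.le
    _ = 2 ^ q * 16 ^ q * (lamE ^ ((-2 + (1 - 1 / p₀.toReal)) * q + 1) * A ^ q)
          + 2 ^ q * 1 ^ q * (lamE ^ ((1 - 1 / p₂.toReal) * q + 1) * B ^ q) := by
        have expand : ∀ (c x : ℝ≥0∞) (e : ℝ), lamE * (c * lamE ^ e * x) ^ q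
            = c ^ q * (lamE ^ (e * q + 1) * x ^ q) := by
          intro c x e
          rw [ENNReal.mul_rpow_of_nonneg _ _ hq.le, ENNReal.mul_rpow_of_nonneg _ _ hq.le,
            ← ENNReal.rpow_mul, ENNReal.rpow_add _ _ hlamE0 hlamEtop, ENNReal.rpow_one]
          ring
        have h16 := expand 16 A (-2 + (1 - 1 / p₀.toReal))
        have h1 := expand 1 B (1 - 1 / p₂.toReal)
        calc lamE * (2 ^ q * ((16 * lamE ^ (-2 + (1 - 1 / p₀.toReal)) * A) ^ q
              + (lamE ^ (1 - 1 / p₂.toReal) * B) ^ q))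
            = 2 ^ q * (lamE * (16 * lamE ^ (-2 + (1 - 1 / p₀.toReal)) * A) ^ q)
              + 2 ^ q * (lamE * (1 * lamE ^ (1 - 1 / p₂.toReal) * B) ^ q) := by
              rw [one_mul]; ring
          _ = _ := by rw [h16, h1]; ring
    _ ≤ 32 ^ q * (ENNReal.ofReal (lam ^ (-α)) * A ^ q)
          + 32 ^ q * (ENNReal.ofReal (lam ^ α) * B ^ q) := by
        have hEa : lamE ^ ((-2 + (1 - 1 / p₀.toReal)) * q + 1)
            = ENNReal.ofReal (lam ^ (-α)) := by
          rw [hα2, hlamEdef, ENNReal.ofReal_rpow_of_pos hlam]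
        have hEb : lamE ^ ((1 - 1 / p₂.toReal) * q + 1)
            = ENNReal.ofReal (lam ^ α) := by
          rw [hα1, hlamEdef, ENNReal.ofReal_rpow_of_pos hlam]
        have hc1 : (2 : ℝ≥0∞) ^ q * 16 ^ q = 32 ^ q := by
          rw [← ENNReal.mul_rpow_of_nonneg _ _ hq.le]; norm_num
        have hc2 : (2 : ℝ≥0∞) ^ q * 1 ^ q ≤ 32 ^ q := by
          rw [ENNReal.one_rpow, mul_one]
          exact ENNReal.rpow_le_rpow (by norm_num) hq.le
        rw [hEa, hEb]
        exact add_le_add (mul_le_mul_left hc1.le _) (mul_le_mul_left hc2 _)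
    _ = 32 ^ q * (ENNReal.ofReal (lam ^ α) * B ^ q + ENNReal.ofReal (lam ^ (-α)) * A ^ q) := by
        rw [mul_add]; ring
end

section
/- One-dimensional weighted interpolation against the Hölder-1/2 seminorm (Lemma 2.20): Let p₁ ∈ [3,∞), p₂ = p₁/3 ∈ [1,∞), and σ₁, σ₂ ∈ ℝ with σ₂ = 3σ₁, 3/2 − 1/p₂ > σ₂, and σ₁ > −1/p₁. Then there is a constant C, depending only on the exponents, such that for every f ∈ C²((0,∞)) with ‖f‖_{Ċ^{1/2}} < ∞ and ‖x^{σ₂} f″‖_{L^{p₂}(0,∞)} < ∞, ‖x^{σ₁} f′‖_{L^{p₁}(0,∞)} ≤ C ‖f‖_{Ċ^{1/2}}^{2/3} ‖x^{σ₂} f″‖_{L^{p₂}(0,∞)}^{1/3}. -/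
open MeasureTheory Set
open scoped ENNReal

section Inst

variable {f : ℝ → ℝ} {H : ℝ}

/-- differentiability of f at points of `Ioi 0` -/
lemma WIH_diff1 (hf : ContDiffOn ℝ 2 f (Set.Ioi 0)) {x : ℝ} (hx : x ∈ Set.Ioi (0:ℝ)) :
    DifferentiableAt ℝ f x := by
  have h1 : DifferentiableOn ℝ f (Set.Ioi 0) := hf.differentiableOn (by norm_num)
  exact h1.differentiableAt (isOpen_Ioi.mem_nhds hx)

lemma WIH_contdiff_deriv (hf : ContDiffOn ℝ 2 f (Set.Ioi 0)) :
    ContDiffOn ℝ 1 (deriv f) (Set.Ioi 0) := by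
  exact hf.deriv_of_isOpen isOpen_Ioi (show (1:WithTop ℕ∞) + 1 ≤ 2 by norm_num)

lemma WIH_diff2 (hf : ContDiffOn ℝ 2 f (Set.Ioi 0)) {x : ℝ} (hx : x ∈ Set.Ioi (0:ℝ)) :
    DifferentiableAt ℝ (deriv f) x := by
  have h1 : DifferentiableOn ℝ (deriv f) (Set.Ioi 0) :=
    (WIH_contdiff_deriv hf).differentiableOn (by norm_num)
  exact h1.differentiableAt (isOpen_Ioi.mem_nhds hx)

lemma WIH_cont_d1 (hf : ContDiffOn ℝ 2 f (Set.Ioi 0)) :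
    ContinuousOn (deriv f) (Set.Ioi 0) :=
  (WIH_contdiff_deriv hf).continuousOn

lemma WIH_cont_d2 (hf : ContDiffOn ℝ 2 f (Set.Ioi 0)) :
    ContinuousOn (deriv (deriv f)) (Set.Ioi 0) := by
  exact (WIH_contdiff_deriv hf).continuousOn_deriv_of_isOpen isOpen_Ioi (le_refl _)

/-- variation bound: `u x - u y ≤ ∫ g` for `u = |f'|, g = |f''|`. -/
lemma WIH_var (hf : ContDiffOn ℝ 2 f (Set.Ioi 0)) {x y : ℝ} (hx : 0 < x) (hxy : x ≤ y) :
    |deriv f x| - |deriv f y| ≤ ∫ t in x..y, |deriv (deriv f) t| := by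
  have hsub : Set.uIcc x y ⊆ Set.Ioi 0 := by
    rw [Set.uIcc_of_le hxy]
    intro t ht
    exact lt_of_lt_of_le hx ht.1
  have hder : ∀ t ∈ Set.uIcc x y, DifferentiableAt ℝ (deriv f) t :=
    fun t ht => WIH_diff2 hf (hsub ht)
  have hcont : ContinuousOn (deriv (deriv f)) (Set.uIcc x y) := (WIH_cont_d2 hf).mono hsub
  have hint : IntervalIntegrable (deriv (deriv f)) volume x y := hcont.intervalIntegrable
  have hftc : ∫ t in x..y, deriv (deriv f) t = deriv f y - deriv f x :=
    intervalIntegral.integral_deriv_eq_sub hder hint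
  have h1 : |deriv f x| - |deriv f y| ≤ |deriv f y - deriv f x| := by
    have := abs_sub_abs_le_abs_sub (deriv f x) (deriv f y)
    have h2 : |deriv f x - deriv f y| = |deriv f y - deriv f x| := abs_sub_comm _ _
    linarith
  calc |deriv f x| - |deriv f y| ≤ |deriv f y - deriv f x| := h1
    _ = |∫ t in x..y, deriv (deriv f) t| := by rw [hftc]
    _ ≤ ∫ t in x..y, |deriv (deriv f) t| :=
        intervalIntegral.abs_integral_le_integral_abs hxy

/-- slope bound from the Hölder hypothesis: if `|f'| ≥ ε` on `[x,y] ⊆ (0,∞)` then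
`ε (y-x) ≤ H √(y-x)`. -/
lemma WIH_slope (hf : ContDiffOn ℝ 2 f (Set.Ioi 0))
    (hHol : ∀ x ∈ Set.Ioi (0:ℝ), ∀ y ∈ Set.Ioi (0:ℝ), |f x - f y| ≤ H * Real.sqrt |x - y|)
    {x y ε : ℝ} (hx : 0 < x) (hxy : x < y) (hε : 0 < ε)
    (hlow : ∀ t ∈ Set.Icc x y, ε ≤ |deriv f t|) :
    ε * (y - x) ≤ H * Real.sqrt (y - x) := by
  have hsub : Set.Icc x y ⊆ Set.Ioi 0 := fun t ht => lt_of_lt_of_le hx ht.1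
  have huIcc : Set.uIcc x y = Set.Icc x y := Set.uIcc_of_le hxy.le
  -- sign constancy
  set U : Set ℝ := {t | t ∈ Set.Ioi (0:ℝ) ∧ 0 < deriv f t} with hU
  set V : Set ℝ := {t | t ∈ Set.Ioi (0:ℝ) ∧ deriv f t < 0} with hV
  have hUopen : IsOpen U := by
    have := (WIH_cont_d1 hf).isOpen_inter_preimage isOpen_Ioi (isOpen_Ioi (a := (0:ℝ)))
    convert this using 1
    rfl
  have hVopen : IsOpen V := by
    have := (WIH_cont_d1 hf).isOpen_inter_preimage isOpen_Ioi (isOpen_Iio (a := (0:ℝ)))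
    convert this using 1
    rfl
  have hdisj : Disjoint U V := by
    rw [Set.disjoint_left]
    rintro t ⟨_, h1⟩ ⟨_, h2⟩
    exact absurd (h1.trans h2) (lt_irrefl _)
  have hcover : Set.Icc x y ⊆ U ∪ V := by
    intro t ht
    have h1 : ε ≤ |deriv f t| := hlow t ht
    have h2 : deriv f t ≠ 0 := by
      intro h; rw [h] at h1; simp at h1; linarith
    rcases h2.lt_or_gt with h | h
    · exact Or.inr ⟨hsub ht, h⟩
    · exact Or.inl ⟨hsub ht, h⟩
  have hpc : IsPreconnected (Set.Icc x y) := isPreconnected_Icc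
  have hcases := hpc.subset_or_subset hUopen hVopen hdisj hcover
  -- FTC for f
  have hder : ∀ t ∈ Set.uIcc x y, DifferentiableAt ℝ f t := by
    rw [huIcc]; exact fun t ht => WIH_diff1 hf (hsub ht)
  have hcont1 : ContinuousOn (deriv f) (Set.uIcc x y) := by
    rw [huIcc]; exact (WIH_cont_d1 hf).mono hsub
  have hftc : ∫ t in x..y, deriv f t = f y - f x :=
    intervalIntegral.integral_deriv_eq_sub hder hcont1.intervalIntegrable
  have habs : |f y - f x| ≤ H * Real.sqrt (y - x) := by
    have := hHol y (hsub ⟨hxy.le, le_refl y⟩) x (hsub ⟨le_refl x, hxy.le⟩)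
    have h2 : |y - x| = y - x := abs_of_pos (by linarith)
    rwa [h2] at this
  -- lower bound ε (y-x) ≤ ∫ |f'|
  have hint_abs : IntervalIntegrable (fun t => |deriv f t|) volume x y := by
    apply ContinuousOn.intervalIntegrable
    exact (continuous_abs.comp_continuousOn hcont1)
  have hlow2 : ε * (y - x) ≤ ∫ t in x..y, |deriv f t| := by
    have hconst : ∫ _t in x..y, ε = ε * (y - x) := by simp [mul_comm]
    rw [← hconst]
    apply intervalIntegral.integral_mono_on hxy.le (by simp) hint_abs
    exact fun t ht => hlow t ht
  -- ∫|f'| = |f y - f x| by sign constancy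
  have hkey : (∫ t in x..y, |deriv f t|) ≤ |f y - f x| := by
    rcases hcases with h | h
    · have heq : Set.EqOn (fun t => |deriv f t|) (deriv f) (Set.uIcc x y) := by
        rw [huIcc]; intro t ht; exact abs_of_pos (h ht).2
      rw [intervalIntegral.integral_congr heq, hftc]
      exact le_abs_self _
    · have heq : Set.EqOn (fun t => |deriv f t|) (fun t => -deriv f t) (Set.uIcc x y) := by
        rw [huIcc]; intro t ht; exact abs_of_neg (h ht).2
      rw [intervalIntegral.integral_congr heq, intervalIntegral.integral_neg, hftc]
      exact neg_le_abs _
  linarith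

end Inst

section Scalar

lemma WIH_scalar_core {H lam q : ℝ} (hH : 0 < H) (hlam : 0 < lam) (hq : 1 ≤ q) :
    ((H/lam)^2) * (16*lam)^(3*q) * ((H/lam)^2)^(q-1)
      ≤ 16^(3*q) * H^(2*q) * (3*lam)^q := by
  have hs : (0:ℝ) < (H/lam)^2 := by positivity
  have hq0 : (0:ℝ) ≤ q := by linarith
  set s : ℝ := (H/lam)^2 with hs_def
  have e1 : (16*lam)^(3*q) = 16^(3*q) * lam^(3*q) := Real.mul_rpow (by norm_num) hlam.le
  have e2 : s * s^(q-1) = s^q := by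
    nth_rewrite 1 [← Real.rpow_one s]
    rw [← Real.rpow_add hs]; ring_nf
  have e3 : lam^(3*q) = (lam^(3:ℕ))^q := by
    rw [← Real.rpow_natCast lam 3, ← Real.rpow_mul hlam.le]
    norm_num
  have e4 : H^(2*q) = (H^(2:ℕ))^q := by
    rw [← Real.rpow_natCast H 2, ← Real.rpow_mul hH.le]
    norm_num
  have e5 : (lam^(3:ℕ))^q * s^q = (lam^(3:ℕ) * s)^q := (Real.mul_rpow (by positivity) hs.le).symm
  have e6 : lam^(3:ℕ) * s = lam * H^(2:ℕ) := by
    rw [hs_def]; field_simp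
  have e7 : (H^(2:ℕ))^q * (3*lam)^q = (H^(2:ℕ) * (3*lam))^q := (Real.mul_rpow (by positivity) (by positivity)).symm
  calc s * (16*lam)^(3*q) * s^(q-1) = 16^(3*q) * (lam^(3*q) * (s * s^(q-1))) := by rw [e1]; ring
    _ = 16^(3*q) * ((lam^(3:ℕ) * s)^q) := by rw [e2, e3, e5]
    _ = 16^(3*q) * ((lam * H^(2:ℕ))^q) := by rw [e6]
    _ ≤ 16^(3*q) * ((H^(2:ℕ) * (3*lam))^q) := by
        apply mul_le_mul_of_nonneg_left _ (by positivity)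
        apply Real.rpow_le_rpow (by positivity) _ hq0
        nlinarith [sq_nonneg H, hlam.le]
    _ = 16^(3*q) * H^(2*q) * (3*lam)^q := by rw [e4, ← e7]; ring

end Scalar

section CoreLemmas

variable {u g : ℝ → ℝ} {H a q lam : ℝ}

/-- Weight bound over the shell set. -/
lemma WIH_weight (hH : 0 < H) (ha : -1 < a) (hlam : 0 < lam)
    {ξ d : ℝ} (hξ0 : 0 < ξ) (hξd : ξ < d) (hlen : d - ξ ≤ (H/lam)^2)
    {T : Set ℝ} (hTsub : ∀ x ∈ T, 0 < x ∧ x ≤ ξ ∧ d - (H/lam)^2 ≤ x) :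
    ∫⁻ x in T, ENNReal.ofReal (x ^ a)
      ≤ ENNReal.ofReal ((2^(-a) + 2/(a+1) + 1) * ((H/lam)^2
          * (if 0 ≤ a then ξ ^ a else d ^ a))) := by
  set s : ℝ := (H/lam)^2 with hs_def
  have hs0 : 0 < s := by positivity
  set Ca : ℝ := 2^(-a) + 2/(a+1) + 1 with hCa_def
  have h2a : (0:ℝ) < 2^(-a) := Real.rpow_pos_of_pos (by norm_num) _
  have h2a' : (0:ℝ) < 2/(a+1) := div_pos two_pos (by linarith)
  have hCa1 : 1 ≤ Ca := by simp only [hCa_def]; linarith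
  have hd0 : 0 < d := lt_trans hξ0 hξd
  have ha1 : (0:ℝ) < a + 1 := by linarith
  by_cases h0a : 0 ≤ a
  · simp only [if_pos h0a]
    have hm0 : (0:ℝ) < ξ ^ a := Real.rpow_pos_of_pos hξ0 _
    have hTJ : T ⊆ Set.Icc (max (ξ - s) 0) ξ := by
      intro x hx
      obtain ⟨h1, h2, h3⟩ := hTsub x hx
      exact ⟨max_le (by linarith) h1.le, h2⟩
    calc ∫⁻ x in T, ENNReal.ofReal (x ^ a)
        ≤ ∫⁻ x in Set.Icc (max (ξ - s) 0) ξ, ENNReal.ofReal (x ^ a) :=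
          lintegral_mono_set hTJ
      _ ≤ ∫⁻ _x in Set.Icc (max (ξ - s) 0) ξ, ENNReal.ofReal (ξ ^ a) := by
          apply setLIntegral_mono' measurableSet_Icc
          intro x hx
          exact ENNReal.ofReal_le_ofReal
            (Real.rpow_le_rpow (le_trans (le_max_right _ _) hx.1) hx.2 h0a)
      _ = ENNReal.ofReal (ξ ^ a) * volume (Set.Icc (max (ξ - s) 0) ξ) :=
          setLIntegral_const _ _
      _ ≤ ENNReal.ofReal (ξ ^ a) * ENNReal.ofReal s := by
          rw [Real.volume_Icc]
          exact mul_le_mul_right (ENNReal.ofReal_le_ofReal (by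
            have := le_max_left (ξ - s) 0
            linarith)) _
      _ = ENNReal.ofReal (ξ ^ a * s) := by rw [← ENNReal.ofReal_mul hm0.le]
      _ ≤ ENNReal.ofReal (Ca * (s * ξ ^ a)) := by
          apply ENNReal.ofReal_le_ofReal
          nlinarith [mul_pos hs0 hm0, hCa1]
  · push_neg at h0a
    simp only [if_neg (not_le.2 h0a)]
    have hm0 : (0:ℝ) < d ^ a := Real.rpow_pos_of_pos hd0 _
    rcases le_or_gt (2*s) d with h2s | h2s
    · -- far case
      have hTJ : T ⊆ Set.Icc (d - s) d := by
        intro x hx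
        obtain ⟨h1, h2, h3⟩ := hTsub x hx
        exact ⟨h3, by linarith⟩
      have hhalf : (0:ℝ) < d/2 := by linarith
      have hb : ∀ x ∈ Set.Icc (d - s) d, x ^ a ≤ 2^(-a) * d ^ a := by
        intro x hx
        have h4 : d/2 ≤ x := by
          have := hx.1; linarith
        have h5 : x ^ a ≤ (d/2) ^ a :=
          Real.rpow_le_rpow_of_nonpos hhalf h4 h0a.le
        have h6 : (d/2 : ℝ) ^ a = d ^ a / 2 ^ a := Real.div_rpow hd0.le (by norm_num : (0:ℝ) ≤ 2) a
        have h7 : (2:ℝ)^(-a) = ((2:ℝ)^a)⁻¹ := Real.rpow_neg (by norm_num) a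
        have h8 : (0:ℝ) < 2 ^ a := Real.rpow_pos_of_pos (by norm_num) _
        calc x ^ a ≤ (d/2) ^ a := h5
          _ = 2^(-a) * d ^ a := by rw [h6, h7]; field_simp
      calc ∫⁻ x in T, ENNReal.ofReal (x ^ a)
          ≤ ∫⁻ x in Set.Icc (d - s) d, ENNReal.ofReal (x ^ a) := lintegral_mono_set hTJ
        _ ≤ ∫⁻ _x in Set.Icc (d - s) d, ENNReal.ofReal (2^(-a) * d ^ a) := by
            apply setLIntegral_mono' measurableSet_Icc
            intro x hx
            exact ENNReal.ofReal_le_ofReal (hb x hx)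
        _ = ENNReal.ofReal (2^(-a) * d ^ a) * volume (Set.Icc (d - s) d) :=
            setLIntegral_const _ _
        _ ≤ ENNReal.ofReal (2^(-a) * d ^ a) * ENNReal.ofReal s := by
            rw [Real.volume_Icc]
            exact mul_le_mul_right (ENNReal.ofReal_le_ofReal (by linarith)) _
        _ = ENNReal.ofReal (2^(-a) * d ^ a * s) := by
            rw [← ENNReal.ofReal_mul (by positivity)]
        _ ≤ ENNReal.ofReal (Ca * (s * d ^ a)) := by
            apply ENNReal.ofReal_le_ofReal
            have hCa2 : (2:ℝ)^(-a) ≤ Ca := by simp only [hCa_def]; linarith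
            nlinarith [mul_pos hs0 hm0, hCa2]
    · -- near-origin case
      have hTJ : T ⊆ Set.Ioc 0 d := by
        intro x hx
        obtain ⟨h1, h2, h3⟩ := hTsub x hx
        exact ⟨h1, by linarith⟩
      have hint : IntervalIntegrable (fun x : ℝ => x ^ a) volume 0 d :=
        intervalIntegral.intervalIntegrable_rpow' ha
      have hIOn : IntegrableOn (fun x : ℝ => x ^ a) (Set.Ioc 0 d) volume :=
        (intervalIntegrable_iff_integrableOn_Ioc_of_le hd0.le).1 hint
      have hval : ∫ x in Set.Ioc 0 d, x ^ a = d^(a+1)/(a+1) := by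
        rw [← intervalIntegral.integral_of_le hd0.le]
        rw [integral_rpow (Or.inl ha)]
        rw [Real.zero_rpow (by linarith : a + 1 ≠ 0)]
        ring
      have hlin : ∫⁻ x in Set.Ioc 0 d, ENNReal.ofReal (x ^ a)
          = ENNReal.ofReal (d^(a+1)/(a+1)) := by
        have hnn : ∀ᵐ x ∂(volume.restrict (Set.Ioc 0 d)), 0 ≤ (fun x : ℝ => x ^ a) x := by
          rw [ae_restrict_iff' measurableSet_Ioc]
          filter_upwards with x hx
          exact Real.rpow_nonneg hx.1.le a
        rw [← MeasureTheory.ofReal_integral_eq_lintegral_ofReal hIOn hnn, hval]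
      calc ∫⁻ x in T, ENNReal.ofReal (x ^ a)
          ≤ ∫⁻ x in Set.Ioc 0 d, ENNReal.ofReal (x ^ a) := lintegral_mono_set hTJ
        _ = ENNReal.ofReal (d^(a+1)/(a+1)) := hlin
        _ ≤ ENNReal.ofReal (Ca * (s * d ^ a)) := by
            apply ENNReal.ofReal_le_ofReal
            have h9 : d ^ (a+1) = d ^ a * d := Real.rpow_add_one hd0.ne' a
            rw [h9]
            rw [div_le_iff₀ ha1]
            have h10 : (0:ℝ) < 2/(a+1) := h2a'
            have hda : d ^ a * d ≤ d ^ a * (2*s) := by nlinarith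
            calc d ^ a * d ≤ d ^ a * (2*s) := hda
              _ = (2/(a+1)) * (s * d^a) * (a+1) := by field_simp
              _ ≤ Ca * (s * d ^ a) * (a + 1) := by
                  have h11 : (2/(a+1)) ≤ Ca := by simp only [hCa_def]; linarith [h2a]
                  nlinarith [h11, mul_pos (mul_pos hs0 hm0) ha1]


lemma WIH_charge (hg : ContinuousOn g (Set.Ioi 0)) (hg0 : ∀ x ∈ Set.Ioi (0:ℝ), 0 ≤ g x)
    (hq : 1 ≤ q) {ξ d sbound mlow : ℝ}
    (hξ0 : 0 < ξ) (hξd : ξ < d) (hlen : d - ξ ≤ sbound) (hml : 0 ≤ mlow)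
    (hmass : mlow ≤ ∫ t in ξ..d, g t) :
    ENNReal.ofReal (if 0 ≤ a then ξ ^ a else d ^ a) * ENNReal.ofReal mlow ^ q
      ≤ ENNReal.ofReal sbound ^ (q-1)
        * ∫⁻ t in Set.Ioo ξ d, ENNReal.ofReal (t ^ a * g t ^ q) := by
  have hq0 : (0:ℝ) < q := by linarith
  have hd0 : 0 < d := lt_trans hξ0 hξd
  have hsub : Set.Ioo ξ d ⊆ Set.Ioi 0 := fun t ht => lt_trans hξ0 ht.1
  have hsubc : Set.Icc ξ d ⊆ Set.Ioi 0 := fun t ht => lt_of_lt_of_le hξ0 ht.1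
  have hgi : IntegrableOn g (Set.Ioo ξ d) volume :=
    ((hg.mono hsubc).integrableOn_Icc).mono_set Set.Ioo_subset_Icc_self
  have hnn : ∀ᵐ t ∂(volume.restrict (Set.Ioo ξ d)), 0 ≤ g t := by
    rw [ae_restrict_iff' measurableSet_Ioo]
    filter_upwards with t ht
    exact hg0 t (hsub ht)
  have step0 : ENNReal.ofReal mlow ≤ ∫⁻ t in Set.Ioo ξ d, ENNReal.ofReal (g t) := by
    rw [← MeasureTheory.ofReal_integral_eq_lintegral_ofReal hgi hnn]
    apply ENNReal.ofReal_le_ofReal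
    rwa [← MeasureTheory.integral_Ioc_eq_integral_Ioo,
      ← intervalIntegral.integral_of_le hξd.le]
  have hgmeas : AEMeasurable (fun t => ENNReal.ofReal (g t))
      (volume.restrict (Set.Ioo ξ d)) :=
    ENNReal.measurable_ofReal.comp_aemeasurable
      ((hg.mono hsub).aemeasurable measurableSet_Ioo)
  set B : ℝ≥0∞ := ∫⁻ t in Set.Ioo ξ d, (ENNReal.ofReal (g t)) ^ q with hB_def
  have holder : (∫⁻ t in Set.Ioo ξ d, ENNReal.ofReal (g t))
      ≤ B ^ (1/q) * (volume (Set.Ioo ξ d)) ^ (1 - 1/q) := by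
    rcases eq_or_lt_of_le hq with hq1 | hq1
    · have hBg : B = ∫⁻ t in Set.Ioo ξ d, ENNReal.ofReal (g t) := by
        rw [hB_def, ← hq1]
        simp [ENNReal.rpow_one]
      rw [hBg, ← hq1]
      norm_num
    · have hpq : Real.HolderConjugate q (q/(q-1)) := Real.HolderConjugate.conjExponent hq1
      have hH := ENNReal.lintegral_mul_le_Lp_mul_Lq (volume.restrict (Set.Ioo ξ d)) hpq
        hgmeas aemeasurable_const (g := fun _ => (1:ℝ≥0∞))
      simp only [mul_one, Pi.mul_apply] at hH
      have e : (∫⁻ _t in Set.Ioo ξ d, ((fun _ => (1:ℝ≥0∞)) _t) ^ (q/(q-1))) ^ (1/(q/(q-1)))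
          = (volume (Set.Ioo ξ d)) ^ (1 - 1/q) := by
        simp only [ENNReal.one_rpow]
        rw [setLIntegral_const, one_mul]
        congr 1
        have hq1' : q - 1 ≠ 0 := by linarith
        field_simp
      calc (∫⁻ t in Set.Ioo ξ d, ENNReal.ofReal (g t))
          ≤ (∫⁻ t in Set.Ioo ξ d, ENNReal.ofReal (g t) ^ q) ^ (1/q)
            * (∫⁻ _t in Set.Ioo ξ d, ((fun _ => (1:ℝ≥0∞)) _t) ^ (q/(q-1))) ^ (1/(q/(q-1))) := hH
        _ = B ^ (1/q) * (volume (Set.Ioo ξ d)) ^ (1 - 1/q) := by rw [e, hB_def]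
  have hvol : volume (Set.Ioo ξ d) ≤ ENNReal.ofReal sbound := by
    rw [Real.volume_Ioo]; exact ENNReal.ofReal_le_ofReal (by linarith)
  have step1 : ENNReal.ofReal mlow ^ q ≤ B * ENNReal.ofReal sbound ^ (q-1) := by
    have h1 : ENNReal.ofReal mlow ≤ B ^ (1/q) * (volume (Set.Ioo ξ d)) ^ (1 - 1/q) :=
      le_trans step0 holder
    have h2 := ENNReal.rpow_le_rpow h1 hq0.le
    have e1 : 1/q*q = 1 := by field_simp
    have e2 : (1-1/q)*q = q-1 := by field_simp
    have h3 : (B ^ (1/q) * (volume (Set.Ioo ξ d)) ^ (1 - 1/q)) ^ q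
        = B * (volume (Set.Ioo ξ d)) ^ (q-1) := by
      rw [ENNReal.mul_rpow_of_nonneg _ _ hq0.le, ← ENNReal.rpow_mul, ← ENNReal.rpow_mul,
        e1, e2, ENNReal.rpow_one]
    rw [h3] at h2
    calc ENNReal.ofReal mlow ^ q ≤ B * (volume (Set.Ioo ξ d)) ^ (q-1) := h2
      _ ≤ B * ENNReal.ofReal sbound ^ (q-1) :=
          mul_le_mul_right (ENNReal.rpow_le_rpow hvol (by linarith)) _
  have hBeq : B = ∫⁻ t in Set.Ioo ξ d, ENNReal.ofReal (g t ^ q) := by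
    rw [hB_def]
    apply setLIntegral_congr_fun_ae measurableSet_Ioo
    filter_upwards with t
    intro ht
    exact ENNReal.ofReal_rpow_of_nonneg (hg0 t (hsub ht)) hq0.le
  set m : ℝ := if 0 ≤ a then ξ ^ a else d ^ a with hm_def
  have hm0 : 0 ≤ m := by
    rw [hm_def]; split_ifs
    · exact (Real.rpow_pos_of_pos hξ0 _).le
    · exact (Real.rpow_pos_of_pos hd0 _).le
  have hmt : ∀ t ∈ Set.Ioo ξ d, m ≤ t ^ a := by
    intro t ht
    rw [hm_def]; split_ifs with h0a
    · exact Real.rpow_le_rpow hξ0.le ht.1.le h0a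
    · exact Real.rpow_le_rpow_of_nonpos (hsub ht) ht.2.le (le_of_not_ge h0a)
  have step2 : ENNReal.ofReal m * B
      ≤ ∫⁻ t in Set.Ioo ξ d, ENNReal.ofReal (t ^ a * g t ^ q) := by
    rw [hBeq, ← lintegral_const_mul' _ _ ENNReal.ofReal_ne_top]
    apply setLIntegral_mono' measurableSet_Ioo
    intro t ht
    rw [← ENNReal.ofReal_mul hm0]
    apply ENNReal.ofReal_le_ofReal
    exact mul_le_mul_of_nonneg_right (hmt t ht) (Real.rpow_nonneg (hg0 t (hsub ht)) q)
  calc ENNReal.ofReal m * ENNReal.ofReal mlow ^ q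
      ≤ ENNReal.ofReal m * (B * ENNReal.ofReal sbound ^ (q-1)) := mul_le_mul_right step1 _
    _ = ENNReal.ofReal sbound ^ (q-1) * (ENNReal.ofReal m * B) := by ring
    _ ≤ ENNReal.ofReal sbound ^ (q-1)
        * ∫⁻ t in Set.Ioo ξ d, ENNReal.ofReal (t ^ a * g t ^ q) := mul_le_mul_right step2 _


/-- Per-component geometry: the descent interval. -/
lemma WIH_component
    (hu : ContinuousOn u (Set.Ioi 0))
    (hslope : ∀ x y ε : ℝ, 0 < x → x < y → 0 < ε → (∀ t ∈ Set.Icc x y, ε ≤ u t) →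
        ε * (y - x) ≤ H * Real.sqrt (y - x))
    (hvar : ∀ x y : ℝ, 0 < x → x ≤ y → u x - u y ≤ ∫ t in x..y, g t)
    (hH : 0 < H) (hlam : 0 < lam) {z : ℝ} (hz0 : 0 < z) (hz4 : 4 * lam ≤ u z) :
    ∃ ξ d : ℝ, 0 < ξ ∧ ξ < d ∧ d - ξ ≤ (H/lam)^2 ∧
      Set.Ioo ξ d ⊆ connectedComponentIn {x | x ∈ Set.Ioi (0:ℝ) ∧ lam < u x} z ∧
      (∀ t ∈ Set.Ioo ξ d, lam < u t ∧ u t < 4 * lam) ∧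
      (∀ x, x ∈ connectedComponentIn {x | x ∈ Set.Ioi (0:ℝ) ∧ lam < u x} z →
          4 * lam ≤ u x → (0 < x ∧ x ≤ ξ ∧ d - (H/lam)^2 ≤ x)) ∧
      (3 * lam ≤ ∫ t in ξ..d, g t) := by
  set s : ℝ := (H/lam)^2 with hs_def
  have hs0 : 0 < s := by positivity
  set E : Set ℝ := {x | x ∈ Set.Ioi (0:ℝ) ∧ lam < u x} with hE_def
  have hEopen : IsOpen E := by
    have := hu.isOpen_inter_preimage isOpen_Ioi (isOpen_Ioi (a := lam))
    convert this using 1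
    rfl
  have hEpos : E ⊆ Set.Ioi 0 := fun x hx => hx.1
  have hzE : z ∈ E := ⟨hz0, by linarith⟩
  set I : Set ℝ := connectedComponentIn E z with hI_def
  have hIz : z ∈ I := mem_connectedComponentIn hzE
  have hIE : I ⊆ E := connectedComponentIn_subset E z
  have hIopen : IsOpen I := hEopen.connectedComponentIn
  have hIpc : IsPreconnected I := isPreconnected_connectedComponentIn
  have hIoc : Set.OrdConnected I := hIpc.ordConnected
  have hIpos : I ⊆ Set.Ioi 0 := hIE.trans hEpos
  -- length bound
  have key : ∀ x ∈ I, ∀ y ∈ I, y - x ≤ s := by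
    intro x hx y hy
    rcases le_or_gt y x with h | h
    · linarith
    · have hx0 : 0 < x := hIpos hx
      have hicc : Set.Icc x y ⊆ I := hIoc.out hx hy
      have hlow : ∀ t ∈ Set.Icc x y, lam ≤ u t := fun t ht => ((hIE (hicc ht)).2).le
      have hsl := hslope x y lam hx0 h hlam hlow
      have hr0 : 0 < y - x := by linarith
      have hsq : Real.sqrt (y-x) * Real.sqrt (y-x) = y - x := Real.mul_self_sqrt hr0.le
      have hsqpos : 0 < Real.sqrt (y-x) := Real.sqrt_pos.2 hr0
      have h1 : lam * Real.sqrt (y-x) ≤ H := by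
        have h2 : lam * Real.sqrt (y-x) * Real.sqrt (y-x) ≤ H * Real.sqrt (y-x) := by
          rw [mul_assoc, hsq]; exact hsl
        exact le_of_mul_le_mul_right h2 hsqpos
      have h3 : Real.sqrt (y-x) ≤ H / lam := by
        rw [le_div_iff₀ hlam]; linarith
      calc y - x = Real.sqrt (y-x) * Real.sqrt (y-x) := hsq.symm
        _ ≤ (H/lam) * (H/lam) := by
            apply mul_le_mul h3 h3 hsqpos.le (by positivity)
        _ = s := by rw [hs_def]; ring
  have hne : I.Nonempty := ⟨z, hIz⟩
  have hbddA : BddAbove I := ⟨z + s, fun y hy => by linarith [key z hIz y hy]⟩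
  have hbddB : BddBelow I := ⟨0, fun x hx => (hIpos hx).le⟩
  set d : ℝ := sSup I with hd_def
  set c : ℝ := sInf I with hc_def
  have hzd : z ≤ d := le_csSup hbddA hIz
  have hcz : c ≤ z := csInf_le hbddB hIz
  have hd0 : 0 < d := lt_of_lt_of_le hz0 hzd
  have hdc : d - c ≤ s := by
    have h1 : d ≤ c + s := by
      apply csSup_le hne
      intro y hy
      have h2 : y - s ≤ c := le_csInf hne (fun x hx => by linarith [key x hx y hy])
      linarith
    linarith
  have hcd_sub : Set.Ioo c d ⊆ I := by
    intro t ht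
    obtain ⟨x, hxI, hxt⟩ := exists_lt_of_csInf_lt hne ht.1
    obtain ⟨y, hyI, hty⟩ := exists_lt_of_lt_csSup hne ht.2
    exact hIoc.out hxI hyI ⟨hxt.le, hty.le⟩
  have hIcd : I ⊆ Set.Icc c d := fun x hx => ⟨csInf_le hbddB hx, le_csSup hbddA hx⟩
  -- u d ≤ lam
  have hud : u d ≤ lam := by
    by_contra hcon
    push_neg at hcon
    have hdE : d ∈ E := ⟨hd0, hcon⟩
    obtain ⟨ε, hε0, hball⟩ := Metric.isOpen_iff.1 hEopen d hdE
    -- c < z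
    have hczlt : c < z := by
      obtain ⟨δ, hδ0, hballz⟩ := Metric.isOpen_iff.1 hIopen z hIz
      have hzin : z - δ/2 ∈ I := by
        apply hballz
        rw [Metric.mem_ball, Real.dist_eq]
        rw [abs_of_nonpos (by linarith)]
        linarith
      have := csInf_le hbddB hzin
      linarith
    have hIoo : Set.Ioo c (d + ε) ⊆ E := by
      intro t ht
      rcases lt_or_ge t d with h | h
      · exact hIE (hcd_sub ⟨ht.1, h⟩)
      · apply hball
        rw [Metric.mem_ball, Real.dist_eq, abs_of_nonneg (by linarith)]
        linarith [ht.2]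
    have hzin : z ∈ Set.Ioo c (d + ε) := ⟨hczlt, by linarith⟩
    have hsubI : Set.Ioo c (d + ε) ⊆ I :=
      isPreconnected_Ioo.subset_connectedComponentIn hzin hIoo
    have : d + ε/2 ∈ I := hsubI ⟨by linarith, by linarith⟩
    have := le_csSup hbddA this
    linarith
  -- xi
  set T : Set ℝ := {x | x ∈ I ∧ 4 * lam ≤ u x} with hT_def
  have hTz : z ∈ T := ⟨hIz, hz4⟩
  have hTne : T.Nonempty := ⟨z, hTz⟩
  have hTbdd : BddAbove T := hbddA.mono (fun x hx => hx.1)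
  set ξ : ℝ := sSup T with hξ_def
  have hzξ : z ≤ ξ := le_csSup hTbdd hTz
  have hξ0 : 0 < ξ := lt_of_lt_of_le hz0 hzξ
  have hξd : ξ ≤ d := csSup_le hTne (fun x hx => le_csSup hbddA hx.1)
  have huξ : 4 * lam ≤ u ξ := by
    by_contra hcon
    push_neg at hcon
    have hcontξ : ContinuousAt u ξ := hu.continuousAt (isOpen_Ioi.mem_nhds hξ0)
    have hnhds : u ⁻¹' (Set.Iio (4*lam)) ∈ nhds ξ :=
      hcontξ.preimage_mem_nhds (Iio_mem_nhds hcon)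
    obtain ⟨ε, hε0, hball⟩ := Metric.mem_nhds_iff.1 hnhds
    obtain ⟨x, hxT, hxgt⟩ := exists_lt_of_lt_csSup hTne (show ξ - ε < ξ by linarith)
    have hxle : x ≤ ξ := le_csSup hTbdd hxT
    have : x ∈ u ⁻¹' (Set.Iio (4*lam)) := by
      apply hball
      rw [Metric.mem_ball, Real.dist_eq, abs_of_nonpos (by linarith)]
      linarith
    have h5 : u x < 4 * lam := Set.mem_Iio.1 (Set.mem_preimage.1 this)
    linarith [hxT.2]
  have hξltd : ξ < d := by
    rcases lt_or_eq_of_le hξd with h | h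
    · exact h
    · exfalso; rw [h] at huξ; linarith
  have hczξ : c < ξ := by
    -- c < z ≤ ξ
    obtain ⟨δ, hδ0, hballz⟩ := Metric.isOpen_iff.1 hIopen z hIz
    have hzin : z - δ/2 ∈ I := by
      apply hballz
      rw [Metric.mem_ball, Real.dist_eq, abs_of_nonpos (by linarith)]
      linarith
    have := csInf_le hbddB hzin
    linarith
  have hRsub : Set.Ioo ξ d ⊆ I := fun t ht => hcd_sub ⟨lt_trans hczξ ht.1, ht.2⟩
  have hRu : ∀ t ∈ Set.Ioo ξ d, lam < u t ∧ u t < 4 * lam := by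
    intro t ht
    refine ⟨(hIE (hRsub ht)).2, ?_⟩
    by_contra hcon
    push_neg at hcon
    have : t ∈ T := ⟨hRsub ht, hcon⟩
    have := le_csSup hTbdd this
    linarith [ht.1]
  have hmass : 3 * lam ≤ ∫ t in ξ..d, g t := by
    have := hvar ξ d hξ0 hξltd.le
    linarith
  refine ⟨ξ, d, hξ0, hξltd, by linarith, hRsub, hRu, ?_, hmass⟩
  intro x hxI hx4
  refine ⟨hIpos hxI, le_csSup hTbdd ⟨hxI, hx4⟩, ?_⟩
  have := (hIcd hxI).1
  linarith


lemma WIH_comp_combined (hg : ContinuousOn g (Set.Ioi 0))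
    (hg0 : ∀ x ∈ Set.Ioi (0:ℝ), 0 ≤ g x)
    (hH : 0 < H) (ha : -1 < a) (hq : 1 ≤ q) (hlam : 0 < lam)
    {ξ d : ℝ} (hξ0 : 0 < ξ) (hξd : ξ < d) (hlen : d - ξ ≤ (H/lam)^2)
    (hmass : 3 * lam ≤ ∫ t in ξ..d, g t)
    {T : Set ℝ} (hTsub : ∀ x ∈ T, 0 < x ∧ x ≤ ξ ∧ d - (H/lam)^2 ≤ x) :
    (∫⁻ x in T, ENNReal.ofReal (x ^ a)) * ENNReal.ofReal ((16*lam) ^ (3*q))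
      ≤ ENNReal.ofReal ((2^(-a)+2/(a+1)+1) * 16 ^ (3*q)) * ENNReal.ofReal H ^ (2*q)
        * ∫⁻ t in Set.Ioo ξ d, ENNReal.ofReal (t ^ a * g t ^ q) := by
  have hq0 : (0:ℝ) < q := by linarith
  have hd0 : 0 < d := lt_trans hξ0 hξd
  set s : ℝ := (H/lam)^2 with hs_def
  have hs0 : 0 < s := by positivity
  set Ca : ℝ := 2^(-a) + 2/(a+1) + 1 with hCa_def
  have hCa0 : 0 < Ca := by
    have h2a : (0:ℝ) < 2^(-a) := Real.rpow_pos_of_pos (by norm_num) _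
    have h2a' : (0:ℝ) < 2/(a+1) := div_pos two_pos (by linarith)
    simp only [hCa_def]; linarith
  set m : ℝ := if 0 ≤ a then ξ ^ a else d ^ a with hm_def
  have hm0 : 0 < m := by
    rw [hm_def]; split_ifs
    · exact Real.rpow_pos_of_pos hξ0 _
    · exact Real.rpow_pos_of_pos hd0 _
  set CHG : ℝ≥0∞ := ∫⁻ t in Set.Ioo ξ d, ENNReal.ofReal (t ^ a * g t ^ q) with hCHG_def
  set F : ℝ≥0∞ := ENNReal.ofReal (3*lam) ^ q with hF_def
  have hF0 : F ≠ 0 := by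
    rw [hF_def]
    exact (ENNReal.rpow_pos (ENNReal.ofReal_pos.2 (by linarith)) ENNReal.ofReal_ne_top).ne'
  have hFt : F ≠ ⊤ := by
    rw [hF_def]
    exact ENNReal.rpow_ne_top_of_nonneg hq0.le ENNReal.ofReal_ne_top
  have hFeq : F = ENNReal.ofReal ((3*lam) ^ q) := ENNReal.ofReal_rpow_of_pos (by linarith)
  have W := WIH_weight hH ha hlam hξ0 hξd hlen hTsub
  have G := WIH_charge (a := a) hg hg0 hq hξ0 hξd hlen (by linarith : (0:ℝ) ≤ 3*lam) hmass
  rw [← hs_def, ← hCa_def, ← hm_def] at W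
  rw [← hm_def, ← hCHG_def, ← hF_def] at G
  apply (ENNReal.mul_le_mul_iff_left hF0 hFt).1
  have hsc := WIH_scalar_core hH hlam hq
  rw [← hs_def] at hsc
  have A1 : ENNReal.ofReal (Ca*(s*m)) * ENNReal.ofReal ((16*lam)^(3*q)) * F
      = ENNReal.ofReal (Ca*s*(16*lam)^(3*q)) * (ENNReal.ofReal m * F) := by
    have e : Ca*(s*m)*(16*lam)^(3*q) = Ca*s*(16*lam)^(3*q)*m := by ring
    rw [← ENNReal.ofReal_mul (show (0:ℝ) ≤ Ca*(s*m) by positivity), e,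
      ENNReal.ofReal_mul (show (0:ℝ) ≤ Ca*s*(16*lam)^(3*q) by positivity), mul_assoc]
  have A2 : ENNReal.ofReal (Ca*s*(16*lam)^(3*q)) * (ENNReal.ofReal s ^ (q-1) * CHG)
      = ENNReal.ofReal (Ca*s*(16*lam)^(3*q) * s^(q-1)) * CHG := by
    rw [ENNReal.ofReal_rpow_of_pos hs0, ← mul_assoc,
      ← ENNReal.ofReal_mul (show (0:ℝ) ≤ Ca*s*(16*lam)^(3*q) by positivity)]
  have A3 : ENNReal.ofReal (Ca * (16 ^ (3*q) * H^(2*q) * (3*lam)^q))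
      = ENNReal.ofReal (Ca * 16 ^ (3*q)) * ENNReal.ofReal H ^ (2*q) * F := by
    have e : Ca * (16^(3*q)*H^(2*q)*(3*lam)^q) = (Ca*16^(3*q))*H^(2*q)*((3*lam)^q) := by ring
    rw [e, ENNReal.ofReal_mul (show (0:ℝ) ≤ (Ca*16^(3*q))*H^(2*q) by positivity),
      ENNReal.ofReal_mul (show (0:ℝ) ≤ Ca*16^(3*q) by positivity),
      ← hFeq, ← ENNReal.ofReal_rpow_of_pos hH]
  calc (∫⁻ x in T, ENNReal.ofReal (x ^ a)) * ENNReal.ofReal ((16*lam) ^ (3*q)) * F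
      ≤ ENNReal.ofReal (Ca*(s*m)) * ENNReal.ofReal ((16*lam) ^ (3*q)) * F :=
        mul_le_mul_left (mul_le_mul_left W _) _
    _ = ENNReal.ofReal (Ca*s*(16*lam)^(3*q)) * (ENNReal.ofReal m * F) := A1
    _ ≤ ENNReal.ofReal (Ca*s*(16*lam)^(3*q)) * (ENNReal.ofReal s ^ (q-1) * CHG) :=
        mul_le_mul_right G _
    _ = ENNReal.ofReal (Ca*s*(16*lam)^(3*q) * s^(q-1)) * CHG := A2
    _ ≤ ENNReal.ofReal (Ca * (16 ^ (3*q) * H^(2*q) * (3*lam)^q)) * CHG := by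
        apply mul_le_mul_left
        apply ENNReal.ofReal_le_ofReal
        calc Ca * s * (16*lam) ^ (3*q) * s^(q-1)
            = Ca * (s * (16*lam) ^ (3*q) * s^(q-1)) := by ring
          _ ≤ Ca * (16 ^ (3*q) * H^(2*q) * (3*lam)^q) :=
              mul_le_mul_of_nonneg_left hsc hCa0.le
    _ = ENNReal.ofReal (Ca * 16 ^ (3*q)) * ENNReal.ofReal H ^ (2*q) * F * CHG := by
        rw [A3]
    _ = ENNReal.ofReal (Ca * 16 ^ (3*q)) * ENNReal.ofReal H ^ (2*q) * CHG * F := by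
        ring


lemma WIH_shell (hu : ContinuousOn u (Set.Ioi 0))
    (hu0 : ∀ x ∈ Set.Ioi (0:ℝ), 0 ≤ u x)
    (hg : ContinuousOn g (Set.Ioi 0))
    (hg0 : ∀ x ∈ Set.Ioi (0:ℝ), 0 ≤ g x)
    (hslope : ∀ x y ε : ℝ, 0 < x → x < y → 0 < ε → (∀ t ∈ Set.Icc x y, ε ≤ u t) →
        ε * (y - x) ≤ H * Real.sqrt (y - x))
    (hvar : ∀ x y : ℝ, 0 < x → x ≤ y → u x - u y ≤ ∫ t in x..y, g t)
    (hH : 0 < H) (ha : -1 < a) (hq : 1 ≤ q) (k : ℤ) :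
    ∫⁻ x in {x | x ∈ Set.Ioi (0:ℝ) ∧ (4:ℝ)^k ≤ u x ∧ u x < (4:ℝ)^(k+1)},
        ENNReal.ofReal (x ^ a * u x ^ (3*q))
      ≤ ENNReal.ofReal ((2^(-a)+2/(a+1)+1) * 16 ^ (3*q)) * ENNReal.ofReal H ^ (2*q)
        * ∫⁻ t in {t | t ∈ Set.Ioi (0:ℝ) ∧ (4:ℝ)^(k-1) < u t ∧ u t < (4:ℝ)^k},
            ENNReal.ofReal (t ^ a * g t ^ q) := by
  have h40 : (4:ℝ) ≠ 0 := by norm_num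
  set lam : ℝ := (4:ℝ)^(k-1) with hlam_def
  have hlam : 0 < lam := zpow_pos (by norm_num) _
  have h4 : 4 * lam = (4:ℝ)^k := by
    rw [hlam_def, mul_comm, ← zpow_add_one₀ h40 (k-1)]
    norm_num
  have h16 : 16 * lam = (4:ℝ)^(k+1) := by
    rw [hlam_def, mul_comm, show (16:ℝ) = (4:ℝ)^(2:ℤ) by norm_num, ← zpow_add₀ h40]
    congr 1
    ring
  have hq0 : (0:ℝ) < q := by linarith
  set S : Set ℝ := {x | x ∈ Set.Ioi (0:ℝ) ∧ (4:ℝ)^k ≤ u x ∧ u x < (4:ℝ)^(k+1)} with hS_def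
  set V : Set ℝ := {t | t ∈ Set.Ioi (0:ℝ) ∧ (4:ℝ)^(k-1) < u t ∧ u t < (4:ℝ)^k} with hV_def
  set E : Set ℝ := {x | x ∈ Set.Ioi (0:ℝ) ∧ lam < u x} with hE_def
  have hEopen : IsOpen E := by
    have := hu.isOpen_inter_preimage isOpen_Ioi (isOpen_Ioi (a := lam))
    convert this using 1
    rfl
  -- measurability of S
  have hSmeas : MeasurableSet S := by
    have h1 : IsOpen {x | x ∈ Set.Ioi (0:ℝ) ∧ u x < (4:ℝ)^(k+1)} := by
      have := hu.isOpen_inter_preimage isOpen_Ioi (isOpen_Iio (a := (4:ℝ)^(k+1)))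
      convert this using 1
      rfl
    have h2 : IsOpen {x | x ∈ Set.Ioi (0:ℝ) ∧ u x < (4:ℝ)^k} := by
      have := hu.isOpen_inter_preimage isOpen_Ioi (isOpen_Iio (a := (4:ℝ)^k))
      convert this using 1
      rfl
    have : S = {x | x ∈ Set.Ioi (0:ℝ) ∧ u x < (4:ℝ)^(k+1)}
        \ {x | x ∈ Set.Ioi (0:ℝ) ∧ u x < (4:ℝ)^k} := by
      ext x
      simp only [hS_def, Set.mem_setOf_eq, Set.mem_diff, not_and, not_lt]
      constructor
      · rintro ⟨hx0, hx1, hx2⟩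
        exact ⟨⟨hx0, hx2⟩, fun _ => hx1⟩
      · rintro ⟨⟨hx0, hx2⟩, hx1⟩
        exact ⟨hx0, hx1 hx0, hx2⟩
    rw [this]
    exact h1.measurableSet.diff h2.measurableSet
  -- the family of components
  set C : Set (Set ℝ) := {I | ∃ z, z ∈ S ∧ I = connectedComponentIn E z} with hC_def
  have hCopen : ∀ I ∈ C, IsOpen I := by
    rintro I ⟨z, _, rfl⟩
    exact hEopen.connectedComponentIn
  have hzmemE : ∀ z ∈ S, z ∈ E := by
    rintro z ⟨hz0, hz1, _⟩
    refine ⟨hz0, ?_⟩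
    have : lam < 4 * lam := by linarith
    rw [h4] at this
    linarith
  have hCne : ∀ I ∈ C, I.Nonempty := by
    rintro I ⟨z, hz, rfl⟩
    exact ⟨z, mem_connectedComponentIn (hzmemE z hz)⟩
  have hCdisj : C.PairwiseDisjoint id := by
    rintro I hI J hJ hIJ
    rw [Function.onFun, Set.disjoint_left]
    intro t htI htJ
    obtain ⟨z, _, rfl⟩ := hI
    obtain ⟨w, _, rfl⟩ := hJ
    have h1 : connectedComponentIn E z = connectedComponentIn E t :=
      connectedComponentIn_eq (show t ∈ connectedComponentIn E z from htI)
    have h2 : connectedComponentIn E w = connectedComponentIn E t :=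
      connectedComponentIn_eq (show t ∈ connectedComponentIn E w from htJ)
    exact hIJ (h1.trans h2.symm)
  have hcnt : C.Countable :=
    Set.PairwiseDisjoint.countable_of_isOpen hCdisj hCopen hCne
  haveI : Countable ↥C := hcnt.to_subtype
  -- choose a base point in each component
  have hzex : ∀ I : ↥C, ∃ z, z ∈ S ∧ (I : Set ℝ) = connectedComponentIn E z := fun I => I.2
  choose zf hzS hzI using hzex
  have hz0 : ∀ I : ↥C, 0 < zf I := fun I => (hzS I).1
  have hz4 : ∀ I : ↥C, 4 * lam ≤ u (zf I) := by
    intro I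
    rw [h4]
    exact (hzS I).2.1
  have comp : ∀ I : ↥C, ∃ ξ d : ℝ, 0 < ξ ∧ ξ < d ∧ d - ξ ≤ (H/lam)^2 ∧
      Set.Ioo ξ d ⊆ connectedComponentIn E (zf I) ∧
      (∀ t ∈ Set.Ioo ξ d, lam < u t ∧ u t < 4 * lam) ∧
      (∀ x, x ∈ connectedComponentIn E (zf I) →
          4 * lam ≤ u x → (0 < x ∧ x ≤ ξ ∧ d - (H/lam)^2 ≤ x)) ∧
      (3 * lam ≤ ∫ t in ξ..d, g t) := by
    intro I
    exact WIH_component hu hslope hvar hH hlam (hz0 I) (hz4 I)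
  choose ξf df hξ0 hξd hlen hRsub hRu hTsub hmass using comp
  -- shell sets within components
  set T : ↥C → Set ℝ := fun I => {x | x ∈ (I : Set ℝ) ∧ 4 * lam ≤ u x} with hT_def
  set R : ↥C → Set ℝ := fun I => Set.Ioo (ξf I) (df I) with hR_def
  -- cover of S
  have hcover : S ⊆ ⋃ I : ↥C, T I := by
    intro x hx
    have hxE : x ∈ E := hzmemE x hx
    have hJ : connectedComponentIn E x ∈ C := ⟨x, hx, rfl⟩
    refine Set.mem_iUnion.2 ⟨⟨_, hJ⟩, ?_⟩
    refine ⟨mem_connectedComponentIn hxE, ?_⟩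
    rw [h4]
    exact hx.2.1
  -- R's are disjoint and inside V
  have hRV : ∀ I : ↥C, R I ⊆ V := by
    intro I t ht
    obtain ⟨h1, h2⟩ := hRu I t ht
    refine ⟨lt_trans (hξ0 I) ht.1, h1, ?_⟩
    rw [← h4]
    exact h2
  have hRdisj : Pairwise (Function.onFun Disjoint R) := by
    intro I J hIJ
    rw [Function.onFun]
    have hIJ' : (I : Set ℝ) ≠ (J : Set ℝ) := fun h => hIJ (Subtype.ext h)
    have hd := hCdisj I.2 J.2 hIJ'
    rw [Function.onFun] at hd
    apply Disjoint.mono _ _ hd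
    · rw [hR_def]
      intro t ht
      rw [hzI I]
      exact hRsub I ht
    · rw [hR_def]
      intro t ht
      rw [hzI J]
      exact hRsub J ht
  -- per-component estimate
  have hper : ∀ I : ↥C,
      (∫⁻ x in T I, ENNReal.ofReal (x ^ a)) * ENNReal.ofReal ((16*lam) ^ (3*q))
        ≤ ENNReal.ofReal ((2^(-a)+2/(a+1)+1) * 16 ^ (3*q)) * ENNReal.ofReal H ^ (2*q)
          * ∫⁻ t in R I, ENNReal.ofReal (t ^ a * g t ^ q) := by
    intro I
    apply WIH_comp_combined hg hg0 hH ha hq hlam (hξ0 I) (hξd I) (hlen I) (hmass I)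
    intro x hx
    exact hTsub I x (by rw [← hzI I]; exact hx.1) hx.2
  -- main chain
  set KK : ℝ≥0∞ := ENNReal.ofReal ((2^(-a)+2/(a+1)+1) * 16 ^ (3*q))
    * ENNReal.ofReal H ^ (2*q) with hKK_def
  set c16 : ℝ≥0∞ := ENNReal.ofReal ((16*lam) ^ (3*q)) with hc16_def
  calc ∫⁻ x in S, ENNReal.ofReal (x ^ a * u x ^ (3*q))
      ≤ ∫⁻ x in S, ENNReal.ofReal (x ^ a) * c16 := by
        apply setLIntegral_mono' hSmeas
        intro x hx
        rw [hc16_def, ← ENNReal.ofReal_mul (Real.rpow_nonneg (le_of_lt hx.1) a)]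
        apply ENNReal.ofReal_le_ofReal
        apply mul_le_mul_of_nonneg_left _ (Real.rpow_nonneg (le_of_lt hx.1) a)
        apply Real.rpow_le_rpow (hu0 x hx.1) _ (by positivity)
        rw [h16]
        exact (hx.2.2).le
    _ = (∫⁻ x in S, ENNReal.ofReal (x ^ a)) * c16 :=
        lintegral_mul_const' c16 _ ENNReal.ofReal_ne_top
    _ ≤ (∑' I : ↥C, ∫⁻ x in T I, ENNReal.ofReal (x ^ a)) * c16 := by
        apply mul_le_mul_left
        calc (∫⁻ x in S, ENNReal.ofReal (x ^ a))
            ≤ ∫⁻ x in ⋃ I : ↥C, T I, ENNReal.ofReal (x ^ a) := lintegral_mono_set hcover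
          _ ≤ ∑' I : ↥C, ∫⁻ x in T I, ENNReal.ofReal (x ^ a) := lintegral_iUnion_le _ _
    _ = ∑' I : ↥C, (∫⁻ x in T I, ENNReal.ofReal (x ^ a)) * c16 :=
        ENNReal.tsum_mul_right.symm
    _ ≤ ∑' I : ↥C, KK * ∫⁻ t in R I, ENNReal.ofReal (t ^ a * g t ^ q) := by
        apply ENNReal.tsum_le_tsum
        intro I
        exact hper I
    _ = KK * ∑' I : ↥C, ∫⁻ t in R I, ENNReal.ofReal (t ^ a * g t ^ q) :=
        ENNReal.tsum_mul_left
    _ = KK * ∫⁻ t in ⋃ I : ↥C, R I, ENNReal.ofReal (t ^ a * g t ^ q) := by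
        rw [lintegral_iUnion (fun I => measurableSet_Ioo) hRdisj]
    _ ≤ KK * ∫⁻ t in V, ENNReal.ofReal (t ^ a * g t ^ q) := by
        apply mul_le_mul_right
        apply lintegral_mono_set
        exact Set.iUnion_subset hRV


lemma WIH_core (hu : ContinuousOn u (Set.Ioi 0))
    (hu0 : ∀ x ∈ Set.Ioi (0:ℝ), 0 ≤ u x)
    (hg : ContinuousOn g (Set.Ioi 0))
    (hg0 : ∀ x ∈ Set.Ioi (0:ℝ), 0 ≤ g x)
    (hslope : ∀ x y ε : ℝ, 0 < x → x < y → 0 < ε → (∀ t ∈ Set.Icc x y, ε ≤ u t) →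
        ε * (y - x) ≤ H * Real.sqrt (y - x))
    (hvar : ∀ x y : ℝ, 0 < x → x ≤ y → u x - u y ≤ ∫ t in x..y, g t)
    (hH : 0 < H) (ha : -1 < a) (hq : 1 ≤ q) :
    ∫⁻ x in Set.Ioi (0:ℝ), ENNReal.ofReal (x ^ a * u x ^ (3*q))
      ≤ ENNReal.ofReal ((2^(-a)+2/(a+1)+1) * 16 ^ (3*q)) * ENNReal.ofReal H ^ (2*q)
        * ∫⁻ t in Set.Ioi (0:ℝ), ENNReal.ofReal (t ^ a * g t ^ q) := by
  have hq0 : (0:ℝ) < q := by linarith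
  set KK : ℝ≥0∞ := ENNReal.ofReal ((2^(-a)+2/(a+1)+1) * 16 ^ (3*q))
    * ENNReal.ofReal H ^ (2*q) with hKK_def
  set Sk : ℤ → Set ℝ := fun k => {x | x ∈ Set.Ioi (0:ℝ) ∧ (4:ℝ)^k ≤ u x ∧ u x < (4:ℝ)^(k+1)}
    with hSk_def
  set Vk : ℤ → Set ℝ := fun k => {t | t ∈ Set.Ioi (0:ℝ) ∧ (4:ℝ)^(k-1) < u t ∧ u t < (4:ℝ)^k}
    with hVk_def
  set P : Set ℝ := {x | x ∈ Set.Ioi (0:ℝ) ∧ 0 < u x} with hP_def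
  have hPopen : IsOpen P := by
    have := hu.isOpen_inter_preimage isOpen_Ioi (isOpen_Ioi (a := (0:ℝ)))
    convert this using 1
    rfl
  have hVopen : ∀ k : ℤ, IsOpen (Vk k) := by
    intro k
    have h1 : IsOpen ({t | t ∈ Set.Ioi (0:ℝ) ∧ (4:ℝ)^(k-1) < u t}) := by
      have := hu.isOpen_inter_preimage isOpen_Ioi (isOpen_Ioi (a := (4:ℝ)^(k-1)))
      convert this using 1
      rfl
    have h2 : IsOpen ({t | t ∈ Set.Ioi (0:ℝ) ∧ u t < (4:ℝ)^k}) := by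
      have := hu.isOpen_inter_preimage isOpen_Ioi (isOpen_Iio (a := (4:ℝ)^k))
      convert this using 1
      rfl
    have : Vk k = {t | t ∈ Set.Ioi (0:ℝ) ∧ (4:ℝ)^(k-1) < u t}
        ∩ {t | t ∈ Set.Ioi (0:ℝ) ∧ u t < (4:ℝ)^k} := by
      ext t
      simp only [hVk_def, Set.mem_setOf_eq, Set.mem_inter_iff]
      tauto
    rw [this]
    exact h1.inter h2
  have hVdisj : Pairwise (Function.onFun Disjoint Vk) := by
    have hmono : ∀ m n : ℤ, m < n → ∀ t, t ∈ Vk m → t ∈ Vk n → False := by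
      intro m n hmn t htm htn
      have h1 : u t < (4:ℝ)^m := htm.2.2
      have h2 : (4:ℝ)^(n-1) < u t := htn.2.1
      have h3 : (4:ℝ)^m ≤ (4:ℝ)^(n-1) := by
        apply zpow_le_zpow_right₀ (by norm_num : (1:ℝ) ≤ 4)
        omega
      linarith
    intro m n hmn
    rw [Function.onFun, Set.disjoint_left]
    intro t htm htn
    rcases lt_or_gt_of_ne hmn with h | h
    · exact hmono m n h t htm htn
    · exact hmono n m h t htn htm
  have hcoverP : P ⊆ ⋃ k : ℤ, Sk k := by
    intro x hx
    obtain ⟨n, hn⟩ := exists_mem_Ico_zpow hx.2 (by norm_num : (1:ℝ) < 4)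
    exact Set.mem_iUnion.2 ⟨n, hx.1, hn.1, hn.2⟩
  -- zero part
  have hzero : ∫⁻ x in Set.Ioi 0 \ P, ENNReal.ofReal (x ^ a * u x ^ (3*q)) = 0 := by
    have hmeas : MeasurableSet (Set.Ioi (0:ℝ) \ P) :=
      measurableSet_Ioi.diff hPopen.measurableSet
    apply le_antisymm _ zero_le
    have : ∀ x ∈ Set.Ioi (0:ℝ) \ P, ENNReal.ofReal (x ^ a * u x ^ (3*q)) ≤ 0 := by
      intro x hx
      have hx0 : x ∈ Set.Ioi (0:ℝ) := hx.1
      have hune : u x = 0 := by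
        have h1 := hu0 x hx0
        have h2 : ¬ (x ∈ Set.Ioi (0:ℝ) ∧ 0 < u x) := hx.2
        by_contra h
        exact h2 ⟨hx0, lt_of_le_of_ne h1 (Ne.symm h)⟩
      rw [hune, Real.zero_rpow (by positivity : (3*q) ≠ 0), mul_zero]
      simp
    calc ∫⁻ x in Set.Ioi 0 \ P, ENNReal.ofReal (x ^ a * u x ^ (3*q))
        ≤ ∫⁻ _x in Set.Ioi 0 \ P, 0 := setLIntegral_mono' hmeas this
      _ = 0 := by simp
  calc ∫⁻ x in Set.Ioi (0:ℝ), ENNReal.ofReal (x ^ a * u x ^ (3*q))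
      ≤ ∫⁻ x in (Set.Ioi 0 \ P) ∪ P, ENNReal.ofReal (x ^ a * u x ^ (3*q)) := by
        apply lintegral_mono_set
        intro x hx
        by_cases h : x ∈ P
        · exact Or.inr h
        · exact Or.inl ⟨hx, h⟩
    _ ≤ (∫⁻ x in Set.Ioi 0 \ P, ENNReal.ofReal (x ^ a * u x ^ (3*q)))
        + ∫⁻ x in P, ENNReal.ofReal (x ^ a * u x ^ (3*q)) := lintegral_union_le _ _ _
    _ = ∫⁻ x in P, ENNReal.ofReal (x ^ a * u x ^ (3*q)) := by rw [hzero, zero_add]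
    _ ≤ ∫⁻ x in ⋃ k : ℤ, Sk k, ENNReal.ofReal (x ^ a * u x ^ (3*q)) :=
        lintegral_mono_set hcoverP
    _ ≤ ∑' k : ℤ, ∫⁻ x in Sk k, ENNReal.ofReal (x ^ a * u x ^ (3*q)) :=
        lintegral_iUnion_le _ _
    _ ≤ ∑' k : ℤ, KK * ∫⁻ t in Vk k, ENNReal.ofReal (t ^ a * g t ^ q) := by
        apply ENNReal.tsum_le_tsum
        intro k
        exact WIH_shell hu hu0 hg hg0 hslope hvar hH ha hq k
    _ = KK * ∑' k : ℤ, ∫⁻ t in Vk k, ENNReal.ofReal (t ^ a * g t ^ q) :=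
        ENNReal.tsum_mul_left
    _ = KK * ∫⁻ t in ⋃ k : ℤ, Vk k, ENNReal.ofReal (t ^ a * g t ^ q) := by
        rw [lintegral_iUnion (fun k => (hVopen k).measurableSet) hVdisj]
    _ ≤ KK * ∫⁻ t in Set.Ioi (0:ℝ), ENNReal.ofReal (t ^ a * g t ^ q) := by
        apply mul_le_mul_right
        apply lintegral_mono_set
        apply Set.iUnion_subset
        intro k t ht
        exact ht.1


end CoreLemmas

/-- The weighted Lebesgue norm `‖x^σ f‖_{L^p(0,∞)}`. -/
noncomputable def wLp (σ : ℝ) (p : ℝ≥0∞) (f : ℝ → ℝ) : ℝ≥0∞ :=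
  eLpNorm (fun x => x ^ σ * f x) p (volume.restrict (Set.Ioi 0))

/-- **One-dimensional weighted interpolation against the Hölder-1/2 seminorm**
(Lemma 2.20): for `p₁ ∈ [3,∞)`, `p₂ = p₁/3`, `σ₂ = 3σ₁`, `3/2 - 1/p₂ > σ₂` and
`σ₁ > -1/p₁`, one has
`‖x^{σ₁} f'‖_{L^{p₁}} ≤ C ‖f‖_{Ċ^{1/2}}^{2/3} ‖x^{σ₂} f''‖_{L^{p₂}}^{1/3}`,
where the Hölder seminorm is expressed through an arbitrary bound `H`. -/
theorem weighted_interpolation_holder_half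
    (p₁ : ℝ≥0∞) (σ₁ σ₂ : ℝ)
    (hp₁ : 3 ≤ p₁) (hp₁top : p₁ ≠ ⊤)
    (hσrel : σ₂ = 3 * σ₁)
    (hmain : σ₂ < 3 / 2 - (1 / (p₁ / 3)).toReal)
    (hσ₁ : -(1 / p₁).toReal < σ₁) :
    ∃ C : ℝ≥0∞, C ≠ ⊤ ∧ ∀ f : ℝ → ℝ, ContDiffOn ℝ 2 f (Set.Ioi 0) →
      ∀ H : ℝ, 0 ≤ H →
      (∀ x ∈ Set.Ioi (0:ℝ), ∀ y ∈ Set.Ioi (0:ℝ),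
        |f x - f y| ≤ H * Real.sqrt |x - y|) →
      wLp σ₂ (p₁ / 3) (deriv (deriv f)) < ⊤ →
      wLp σ₁ p₁ (deriv f)
        ≤ C * ENNReal.ofReal H ^ (2/3 : ℝ) *
            wLp σ₂ (p₁ / 3) (deriv (deriv f)) ^ (1/3 : ℝ) := by
  -- exponents
  set p : ℝ := p₁.toReal with hp_def
  have hp3 : (3:ℝ) ≤ p := by
    rw [hp_def]
    rw [show (3:ℝ) = (3:ℝ≥0∞).toReal by simp]
    exact ENNReal.toReal_mono hp₁top hp₁
  have hp0 : (0:ℝ) < p := by linarith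
  set q : ℝ := p / 3 with hq_def
  have hq1 : (1:ℝ) ≤ q := by rw [hq_def]; linarith
  have h3q : 3 * q = p := by rw [hq_def]; ring
  set a : ℝ := σ₁ * p with ha_def
  have hp₁0 : p₁ ≠ 0 := by
    intro h
    rw [h] at hp₁
    simp at hp₁
  have ha : -1 < a := by
    have h1 : (1 / p₁).toReal = 1 / p := by
      rw [one_div, ENNReal.toReal_inv, hp_def, one_div]
    rw [h1] at hσ₁
    have h2 : -(1/p) * p < σ₁ * p := by
      apply mul_lt_mul_of_pos_right hσ₁ hp0
    rw [ha_def]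
    have h3 : -(1/p) * p = -1 := by field_simp
    linarith
  -- the constant
  set Creal : ℝ := (2^(-a)+2/(a+1)+1) * 16 ^ (3*q) with hCreal_def
  refine ⟨(ENNReal.ofReal Creal) ^ (1/p), ?_, ?_⟩
  · exact ENNReal.rpow_ne_top_of_nonneg (by positivity) ENNReal.ofReal_ne_top
  intro f hf H hH0 hHol _hfin
  -- p₁/3 facts
  have hp₁3ne0 : p₁ / 3 ≠ 0 := by
    have : (1:ℝ≥0∞) ≤ p₁ / 3 := by
      rw [ENNReal.le_div_iff_mul_le (Or.inl (by norm_num)) (Or.inl (by norm_num))]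
      simpa using hp₁
    intro h
    rw [h] at this
    simp at this
  have hp₁3top : p₁ / 3 ≠ ⊤ :=
    (ENNReal.div_lt_top hp₁top (by norm_num)).ne
  have hq_eq : (p₁ / 3).toReal = q := by
    rw [ENNReal.toReal_div, hq_def, hp_def]
    norm_num
  -- case H = 0
  rcases eq_or_lt_of_le hH0 with hH | hH
  · -- f is constant on Ioi 0, deriv f = 0 there
    have hconst : ∀ x ∈ Set.Ioi (0:ℝ), ∀ y ∈ Set.Ioi (0:ℝ), f x = f y := by
      intro x hx y hy
      have := hHol x hx y hy
      rw [← hH, zero_mul] at this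
      have h2 := abs_nonneg (f x - f y)
      have : |f x - f y| = 0 := le_antisymm this h2
      rw [abs_eq_zero] at this
      linarith [this]
    have hderiv0 : ∀ x ∈ Set.Ioi (0:ℝ), deriv f x = 0 := by
      intro x hx
      have hev : f =ᶠ[nhds x] (fun _ => f x) := by
        filter_upwards [isOpen_Ioi.mem_nhds hx] with y hy
        exact hconst y hy x hx
      rw [Filter.EventuallyEq.deriv_eq hev]
      exact deriv_const x (f x)
    have hzero : wLp σ₁ p₁ (deriv f) = 0 := by
      rw [wLp]
      have : (fun x => x ^ σ₁ * deriv f x)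
          =ᶠ[ae (volume.restrict (Set.Ioi 0))] (fun _ => (0:ℝ)) := by
        rw [Filter.EventuallyEq, ae_restrict_iff' measurableSet_Ioi]
        filter_upwards with x hx
        rw [hderiv0 x hx, mul_zero]
      rw [eLpNorm_congr_ae this]
      exact eLpNorm_zero
    rw [hzero]
    exact zero_le
  -- main case
  set u : ℝ → ℝ := fun x => |deriv f x| with hu_def
  set g : ℝ → ℝ := fun x => |deriv (deriv f) x| with hg_def
  have hu : ContinuousOn u (Set.Ioi 0) := (WIH_cont_d1 hf).abs
  have hg : ContinuousOn g (Set.Ioi 0) := (WIH_cont_d2 hf).abs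
  have hu0 : ∀ x ∈ Set.Ioi (0:ℝ), 0 ≤ u x := fun x _ => abs_nonneg _
  have hg0 : ∀ x ∈ Set.Ioi (0:ℝ), 0 ≤ g x := fun x _ => abs_nonneg _
  have hslope : ∀ x y ε : ℝ, 0 < x → x < y → 0 < ε → (∀ t ∈ Set.Icc x y, ε ≤ u t) →
      ε * (y - x) ≤ H * Real.sqrt (y - x) :=
    fun x y ε hx hxy hε hlow => WIH_slope hf hHol hx hxy hε hlow
  have hvar : ∀ x y : ℝ, 0 < x → x ≤ y → u x - u y ≤ ∫ t in x..y, g t :=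
    fun x y hx hxy => WIH_var hf hx hxy
  have core := WIH_core hu hu0 hg hg0 hslope hvar hH ha hq1
  -- identify the two sides
  set X : ℝ≥0∞ := ∫⁻ x in Set.Ioi (0:ℝ), ENNReal.ofReal (x ^ a * u x ^ (3*q)) with hX_def
  set Y : ℝ≥0∞ := ∫⁻ t in Set.Ioi (0:ℝ), ENNReal.ofReal (t ^ a * g t ^ q) with hY_def
  have hwlp1 : wLp σ₁ p₁ (deriv f) = X ^ (1/p) := by
    rw [wLp, eLpNorm_eq_lintegral_rpow_enorm_toReal hp₁0 hp₁top, ← hp_def]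
    congr 1
    rw [hX_def]
    apply setLIntegral_congr_fun_ae measurableSet_Ioi
    filter_upwards with x
    intro hx
    have hx0 : (0:ℝ) < x := hx
    have hrp : (0:ℝ) < x ^ σ₁ := Real.rpow_pos_of_pos hx0 _
    rw [Real.enorm_eq_ofReal_abs,
      ENNReal.ofReal_rpow_of_nonneg (abs_nonneg _) hp0.le]
    congr 1
    rw [abs_mul, abs_of_pos hrp, Real.mul_rpow hrp.le (abs_nonneg _),
      ← Real.rpow_mul hx0.le, h3q, ha_def]
  have hσ₂q : σ₂ * q = a := by
    rw [hσrel, ha_def, ← h3q]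
    ring
  have hwlp2 : wLp σ₂ (p₁/3) (deriv (deriv f)) = Y ^ (1/q) := by
    rw [wLp, eLpNorm_eq_lintegral_rpow_enorm_toReal hp₁3ne0 hp₁3top, hq_eq]
    congr 1
    rw [hY_def]
    apply setLIntegral_congr_fun_ae measurableSet_Ioi
    filter_upwards with t
    intro ht
    have ht0 : (0:ℝ) < t := ht
    have hrp : (0:ℝ) < t ^ σ₂ := Real.rpow_pos_of_pos ht0 _
    rw [Real.enorm_eq_ofReal_abs,
      ENNReal.ofReal_rpow_of_nonneg (abs_nonneg _) (by linarith : (0:ℝ) ≤ q)]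
    congr 1
    rw [abs_mul, abs_of_pos hrp, Real.mul_rpow hrp.le (abs_nonneg _),
      ← Real.rpow_mul ht0.le, hσ₂q]
  rw [← hCreal_def] at core
  have hq0 : (0:ℝ) < q := by linarith
  have hp_inv : (0:ℝ) ≤ 1/p := by positivity
  calc wLp σ₁ p₁ (deriv f) = X ^ (1/p) := hwlp1
    _ ≤ (ENNReal.ofReal Creal * ENNReal.ofReal H ^ (2*q) * Y) ^ (1/p) :=
        ENNReal.rpow_le_rpow core hp_inv
    _ = (ENNReal.ofReal Creal) ^ (1/p) * (ENNReal.ofReal H ^ (2*q)) ^ (1/p)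
          * Y ^ (1/p) := by
        rw [ENNReal.mul_rpow_of_nonneg _ _ hp_inv, ENNReal.mul_rpow_of_nonneg _ _ hp_inv]
    _ = (ENNReal.ofReal Creal) ^ (1/p) * ENNReal.ofReal H ^ (2/3 : ℝ)
          * (Y ^ (1/q)) ^ (1/3 : ℝ) := by
        congr 1
        · congr 1
          rw [← ENNReal.rpow_mul]
          congr 1
          rw [hq_def]
          field_simp
        · rw [← ENNReal.rpow_mul]
          congr 1
          rw [hq_def]
          field_simp
    _ = (ENNReal.ofReal Creal) ^ (1/p) * ENNReal.ofReal H ^ (2/3 : ℝ)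
          * wLp σ₂ (p₁/3) (deriv (deriv f)) ^ (1/3 : ℝ) := by rw [hwlp2]
end

section
/- Ungar-type inequality with a Hölder-1/2 lower-order term (Proposition 2.21): Let p₁ ∈ [3,∞) and p₂ = p₁/3. There is a constant C, depending only on the exponents, such that for every bounded interval I ⊂ ℝ of length λ > 0 and every u ∈ C²(I), ‖u′‖_{L^{p₁}(I)}^{p₁} ≤ C ( λ^{1+p₁−p₁/p₂} ‖u″‖_{L^{p₂}(I)}^{p₁} + λ^{−(1/2)(1+p₁−p₁/p₂)} ‖u‖_{Ċ^{1/2}(I)}^{p₁} ). -/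
open MeasureTheory Set
open scoped ENNReal


open MeasureTheory Set
open scoped ENNReal

lemma ungar_pointwise (a lam : ℝ) (hlam : 0 < lam) (u : ℝ → ℝ)
    (hu : ContDiffOn ℝ 2 u (Set.Ioo a (a + lam))) (H : ℝ) (hH : 0 ≤ H)
    (hHol : ∀ x ∈ Set.Ioo a (a + lam), ∀ y ∈ Set.Ioo a (a + lam),
      |u x - u y| ≤ H * Real.sqrt |x - y|)
    (hint : IntegrableOn (deriv (deriv u)) (Set.Ioo a (a + lam)) volume) :
    ∀ x ∈ Set.Ioo a (a + lam), |deriv u x| ≤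
      H / Real.sqrt (lam / 2) + ∫ t in Set.Ioo a (a + lam), |deriv (deriv u) t| := by
  set s := Set.Ioo a (a + lam) with hs_def
  have hs : IsOpen s := isOpen_Ioo
  have h1 : ContDiffOn ℝ 1 (deriv u) s := hu.deriv_of_isOpen hs (by norm_num)
  have h2 : ContDiffOn ℝ 0 (deriv (deriv u)) s := h1.deriv_of_isOpen hs (by norm_num)
  have hc2 : ContinuousOn (deriv (deriv u)) s := h2.continuousOn
  have hd1 : ∀ t ∈ s, HasDerivAt (deriv u) (deriv (deriv u) t) t := fun t ht =>
    ((h1.differentiableOn (by norm_num) t ht).differentiableAt (hs.mem_nhds ht)).hasDerivAt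
  set b := a + lam / 4 with hb_def
  set c := a + 3 * lam / 4 with hc_def
  have hbc : b < c := by simp only [hb_def, hc_def]; linarith
  have hsub : Set.Icc b c ⊆ s := by
    intro t ht
    simp only [Set.mem_Icc] at ht
    simp only [hs_def, Set.mem_Ioo, hb_def, hc_def] at *
    constructor <;> linarith
  have hcont : ContinuousOn u (Set.Icc b c) := hu.continuousOn.mono hsub
  have hdiff : DifferentiableOn ℝ u (Set.Ioo b c) :=
    (hu.differentiableOn (by norm_num)).mono ((Set.Ioo_subset_Icc_self).trans hsub)
  obtain ⟨ξ, hξ, hξslope⟩ := exists_deriv_eq_slope u hbc hcont hdiff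
  have hξs : ξ ∈ s := hsub (Set.Ioo_subset_Icc_self hξ)
  have hcb : c - b = lam / 2 := by simp only [hb_def, hc_def]; ring
  have hl2 : (0:ℝ) < lam / 2 := by linarith
  have hξbound : |deriv u ξ| ≤ H / Real.sqrt (lam / 2) := by
    rw [hξslope, hcb]
    have hnum : |u c - u b| ≤ H * Real.sqrt (lam / 2) := by
      have := hHol c (hsub ⟨hbc.le, le_rfl⟩) b (hsub ⟨le_rfl, hbc.le⟩)
      rwa [show c - b = lam / 2 from hcb ▸ rfl, abs_of_pos hl2] at this
      -- fallback; may need fixing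
    rw [abs_div, abs_of_pos hl2, div_le_div_iff₀ hl2 (Real.sqrt_pos.2 hl2)]
    calc |u c - u b| * Real.sqrt (lam / 2) ≤ (H * Real.sqrt (lam / 2)) * Real.sqrt (lam / 2) := by
          exact mul_le_mul_of_nonneg_right hnum (Real.sqrt_nonneg _)
      _ = H * (lam / 2) := by rw [mul_assoc, Real.mul_self_sqrt hl2.le]
  intro x hx
  have huIcc : Set.uIcc ξ x ⊆ s := (Set.ordConnected_Ioo).uIcc_subset hξs hx
  have hFTC : ∫ t in ξ..x, deriv (deriv u) t = deriv u x - deriv u ξ :=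
    intervalIntegral.integral_eq_sub_of_hasDerivAt (fun t ht => hd1 t (huIcc ht))
      ((hc2.mono huIcc).intervalIntegrable)
  have habs : |∫ t in ξ..x, deriv (deriv u) t| ≤ ∫ t in s, |deriv (deriv u) t| := by
    calc |∫ t in ξ..x, deriv (deriv u) t| ≤ ∫ t in Set.uIoc ξ x, ‖deriv (deriv u) t‖ := by
          rw [← Real.norm_eq_abs]
          exact intervalIntegral.norm_integral_le_integral_norm_uIoc
      _ ≤ ∫ t in s, |deriv (deriv u) t| := by
          simp only [Real.norm_eq_abs]
          exact setIntegral_mono_set hint.abs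
            (Filter.Eventually.of_forall fun t => abs_nonneg _)
            (HasSubset.Subset.eventuallyLE (Set.uIoc_subset_uIcc.trans huIcc))
  have : deriv u x = deriv u ξ + ∫ t in ξ..x, deriv (deriv u) t := by rw [hFTC]; ring
  rw [this]
  exact (abs_add_le _ _).trans (add_le_add hξbound habs)
open scoped ENNReal

lemma ungar_rpow_add_le (x y : ℝ≥0∞) (p : ℝ) (hp : 0 ≤ p) :
    (x + y) ^ p ≤ 2 ^ p * (x ^ p + y ^ p) := by
  calc (x + y) ^ p ≤ (2 * max x y) ^ p := by
        apply ENNReal.rpow_le_rpow _ hp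
        rw [two_mul]
        exact add_le_add (le_max_left _ _) (le_max_right _ _)
    _ = 2 ^ p * max x y ^ p := ENNReal.mul_rpow_of_nonneg _ _ hp
    _ ≤ 2 ^ p * (x ^ p + y ^ p) := by
        apply mul_le_mul_right
        rcases max_cases x y with ⟨h, _⟩ | ⟨h, _⟩ <;> rw [h]
        · exact le_add_right le_rfl
        · exact le_add_left le_rfl


/-- **Ungar-type inequality with a Hölder-1/2 lower-order term** (Proposition 2.21):
for `p₁ ∈ [3,∞)` and `p₂ = p₁/3`, there is a constant `C` such that for every bounded
interval `I` of length `λ > 0` and every `u ∈ C²(I)`,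
`‖u'‖_{L^{p₁}(I)}^{p₁} ≤ C (λ^{1+p₁-p₁/p₂} ‖u''‖_{L^{p₂}(I)}^{p₁}
  + λ^{-(1/2)(1+p₁-p₁/p₂)} ‖u‖_{Ċ^{1/2}(I)}^{p₁})`,
the Hölder seminorm being expressed through an arbitrary bound `H`. -/
theorem ungar_interpolation_holder
    (p₁ : ℝ≥0∞) (hp₁ : 3 ≤ p₁) (hp₁top : p₁ ≠ ⊤) :
    ∃ C : ℝ≥0∞, C ≠ ⊤ ∧ ∀ (a lam : ℝ), 0 < lam → ∀ u : ℝ → ℝ,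
      ContDiffOn ℝ 2 u (Set.Ioo a (a + lam)) →
      ∀ H : ℝ, 0 ≤ H →
      (∀ x ∈ Set.Ioo a (a + lam), ∀ y ∈ Set.Ioo a (a + lam),
        |u x - u y| ≤ H * Real.sqrt |x - y|) →
      eLpNorm (deriv u) p₁ (volume.restrict (Set.Ioo a (a + lam))) ^ p₁.toReal
        ≤ C * (ENNReal.ofReal (lam ^ (1 + p₁.toReal - p₁.toReal / (p₁ / 3).toReal)) *
                eLpNorm (deriv (deriv u)) (p₁ / 3)
                  (volume.restrict (Set.Ioo a (a + lam))) ^ p₁.toReal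
              + ENNReal.ofReal (lam ^ (-(1/2 : ℝ) * (1 + p₁.toReal - p₁.toReal / (p₁ / 3).toReal))) *
                ENNReal.ofReal H ^ p₁.toReal) := by
  set p := p₁.toReal with hp_def
  have hp3 : (3:ℝ) ≤ p := by
    have h := (ENNReal.toReal_le_toReal (by norm_num) hp₁top).mpr hp₁
    simpa using h
  have hp0 : (0:ℝ) < p := by linarith
  have hqR : (p₁ / 3).toReal = p / 3 := by rw [ENNReal.toReal_div]; norm_num; exact hp_def.symm
  have hexp : 1 + p - p / (p₁ / 3).toReal = p - 2 := by rw [hqR]; field_simp; ring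
  refine ⟨2 ^ ((3/2) * p), ENNReal.rpow_ne_top_of_nonneg (by positivity) (by norm_num), ?_⟩
  intro a lam hlam u hu H hH hHol
  rw [hexp, show -(1/2:ℝ) * (p - 2) = 1 - p / 2 by ring]
  set s := Set.Ioo a (a + lam) with hs_def
  set μ := volume.restrict s with hμ_def
  have hl0 : ENNReal.ofReal lam ≠ 0 := (ENNReal.ofReal_pos.mpr hlam).ne'
  have hlt : ENNReal.ofReal lam ≠ ⊤ := ENNReal.ofReal_ne_top
  have hμuniv : μ Set.univ = ENNReal.ofReal lam := by
    rw [hμ_def, Measure.restrict_apply_univ, hs_def, Real.volume_Ioo, add_sub_cancel_left]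
  have hq1 : (1:ℝ≥0∞) ≤ p₁ / 3 := by
    rw [ENNReal.le_div_iff_mul_le (Or.inl (by norm_num)) (Or.inl (by norm_num)), one_mul]
    exact hp₁
  have hc1 : ContDiffOn ℝ 1 (deriv u) s := hu.deriv_of_isOpen isOpen_Ioo (by norm_num)
  have hc2' : ContDiffOn ℝ 0 (deriv (deriv u)) s := hc1.deriv_of_isOpen isOpen_Ioo (by norm_num)
  have hc2 : ContinuousOn (deriv (deriv u)) s := hc2'.continuousOn
  have hmeas : AEStronglyMeasurable (deriv (deriv u)) μ :=
    hc2.aestronglyMeasurable measurableSet_Ioo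
  set E := eLpNorm (deriv (deriv u)) (p₁ / 3) μ with hE_def
  by_cases hfin : E = ⊤
  · rw [hfin, ENNReal.top_rpow_of_pos hp0,
      ENNReal.mul_top (ENNReal.ofReal_pos.mpr (Real.rpow_pos_of_pos hlam _)).ne',
      top_add,
      ENNReal.mul_top (ENNReal.rpow_pos (by norm_num) (by norm_num)).ne']
    exact le_top
  have hcompare : eLpNorm (deriv (deriv u)) 1 μ ≤ E * ENNReal.ofReal lam ^ (1 - 3 / p) := by
    have h := eLpNorm_le_eLpNorm_mul_rpow_measure_univ hq1 hmeas
    rwa [hμuniv, ENNReal.toReal_one, hqR, one_div_one, one_div_div] at h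
  have h3p : (0:ℝ) ≤ 1 - 3 / p := by
    have : 3 / p ≤ 1 := (div_le_one hp0).mpr hp3
    linarith
  have hone_fin : eLpNorm (deriv (deriv u)) 1 μ ≠ ⊤ :=
    ne_top_of_le_ne_top
      (ENNReal.mul_ne_top hfin (ENNReal.rpow_ne_top_of_nonneg h3p hlt)) hcompare
  have hInt : IntegrableOn (deriv (deriv u)) s volume :=
    memLp_one_iff_integrable.mp ⟨hmeas, lt_top_iff_ne_top.mpr hone_fin⟩
  set A := ∫ t in s, |deriv (deriv u) t| with hA_def
  have hA0 : 0 ≤ A := integral_nonneg fun t => abs_nonneg _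
  have hkey := ungar_pointwise a lam hlam u hu H hH hHol hInt
  set M := H / Real.sqrt (lam / 2) + A with hM_def
  have hbound : eLpNorm (deriv u) p₁ μ ≤ ENNReal.ofReal lam ^ p⁻¹ * ENNReal.ofReal M := by
    have h := eLpNorm_le_of_ae_bound (μ := μ) (p := p₁) (f := deriv u) (C := M)
      ((ae_restrict_iff' measurableSet_Ioo).mpr (Filter.Eventually.of_forall fun x hx => by
        rw [Real.norm_eq_abs]; exact hkey x hx))
    rwa [hμuniv] at h
  have step1 : eLpNorm (deriv u) p₁ μ ^ p ≤ ENNReal.ofReal lam * ENNReal.ofReal M ^ p := by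
    calc eLpNorm (deriv u) p₁ μ ^ p ≤ (ENNReal.ofReal lam ^ p⁻¹ * ENNReal.ofReal M) ^ p :=
          ENNReal.rpow_le_rpow hbound hp0.le
      _ = ENNReal.ofReal lam ^ (p⁻¹ * p) * ENNReal.ofReal M ^ p := by
          rw [ENNReal.mul_rpow_of_nonneg _ _ hp0.le, ← ENNReal.rpow_mul]
      _ = _ := by rw [inv_mul_cancel₀ hp0.ne', ENNReal.rpow_one]
  set X := ENNReal.ofReal (H / Real.sqrt (lam / 2)) with hX_def
  have hY : ENNReal.ofReal A = eLpNorm (deriv (deriv u)) 1 μ := by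
    rw [eLpNorm_one_eq_lintegral_enorm, hA_def, hμ_def]
    simpa [Real.norm_eq_abs] using ofReal_integral_norm_eq_lintegral_enorm hInt
  have step2 : ENNReal.ofReal M ^ p
      ≤ 2 ^ p * (X ^ p + eLpNorm (deriv (deriv u)) 1 μ ^ p) := by
    calc ENNReal.ofReal M ^ p ≤ (X + ENNReal.ofReal A) ^ p := by
          apply ENNReal.rpow_le_rpow _ hp0.le
          rw [hM_def]; exact ENNReal.ofReal_add_le
      _ ≤ 2 ^ p * (X ^ p + ENNReal.ofReal A ^ p) := ungar_rpow_add_le _ _ p hp0.le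
      _ = _ := by rw [hY]
  have hterm2 : ENNReal.ofReal lam * eLpNorm (deriv (deriv u)) 1 μ ^ p
      ≤ ENNReal.ofReal (lam ^ (p - 2)) * E ^ p := by
    calc ENNReal.ofReal lam * eLpNorm (deriv (deriv u)) 1 μ ^ p
        ≤ ENNReal.ofReal lam * (E * ENNReal.ofReal lam ^ (1 - 3 / p)) ^ p :=
          mul_le_mul_right (ENNReal.rpow_le_rpow hcompare hp0.le) _
      _ = ENNReal.ofReal lam ^ ((1:ℝ) + (1 - 3 / p) * p) * E ^ p := by
          rw [ENNReal.mul_rpow_of_nonneg _ _ hp0.le, ← ENNReal.rpow_mul]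
          rw [ENNReal.rpow_add _ _ hl0 hlt, ENNReal.rpow_one]
          ring
      _ = ENNReal.ofReal (lam ^ (p - 2)) * E ^ p := by
          rw [show (1:ℝ) + (1 - 3 / p) * p = p - 2 by field_simp; ring,
            ENNReal.ofReal_rpow_of_pos hlam]
  have hl2 : (0:ℝ) < lam / 2 := by linarith
  have hterm1 : ENNReal.ofReal lam * X ^ p
      = 2 ^ (p / 2) * (ENNReal.ofReal (lam ^ (1 - p / 2)) * ENNReal.ofReal H ^ p) := by
    have hXeq : X = ENNReal.ofReal H * ENNReal.ofReal ((lam / 2) ^ (-(1/2) : ℝ)) := by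
      rw [hX_def, Real.sqrt_eq_rpow, div_eq_mul_inv, ← Real.rpow_neg hl2.le,
        ENNReal.ofReal_mul hH]
    have hXp : X ^ p = ENNReal.ofReal H ^ p * ENNReal.ofReal ((lam / 2) ^ (-(1/2) * p)) := by
      rw [hXeq, ENNReal.mul_rpow_of_nonneg _ _ hp0.le,
        ENNReal.ofReal_rpow_of_pos (Real.rpow_pos_of_pos hl2 _), ← Real.rpow_mul hl2.le]
    have hreal : lam * (lam / 2) ^ (-(1/2) * p) = 2 ^ (p / 2) * lam ^ (1 - p / 2) := by
      rw [Real.div_rpow hlam.le (by norm_num : (0:ℝ) ≤ 2), div_eq_mul_inv,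
        ← Real.rpow_neg (by norm_num : (0:ℝ) ≤ 2), show -(-(1/2) * p) = p / 2 by ring,
        ← mul_assoc]
      nth_rewrite 1 [← Real.rpow_one lam]
      rw [← Real.rpow_add hlam, show (1:ℝ) + -(1/2) * p = 1 - p / 2 by ring, mul_comm]

    calc ENNReal.ofReal lam * X ^ p
        = ENNReal.ofReal H ^ p * ENNReal.ofReal (lam * (lam / 2) ^ (-(1/2) * p)) := by
          rw [hXp, ENNReal.ofReal_mul hlam.le]; ring
      _ = 2 ^ (p / 2) * (ENNReal.ofReal (lam ^ (1 - p / 2)) * ENNReal.ofReal H ^ p) := by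
          rw [hreal, ENNReal.ofReal_mul (by positivity),
            ← ENNReal.ofReal_ofNat 2, ENNReal.ofReal_rpow_of_pos (by norm_num : (0:ℝ) < 2)]
          ring
  have h2half : (1:ℝ≥0∞) ≤ 2 ^ (p / 2) := by
    calc (1:ℝ≥0∞) = 2 ^ (0:ℝ) := by rw [ENNReal.rpow_zero]
      _ ≤ 2 ^ (p / 2) := ENNReal.rpow_le_rpow_of_exponent_le (by norm_num) (by linarith)
  calc eLpNorm (deriv u) p₁ μ ^ p ≤ ENNReal.ofReal lam * ENNReal.ofReal M ^ p := step1
    _ ≤ ENNReal.ofReal lam * (2 ^ p * (X ^ p + eLpNorm (deriv (deriv u)) 1 μ ^ p)) :=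
        mul_le_mul_right step2 _
    _ = 2 ^ p * (ENNReal.ofReal lam * X ^ p
          + ENNReal.ofReal lam * eLpNorm (deriv (deriv u)) 1 μ ^ p) := by ring
    _ ≤ 2 ^ p * (2 ^ (p / 2) * (ENNReal.ofReal (lam ^ (1 - p / 2)) * ENNReal.ofReal H ^ p)
          + ENNReal.ofReal (lam ^ (p - 2)) * E ^ p) :=
        mul_le_mul_right (add_le_add hterm1.le hterm2) _
    _ ≤ 2 ^ p * (2 ^ (p / 2) * (ENNReal.ofReal (lam ^ (1 - p / 2)) * ENNReal.ofReal H ^ p)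
          + 2 ^ (p / 2) * (ENNReal.ofReal (lam ^ (p - 2)) * E ^ p)) := by
        exact mul_le_mul_right (add_le_add le_rfl (le_mul_of_one_le_left' h2half)) _
    _ = 2 ^ ((3/2) * p) * (ENNReal.ofReal (lam ^ (p - 2)) * E ^ p
          + ENNReal.ofReal (lam ^ (1 - p / 2)) * ENNReal.ofReal H ^ p) := by
        rw [show (3/2:ℝ) * p = p + p / 2 by ring, ENNReal.rpow_add _ _ (by norm_num) (by norm_num)]
        ring
end
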